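/- arXiv:2510.26123 — 8 statements merged into one kernel-verified Lean document; each statement's English description precedes it below -/
import Mathlib

section
/- Let L : ℕ → ℤ be a random walk started from 0 with i.i.d. increments uniformly distributed on {−1, 0, 1}, and define the reflected walk L̂(j) := L(j) − 2·min_{0≤i≤j} L(i). Then for every n ∈ ℕ and every path w : {0,1,…,n} → ℤ with w(0) = 0, w(j) − w(j−1) ∈ {−1,0,1} for all 1 ≤ j ≤ n, and w(j) ≥ 0 for all 0 ≤ j ≤ n, one has ℙ[L̂(j) = w(j) for all 0 ≤ j ≤ n] = (w(n) + 1)·3^{−n}. Equivalently, the law of (L̂(0),…,L̂(n)) is the law of (L(0),…,L(n)) reweighted by the factor (L(n)+1)·𝟙{L(j) ≥ 0 for all 0 ≤ j ≤ n}, i.e. L̂ is the lazy walk conditioned to stay non-negative. -/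
open MeasureTheory

set_option maxHeartbeats 1000000
set_option linter.unusedSectionVars false
namespace PitmanLazy


/-- running minimum of `x` over `[0, j]`. -/
def mn (x : ℕ → ℤ) (j : ℕ) : ℤ :=
  (Finset.range (j + 1)).inf' Finset.nonempty_range_add_one x

lemma mn_zero (x : ℕ → ℤ) : mn x 0 = x 0 := by
  simp [mn]

lemma mn_succ (x : ℕ → ℤ) (j : ℕ) : mn x (j + 1) = min (mn x j) (x (j + 1)) := by
  unfold mn
  have h1 : Finset.range (j + 1 + 1) = insert (j+1) (Finset.range (j+1)) := by
    ext i; simp [Finset.mem_range, Finset.mem_insert]; omega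
  rw [Finset.inf'_congr _ h1 (fun _ _ => rfl), Finset.inf'_insert, min_comm]

lemma mn_le (x : ℕ → ℤ) {i j : ℕ} (h : i ≤ j) : mn x j ≤ x i := by
  exact Finset.inf'_le _ (by simp [Finset.mem_range]; omega)

lemma mn_anti (x : ℕ → ℤ) {j k : ℕ} (h : j ≤ k) : mn x k ≤ mn x j := by
  apply Finset.le_inf'
  intro i hi
  exact mn_le x (by simp [Finset.mem_range] at hi; omega)

lemma mn_exists (x : ℕ → ℤ) (j : ℕ) : ∃ i ≤ j, mn x j = x i := by
  obtain ⟨i, hi, h⟩ := Finset.exists_mem_eq_inf' (Finset.nonempty_range_add_one (n := j)) x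
  exact ⟨i, by simp [Finset.mem_range] at hi; omega, h⟩

lemma mn_congr {x y : ℕ → ℤ} {j : ℕ} (h : ∀ i ≤ j, x i = y i) : mn x j = mn y j := by
  apply Finset.inf'_congr _ rfl
  intro i hi
  exact h i (by simp [Finset.mem_range] at hi; omega)

/-- minimum of `w` over `[min j n, n]`. -/
def wmin (w : ℕ → ℤ) (n j : ℕ) : ℤ :=
  (Finset.Icc (min j n) n).inf' (Finset.nonempty_Icc.mpr (min_le_right j n)) w

/-- reconstructed running minimum: `M m j = max m (-(min_{[j,n]} w))`. -/
def Mf (w : ℕ → ℤ) (n : ℕ) (m : ℤ) (j : ℕ) : ℤ := max m (-(wmin w n j))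

/-- reconstructed walk with final minimum `m`. -/
def Ff (w : ℕ → ℤ) (n : ℕ) (m : ℤ) (j : ℕ) : ℤ := w (min j n) + 2 * Mf w n m j

lemma wmin_le (w : ℕ → ℤ) {n j i : ℕ} (hj : j ≤ i) (hi : i ≤ n) : wmin w n j ≤ w i := by
  exact Finset.inf'_le _ (by simp [Finset.mem_Icc]; omega)

lemma wmin_exists (w : ℕ → ℤ) {n j : ℕ} (hj : j ≤ n) :
    ∃ i, j ≤ i ∧ i ≤ n ∧ wmin w n j = w i := by
  obtain ⟨i, hi, h⟩ := Finset.exists_mem_eq_inf'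
    (Finset.nonempty_Icc.mpr (min_le_right j n)) w
  simp [Finset.mem_Icc] at hi
  exact ⟨i, by omega, hi.2, h⟩

lemma wmin_n (w : ℕ → ℤ) (n : ℕ) : wmin w n n = w n := by
  simp [wmin]

lemma wmin_succ (w : ℕ → ℤ) {n j : ℕ} (hj : j < n) :
    wmin w n j = min (w j) (wmin w n (j + 1)) := by
  unfold wmin
  have h1 : Finset.Icc (min j n) n = insert j (Finset.Icc (min (j+1) n) n) := by
    ext i; simp [Finset.mem_Icc, Finset.mem_insert]; omega
  rw [Finset.inf'_congr _ h1 (fun _ _ => rfl), Finset.inf'_insert]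








section Recon

variable {w : ℕ → ℤ} {n : ℕ} {m : ℤ}
variable (hw0 : w 0 = 0)
variable (hstep : ∀ j < n, w (j+1) - w j = -1 ∨ w (j+1) - w j = 0 ∨ w (j+1) - w j = 1)
variable (hpos : ∀ j ≤ n, 0 ≤ w j)
variable (hm1 : -(w n) ≤ m) (hm2 : m ≤ 0)

include hpos in
lemma wmin_nonneg {j : ℕ} : 0 ≤ wmin w n j := by
  apply Finset.le_inf'
  intro i hi
  simp [Finset.mem_Icc] at hi
  exact hpos i hi.2

include hw0 hpos hm2 in
lemma Mf_zero : Mf w n m 0 = 0 := by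
  have h1 : wmin w n 0 ≤ w 0 := wmin_le w (Nat.zero_le 0) (Nat.zero_le n)
  have h2 : 0 ≤ wmin w n 0 := wmin_nonneg hpos
  simp only [Mf]
  omega

include hm1 in
lemma Mf_n : Mf w n m n = m := by
  simp only [Mf, wmin_n]
  omega

lemma Mf_le_neg {j : ℕ} (hj : j ≤ n) : -(w j) ≤ Mf w n m j := by
  have := wmin_le w (le_refl j) hj
  simp only [Mf]
  omega

lemma Mf_step {j : ℕ} (hj : j < n) :
    Mf w n m j = max (Mf w n m (j+1)) (-(w j)) := by
  simp only [Mf, wmin_succ w hj]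
  omega

include hstep in
lemma Mf_dichotomy {j : ℕ} (hj : j < n) :
    Mf w n m j = Mf w n m (j+1) ∨
    (Mf w n m j = Mf w n m (j+1) + 1 ∧ w (j+1) = w j + 1 ∧ Mf w n m j = -(w j)) := by
  have h1 := Mf_step (w := w) (n := n) (m := m) hj
  have h2 := Mf_le_neg (w := w) (n := n) (m := m) (j := j+1) hj
  have h3 := hstep j hj
  omega

include hw0 hstep hpos hm1 hm2 in
lemma Ff_mn : ∀ j ≤ n, mn (Ff w n m) j = Mf w n m j := by
  intro j
  induction j with
  | zero =>
    intro _
    rw [mn_zero]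
    simp only [Ff, Nat.min_eq_left (Nat.zero_le n), hw0, Mf_zero hw0 hpos hm2]
    ring
  | succ j ih =>
    intro hj1
    have hj : j < n := hj1
    have ihv := ih (le_of_lt hj)
    rw [mn_succ, ihv]
    have hFf1 : Ff w n m (j+1) = w (j+1) + 2 * Mf w n m (j+1) := by
      simp only [Ff, Nat.min_eq_left hj1]
    have h2 := Mf_le_neg (w := w) (n := n) (m := m) (j := j+1) hj1
    rcases Mf_dichotomy hstep (m := m) hj with h | ⟨h1, h2', h3⟩
    · rw [hFf1]; omega
    · rw [hFf1]; omega

include hw0 hstep hpos hm1 hm2 in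
lemma Ff_refl : ∀ j ≤ n, Ff w n m j - 2 * mn (Ff w n m) j = w j := by
  intro j hj
  rw [Ff_mn hw0 hstep hpos hm1 hm2 j hj]
  simp only [Ff, Nat.min_eq_left hj]
  ring

include hw0 hstep hpos hm1 hm2 in
lemma Ff_mn_n : mn (Ff w n m) n = m := by
  rw [Ff_mn hw0 hstep hpos hm1 hm2 n (le_refl n), Mf_n hm1]

include hw0 hpos hm2 in
lemma Ff_zero : Ff w n m 0 = 0 := by
  simp only [Ff, Nat.min_eq_left (Nat.zero_le n), hw0, Mf_zero hw0 hpos hm2]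
  ring

include hstep in
lemma Ff_step {j : ℕ} (hj : j < n) :
    Ff w n m (j+1) - Ff w n m j = -1 ∨ Ff w n m (j+1) - Ff w n m j = 0 ∨
    Ff w n m (j+1) - Ff w n m j = 1 := by
  have e1 : Ff w n m (j+1) = w (j+1) + 2 * Mf w n m (j+1) := by
    simp only [Ff, Nat.min_eq_left (by omega : j + 1 ≤ n)]
  have e2 : Ff w n m j = w j + 2 * Mf w n m j := by
    simp only [Ff, Nat.min_eq_left (le_of_lt hj)]
  have h3 := hstep j hj
  rcases Mf_dichotomy hstep (m := m) hj with h | ⟨h1, h2', h3'⟩ <;> omega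

end Recon

section Backward

variable {w x : ℕ → ℤ} {n : ℕ}
variable (hx0 : x 0 = 0)
variable (hxstep : ∀ j < n, -1 ≤ x (j+1) - x j ∧ x (j+1) - x j ≤ 1)
variable (hrefl : ∀ j ≤ n, x j - 2 * mn x j = w j)

include hx0 hrefl in
lemma back_m_bounds : -(w n) ≤ mn x n ∧ mn x n ≤ 0 := by
  constructor
  · have h1 := hrefl n (le_refl n)
    have h2 := mn_le x (le_refl n)
    omega
  · have := mn_le x (Nat.zero_le n)
    omega

include hx0 hxstep hrefl in
lemma back_mn : ∀ j ≤ n, mn x j = Mf w n (mn x n) j := by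
  have key : ∀ k j, j + k = n → mn x j = Mf w n (mn x n) j := by
    intro k
    induction k with
    | zero =>
      intro j hj
      have : j = n := by omega
      subst this
      rw [Mf_n (back_m_bounds hx0 hrefl).1]
    | succ k ih =>
      intro j hj
      have hjn : j < n := by omega
      have ihv : mn x (j+1) = Mf w n (mn x n) (j+1) := ih (j+1) (by omega)
      have hstepM := Mf_step (w := w) (n := n) (m := mn x n) hjn
      -- lower bound: Mf ≤ mn x j
      have hge : Mf w n (mn x n) j ≤ mn x j := by
        have hmj : mn x n ≤ mn x j := mn_anti x (le_of_lt hjn)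
        have hwj : -(wmin w n j) ≤ mn x j := by
          obtain ⟨i, hji, hin, hwi⟩ := wmin_exists w (le_of_lt hjn)
          have h1 := hrefl i hin
          have h2 := mn_le x (le_refl i)
          have h3 := mn_anti x hji
          omega
        simp only [Mf]
        omega
      -- upper bound
      have hle : mn x j ≤ Mf w n (mn x n) j := by
        by_cases hxm : x j = mn x j
        · -- at the minimum: mn x j = -(w j)
          have h1 := hrefl j (le_of_lt hjn)
          have : mn x j = -(w j) := by omega
          omega
        · -- not at min: mn x (j+1) = mn x j
          have h2 := mn_le x (le_refl j)
          have hlt : mn x j < x j := lt_of_le_of_ne h2 (fun h => hxm h.symm)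
          have h3 := (hxstep j hjn).1
          have h4 : mn x (j+1) = mn x j := by
            rw [mn_succ]
            omega
          omega
      omega
  intro j hj
  exact key (n - j) j (by omega)

include hx0 hxstep hrefl in
lemma back_eq_Ff : ∀ j ≤ n, x j = Ff w n (mn x n) j := by
  intro j hj
  have h1 := back_mn hx0 hxstep hrefl j hj
  have h2 := hrefl j hj
  simp only [Ff, Nat.min_eq_left hj]
  omega

end Backward







/-- the path associated with an increment pattern -/
def pe {n : ℕ} (ε : Fin n → ℤ) (j : ℕ) : ℤ :=
  ∑ i ∈ Finset.range j, (if h : i < n then ε ⟨i, h⟩ else 0)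


lemma pe_zero {n : ℕ} (ε : Fin n → ℤ) : pe ε 0 = 0 := by simp [pe]

lemma pe_succ {n : ℕ} (ε : Fin n → ℤ) {j : ℕ} (hj : j < n) :
    pe ε (j + 1) - pe ε j = ε ⟨j, hj⟩ := by
  simp [pe, Finset.sum_range_succ, hj]

/-- the Finset of admissible increment patterns -/
def T (n : ℕ) : Finset (Fin n → ℤ) :=
  Fintype.piFinset (fun _ => ({-1, 0, 1} : Finset ℤ))

/-- patterns whose reflected path equals `w` on `[0,n]` -/
def S (n : ℕ) (w : ℕ → ℤ) : Finset (Fin n → ℤ) :=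
  (T n).filter (fun ε => ∀ j ≤ n, pe ε j - 2 * mn (pe ε) j = w j)

lemma pe_Ff (w : ℕ → ℤ) (n : ℕ) (m : ℤ) (hF0 : Ff w n m 0 = 0) :
    ∀ j ≤ n, pe (fun i : Fin n => Ff w n m ((i : ℕ) + 1) - Ff w n m (i : ℕ)) j
      = Ff w n m j := by
  intro j hj
  unfold pe
  have hc : ∀ i ∈ Finset.range j,
      (if h : i < n then (fun i : Fin n => Ff w n m ((i : ℕ) + 1) - Ff w n m (i : ℕ)) ⟨i, h⟩
        else 0) = Ff w n m (i + 1) - Ff w n m i := by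
    intro i hi
    rw [dif_pos (by simp [Finset.mem_range] at hi; omega : i < n)]
  rw [Finset.sum_congr rfl hc, Finset.sum_range_sub (fun i => Ff w n m i) j, hF0, sub_zero]

theorem count_S (n : ℕ) (w : ℕ → ℤ) (hw0 : w 0 = 0)
    (hstep : ∀ j < n, w (j+1) - w j = -1 ∨ w (j+1) - w j = 0 ∨ w (j+1) - w j = 1)
    (hpos : ∀ j ≤ n, 0 ≤ w j) :
    (S n w).card = (w n + 1).toNat := by
  have hcard : (Finset.Icc (-(w n)) 0).card = (w n + 1).toNat := by
    rw [Int.card_Icc]; congr 1; ring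
  rw [← hcard]
  apply Finset.card_bij' (i := fun ε _ => mn (pe ε) n)
    (j := fun m _ => fun i : Fin n => Ff w n m ((i : ℕ) + 1) - Ff w n m (i : ℕ))
  · -- forward maps into Icc
    intro ε hε
    simp only [S, Finset.mem_filter] at hε
    have hb := back_m_bounds (pe_zero ε) hε.2
    simp [Finset.mem_Icc]
    omega
  · -- backward maps into S
    intro m hm
    simp only [Finset.mem_Icc] at hm
    have hm1 : -(w n) ≤ m := hm.1
    have hm2 : m ≤ 0 := hm.2
    have hF0 := Ff_zero hw0 hpos hm2 (n := n)
    have hpe := pe_Ff w n m hF0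
    simp only [S, Finset.mem_filter]
    constructor
    · simp only [T, Fintype.mem_piFinset]
      intro i
      have := Ff_step hstep (m := m) i.isLt
      simp only [Finset.mem_insert, Finset.mem_singleton]
      tauto
    · intro j hj
      rw [hpe j hj, mn_congr (fun i hi => hpe i (le_trans hi hj)),
        Ff_refl hw0 hstep hpos hm1 hm2 j hj]
  · -- left inverse
    intro ε hε
    simp only [S, Finset.mem_filter, T, Fintype.mem_piFinset] at hε
    have hxstep : ∀ j < n, -1 ≤ pe ε (j+1) - pe ε j ∧ pe ε (j+1) - pe ε j ≤ 1 := by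
      intro j hj
      rw [pe_succ ε hj]
      have := hε.1 ⟨j, hj⟩
      simp only [Finset.mem_insert, Finset.mem_singleton] at this
      omega
    have hback := back_eq_Ff (pe_zero ε) hxstep hε.2
    funext i
    rw [← hback ((i : ℕ) + 1) i.isLt, ← hback (i : ℕ) (le_of_lt i.isLt), pe_succ ε i.isLt]
  · -- right inverse
    intro m hm
    simp only [Finset.mem_Icc] at hm
    have hF0 := Ff_zero hw0 hpos hm.2 (n := n)
    have hpe := pe_Ff w n m hF0
    rw [mn_congr (fun i hi => hpe i hi), Ff_mn hw0 hstep hpos hm.1 hm.2 n (le_refl n),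
      Mf_n hm.1]


end PitmanLazy

open PitmanLazy in
/-- **Pitman-type statement for the lazy walk.**
Let `L` be a random walk started from `0` with i.i.d. increments uniform on `{-1,0,1}`
(encoded by specifying the probability of every admissible finite increment pattern),
and let `Lhat j = L j - 2 * min_{0 ≤ i ≤ j} L i` be the walk reflected at its running
minimum.  Then for every non-negative lazy path `w` of length `n` started at `0`,
`ℙ[Lhat j = w j for all j ≤ n] = (w n + 1) * 3⁻ⁿ`; i.e. `Lhat` is the lazy walk
conditioned to stay non-negative. -/
theorem stmt_0
    {Ω : Type*} [MeasurableSpace Ω] (P : Measure Ω) [IsProbabilityMeasure P]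
    (L : ℕ → Ω → ℤ)
    (hMeas : ∀ n, Measurable (L n))
    (hStart : ∀ ω, L 0 ω = 0)
    (hIID : ∀ (n : ℕ) (ε : Fin n → ℤ), (∀ j, ε j ∈ ({-1, 0, 1} : Set ℤ)) →
      (P {ω | ∀ j : Fin n, L ((j : ℕ) + 1) ω - L (j : ℕ) ω = ε j}).toReal = (1 / 3 : ℝ) ^ n)
    (Lhat : ℕ → Ω → ℤ)
    (hLhat : ∀ j ω, Lhat j ω =
      L j ω - 2 * (Finset.range (j + 1)).inf' Finset.nonempty_range_add_one (fun i => L i ω)) :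
    ∀ (n : ℕ) (w : ℕ → ℤ), w 0 = 0 →
      (∀ j, 1 ≤ j → j ≤ n → w j - w (j - 1) ∈ ({-1, 0, 1} : Set ℤ)) →
      (∀ j ≤ n, 0 ≤ w j) →
      (P {ω | ∀ j ≤ n, Lhat j ω = w j}).toReal = ((w n : ℝ) + 1) * (1 / 3 : ℝ) ^ n := by
  intro n w hw0 hstep' hpos
  have hstep : ∀ j < n, w (j+1) - w j = -1 ∨ w (j+1) - w j = 0 ∨ w (j+1) - w j = 1 := by
    intro j hj
    have h := hstep' (j+1) (by omega) (by omega)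
    simp only [Nat.add_sub_cancel, Set.mem_insert_iff, Set.mem_singleton_iff] at h
    omega
  set C : (Fin n → ℤ) → Set Ω :=
    fun ε => {ω | ∀ j : Fin n, L ((j : ℕ) + 1) ω - L (j : ℕ) ω = ε j} with hC
  have hCmeas : ∀ ε, MeasurableSet (C ε) := by
    intro ε
    have hCe : C ε = ⋂ j : Fin n, (fun ω => L ((j : ℕ) + 1) ω - L (j : ℕ) ω) ⁻¹' {ε j} := by
      ext ω; simp [hC, Set.mem_iInter]
    rw [hCe]
    exact MeasurableSet.iInter fun j =>
      ((hMeas _).sub (hMeas _)) (measurableSet_singleton (ε j))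
  have hCdisj : ∀ (s : Finset (Fin n → ℤ)), (↑s : Set (Fin n → ℤ)).PairwiseDisjoint C := by
    intro s ε _ ε' _ hne
    refine Set.disjoint_left.mpr fun ω h1 h2 => hne (funext fun j => ?_)
    exact (h1 j).symm.trans (h2 j)
  have hLpe : ∀ (ε : Fin n → ℤ) (ω : Ω), ω ∈ C ε → ∀ j ≤ n, L j ω = pe ε j := by
    intro ε ω hω j
    induction j with
    | zero => intro _; rw [hStart, pe_zero]
    | succ j ih =>
      intro hj
      have h1 : L j ω = pe ε j := ih (by omega)
      have h2 := hω ⟨j, by omega⟩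
      have h3 := pe_succ ε (show j < n by omega)
      simp only at h2
      omega
  have hCne : ∀ ε, P (C ε) ≠ ⊤ := fun ε => measure_ne_top P _
  have hCP : ∀ ε ∈ T n, (P (C ε)).toReal = (1/3 : ℝ)^n := by
    intro ε hε
    apply hIID
    intro j
    have := Fintype.mem_piFinset.mp hε j
    simp only [Finset.mem_insert, Finset.mem_singleton] at this
    simp only [Set.mem_insert_iff, Set.mem_singleton_iff]
    tauto
  have hPT : P (⋃ ε ∈ T n, C ε) = 1 := by
    rw [measure_biUnion_finset (hCdisj (T n)) (fun ε _ => hCmeas ε)]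
    rw [← ENNReal.toReal_eq_one_iff]
    rw [ENNReal.toReal_sum (fun ε _ => hCne ε), Finset.sum_congr rfl hCP,
      Finset.sum_const, nsmul_eq_mul]
    have hcardT : (T n).card = 3^n := by
      rw [T, Fintype.card_piFinset]
      norm_num
    rw [hcardT]
    push_cast
    rw [← mul_pow]
    norm_num
  have hPUc : P (⋃ ε ∈ T n, C ε)ᶜ = 0 := by
    rw [prob_compl_eq_zero_iff (Finset.measurableSet_biUnion _ (fun ε _ => hCmeas ε))]
    exact hPT
  -- the key equivalence on each cylinder
  have hkey : ∀ (ε : Fin n → ℤ) (ω : Ω), ω ∈ C ε → ∀ j ≤ n,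
      Lhat j ω = pe ε j - 2 * mn (pe ε) j := by
    intro ε ω hω j hj
    rw [hLhat]
    have h1 : mn (fun i => L i ω) j = mn (pe ε) j :=
      mn_congr (fun i hi => hLpe ε ω hω i (le_trans hi hj))
    have h2 : (Finset.range (j+1)).inf' Finset.nonempty_range_add_one (fun i => L i ω)
        = mn (fun i => L i ω) j := rfl
    rw [h2, h1, hLpe ε ω hω j hj]
  have hsub1 : (⋃ ε ∈ S n w, C ε) ⊆ {ω | ∀ j ≤ n, Lhat j ω = w j} := by
    intro ω hω
    simp only [Set.mem_iUnion] at hω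
    obtain ⟨ε, hε, hωC⟩ := hω
    have hεS := (Finset.mem_filter.mp hε).2
    intro j hj
    rw [hkey ε ω hωC j hj]
    exact hεS j hj
  have hsub2 : {ω | ∀ j ≤ n, Lhat j ω = w j} ∩ (⋃ ε ∈ T n, C ε) ⊆ ⋃ ε ∈ S n w, C ε := by
    intro ω ⟨hωA, hωU⟩
    simp only [Set.mem_iUnion] at hωU ⊢
    obtain ⟨ε, hε, hωC⟩ := hωU
    refine ⟨ε, Finset.mem_filter.mpr ⟨hε, fun j hj => ?_⟩, hωC⟩
    rw [← hkey ε ω hωC j hj]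
    exact hωA j hj
  have hPA : P {ω | ∀ j ≤ n, Lhat j ω = w j} = P (⋃ ε ∈ S n w, C ε) := by
    apply le_antisymm
    · calc P {ω | ∀ j ≤ n, Lhat j ω = w j}
          ≤ P ({ω | ∀ j ≤ n, Lhat j ω = w j} ∩ (⋃ ε ∈ T n, C ε))
            + P ({ω | ∀ j ≤ n, Lhat j ω = w j} \ (⋃ ε ∈ T n, C ε)) :=
            measure_le_inter_add_diff P {ω | ∀ j ≤ n, Lhat j ω = w j} (⋃ ε ∈ T n, C ε)
        _ ≤ P (⋃ ε ∈ S n w, C ε) + 0 :=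
            add_le_add (measure_mono hsub2)
              (le_trans (measure_mono (Set.diff_subset_compl _ _)) (le_of_eq hPUc))
        _ = P (⋃ ε ∈ S n w, C ε) := by rw [add_zero]
    · exact measure_mono hsub1
  rw [hPA, measure_biUnion_finset (hCdisj (S n w)) (fun ε _ => hCmeas ε),
    ENNReal.toReal_sum (fun ε _ => hCne ε)]
  have hSP : ∀ ε ∈ S n w, (P (C ε)).toReal = (1/3 : ℝ)^n :=
    fun ε hε => hCP ε (Finset.mem_filter.mp hε).1
  rw [Finset.sum_congr rfl hSP, Finset.sum_const, nsmul_eq_mul, count_S n w hw0 hstep hpos]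
  congr 1
  have h1 : ((w n + 1).toNat : ℤ) = w n + 1 := Int.toNat_of_nonneg (by have := hpos n le_rfl; omega)
  exact_mod_cast congrArg (fun z : ℤ => (z : ℝ)) h1
end

section
/- For all integers x ≥ 0, y ∈ ℤ, and 0 ≤ s ≤ x, if the chain Ẑ = (L̂, R̂) is started from (x, y), then ℙ[ L̂(j) ≥ x − s for all j ≥ 0 ] = (s+1)/(x+1). -/
open MeasureTheory

/-- Transition probabilities of the conditioned walk `Ẑ` on `ℕ × ℤ`
(the Doob h-transform, with harmonic function `h(x,y) = x + 1`, of the walk with i.i.d.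
increments uniform on `{(1,-1), (-1,0), (0,1)}`): from `(x,y)`, jump to `(x+1, y-1)`
with probability `(x+2)/(3(x+1))`, to `(x-1, y)` with probability `x/(3(x+1))`, and
to `(x, y+1)` with probability `1/3`. -/
noncomputable def transProb : ℕ × ℤ → ℕ × ℤ → ℝ := fun p q =>
  if q.1 = p.1 + 1 ∧ q.2 = p.2 - 1 then ((p.1 : ℝ) + 2) / (3 * ((p.1 : ℝ) + 1))
  else if q.1 + 1 = p.1 ∧ q.2 = p.2 then (p.1 : ℝ) / (3 * ((p.1 : ℝ) + 1))
  else if q.1 = p.1 ∧ q.2 = p.2 + 1 then 1 / 3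
  else 0

namespace Stmt3Aux

def stepS (p : ℕ × ℤ) : Fin 3 → ℕ × ℤ
  | 0 => (p.1 + 1, p.2 - 1)
  | 1 => (p.1 - 1, p.2)
  | 2 => (p.1, p.2 + 1)

def stepN (a : ℕ) : Fin 3 → ℕ
  | 0 => a + 1
  | 1 => a - 1
  | 2 => a

noncomputable def w (a : ℕ) : Fin 3 → ℝ
  | 0 => ((a:ℝ)+2)/(3*((a:ℝ)+1))
  | 1 => (a:ℝ)/(3*((a:ℝ)+1))
  | 2 => 1/3

lemma stepS_fst (p : ℕ × ℤ) (i : Fin 3) : (stepS p i).1 = stepN p.1 i := by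
  fin_cases i <;> rfl

lemma w_nonneg (a : ℕ) (i : Fin 3) : 0 ≤ w a i := by
  have h1 : (0:ℝ) < 3*((a:ℝ)+1) := by positivity
  fin_cases i <;> simp [w] <;> positivity

lemma sum_w (a : ℕ) : ∑ i : Fin 3, w a i = 1 := by
  have h1 : (3*((a:ℝ)+1)) ≠ 0 := by positivity
  rw [Fin.sum_univ_three]
  show ((a:ℝ)+2)/(3*((a:ℝ)+1)) + (a:ℝ)/(3*((a:ℝ)+1)) + 1/3 = 1
  field_simp
  ring

lemma transProb_step (p : ℕ × ℤ) (i : Fin 3) : transProb p (stepS p i) = w p.1 i := by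
  obtain ⟨a, b⟩ := p
  fin_cases i
  · simp only [transProb, stepS, w]; norm_num
  · rcases Nat.eq_zero_or_pos a with h | h
    · subst h
      simp only [transProb, stepS, w]
      norm_num
    · simp only [transProb, stepS, w]
      have h1 : a - 1 ≠ a + 1 := by omega
      have h2 : a - 1 + 1 = a := by omega
      have h3 : ¬ (b = b - 1) := by omega
      simp [h1, h2, h3]
  · simp only [transProb, stepS, w]
    have h3 : ¬ ((b:ℤ) + 1 = b - 1) := by omega
    have h4 : a ≠ a + 1 := by omega
    have h5 : a + 1 ≠ a := by omega
    simp [h3, h4, h5]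

lemma transProb_eq_zero (p q : ℕ × ℤ) (h : ∀ i : Fin 3, q ≠ stepS p i) :
    transProb p q = 0 := by
  obtain ⟨a, b⟩ := p
  obtain ⟨c, d⟩ := q
  have h0 := h 0
  have h1 := h 1
  have h2 := h 2
  simp only [stepS, ne_eq, Prod.mk.injEq, not_and] at h0 h1 h2
  unfold transProb
  simp only
  split_ifs with c1 c2 c3
  · exact absurd c1.2 (h0 c1.1)
  · obtain ⟨e1, e2⟩ := c2
    have : c = a - 1 := by omega
    exact absurd e2 (h1 this)
  · exact absurd c3.2 (h2 c3.1)
  · rfl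

lemma stepS_inj (p : ℕ × ℤ) {i j : Fin 3} (h : stepS p i = stepS p j) : i = j := by
  fin_cases i <;> fin_cases j <;> first
    | rfl
    | (exfalso; simp only [stepS, Prod.mk.injEq] at h; omega)


def pathF (p : ℕ × ℤ) (d : ℕ → Fin 3) : ℕ → ℕ × ℤ
  | 0 => p
  | n + 1 => stepS (pathF p d n) (d n)

lemma pathF_congr (p : ℕ × ℤ) (d d' : ℕ → Fin 3) (n : ℕ) (h : ∀ k < n, d k = d' k) :
    ∀ j ≤ n, pathF p d j = pathF p d' j := by
  intro j hj
  induction j with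
  | zero => rfl
  | succ k ih =>
    rw [pathF, pathF, ih (by omega), h k (by omega)]

lemma pathF_shift (p : ℕ × ℤ) (d : ℕ → Fin 3) (j : ℕ) :
    pathF p d (j + 1) = pathF (stepS p (d 0)) (fun k => d (k + 1)) j := by
  induction j with
  | zero => rfl
  | succ k ih => rw [pathF, ih]; rfl

/-- extension of a finite step sequence -/
def ext (n : ℕ) (d : Fin n → Fin 3) : ℕ → Fin 3 := fun j => if h : j < n then d ⟨j, h⟩ else 0

noncomputable def F (m : ℕ) : ℕ → ℕ → ℝ
  | 0, _ => 1
  | n + 1, a => ∑ i : Fin 3, (if m ≤ stepN a i then w a i * F m n (stepN a i) else 0)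

lemma F_nonneg (m n a : ℕ) : 0 ≤ F m n a := by
  induction n generalizing a with
  | zero => norm_num [F]
  | succ k ih =>
    rw [F]
    apply Finset.sum_nonneg
    intro i _
    split
    · exact mul_nonneg (w_nonneg a i) (ih _)
    · exact le_refl _

lemma F_le_one (m n a : ℕ) : F m n a ≤ 1 := by
  induction n generalizing a with
  | zero => norm_num [F]
  | succ k ih =>
    rw [F]
    calc ∑ i : Fin 3, (if m ≤ stepN a i then w a i * F m k (stepN a i) else 0)
        ≤ ∑ i : Fin 3, w a i := by
          apply Finset.sum_le_sum
          intro i _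
          split
          · calc w a i * F m k (stepN a i) ≤ w a i * 1 :=
                  mul_le_mul_of_nonneg_left (ih _) (w_nonneg a i)
              _ = w a i := mul_one _
          · exact w_nonneg a i
      _ = 1 := sum_w a

lemma F_succ_le (m n a : ℕ) : F m (n+1) a ≤ F m n a := by
  induction n generalizing a with
  | zero => exact F_le_one m 1 a
  | succ k ih =>
    rw [F, F]
    apply Finset.sum_le_sum
    intro i _
    split
    · exact mul_le_mul_of_nonneg_left (ih _) (w_nonneg a i)
    · exact le_refl _

lemma F_antitone (m a : ℕ) : Antitone (fun n => F m n a) := by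
  apply antitone_nat_of_succ_le
  intro n
  exact F_succ_le m n a


noncomputable def gr (m a : ℕ) : ℝ := ((a:ℝ) + 1 - (m:ℝ)) / ((a:ℝ) + 1)

lemma gr_le_one (m a : ℕ) : gr m a ≤ 1 := by
  unfold gr
  rw [div_le_one (by positivity)]
  have : (0:ℝ) ≤ (m:ℝ) := Nat.cast_nonneg m
  linarith

@[simp] lemma stepN_0 (a : ℕ) : stepN a 0 = a + 1 := rfl
@[simp] lemma stepN_1 (a : ℕ) : stepN a 1 = a - 1 := rfl
@[simp] lemma stepN_2 (a : ℕ) : stepN a 2 = a := rfl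
@[simp] lemma w_0 (a : ℕ) : w a 0 = ((a:ℝ)+2)/(3*((a:ℝ)+1)) := rfl
@[simp] lemma w_1 (a : ℕ) : w a 1 = (a:ℝ)/(3*((a:ℝ)+1)) := rfl
@[simp] lemma w_2 (a : ℕ) : w a 2 = 1/3 := rfl

lemma F_ge_gr (m : ℕ) : ∀ n a, m ≤ a → gr m a ≤ F m n a := by
  intro n
  induction n with
  | zero => intro a _; rw [F]; exact gr_le_one m a
  | succ k ih =>
    intro a ha
    rw [F]
    have key : ∑ i : Fin 3, (if m ≤ stepN a i then w a i * gr m (stepN a i) else 0)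
        ≤ ∑ i : Fin 3, (if m ≤ stepN a i then w a i * F m k (stepN a i) else 0) := by
      apply Finset.sum_le_sum
      intro i _
      split
      case isTrue h => exact mul_le_mul_of_nonneg_left (ih _ h) (w_nonneg a i)
      case isFalse h => exact le_refl _
    refine le_trans ?_ key
    rw [Fin.sum_univ_three]
    have hup : m ≤ stepN a 0 := by simp; omega
    have hstay : m ≤ stepN a 2 := ha
    rw [if_pos hup, if_pos hstay]
    have ha1 : ((a:ℝ) + 1) ≠ 0 := by positivity
    have ha2 : ((a:ℝ) + 2) ≠ 0 := by positivity
    by_cases hd : m ≤ stepN a 1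
    · rw [if_pos hd]
      rcases Nat.eq_zero_or_pos a with h0 | h0
      · subst h0
        have hm : m = 0 := by omega
        subst hm
        simp only [stepN_0, stepN_1, stepN_2, w_0, w_1, w_2]
        unfold gr
        norm_num
      · have hcast : ((a - 1 : ℕ) : ℝ) = (a:ℝ) - 1 := by
          rw [Nat.cast_sub h0]; norm_num
        have haa : ((a:ℝ)) ≠ 0 := by
          have : (0:ℝ) < (a:ℝ) := by exact_mod_cast h0
          linarith
        apply le_of_eq
        simp only [stepN_0, stepN_1, stepN_2, w_0, w_1, w_2]
        unfold gr
        rw [hcast]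
        have h4 : ((a:ℝ) - 1) + 1 = (a:ℝ) := by ring
        rw [h4]
        push_cast
        field_simp
        ring
    · rw [if_neg hd]
      have ham : a = m := by simp only [stepN_1] at hd; omega
      subst ham
      apply le_of_eq
      simp only [stepN_0, stepN_2, w_0, w_2]
      unfold gr
      push_cast
      field_simp
      ring

noncomputable def Llim (m a : ℕ) : ℝ := ⨅ n, F m n a

lemma F_tendsto (m a : ℕ) : Filter.Tendsto (fun n => F m n a) Filter.atTop (nhds (Llim m a)) :=
  tendsto_atTop_ciInf (F_antitone m a) ⟨0, by rintro r ⟨n, rfl⟩; exact F_nonneg m n a⟩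

lemma Llim_le_one (m a : ℕ) : Llim m a ≤ 1 := by
  refine le_trans (ciInf_le ⟨0, ?_⟩ 0) (F_le_one m 0 a)
  rintro r ⟨n, rfl⟩; exact F_nonneg m n a

lemma Llim_ge_gr (m a : ℕ) (h : m ≤ a) : gr m a ≤ Llim m a :=
  le_ciInf fun n => F_ge_gr m n a h

lemma Llim_rec (m a : ℕ) :
    Llim m a = ∑ i : Fin 3, (if m ≤ stepN a i then w a i * Llim m (stepN a i) else 0) := by
  have h1 : Filter.Tendsto (fun n => F m (n+1) a) Filter.atTop (nhds (Llim m a)) := by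
    exact (F_tendsto m a).comp (Filter.tendsto_add_atTop_nat 1)
  have h2 : Filter.Tendsto (fun n => F m (n+1) a) Filter.atTop
      (nhds (∑ i : Fin 3, (if m ≤ stepN a i then w a i * Llim m (stepN a i) else 0))) := by
    have : ∀ n, F m (n+1) a
        = ∑ i : Fin 3, (if m ≤ stepN a i then w a i * F m n (stepN a i) else 0) := fun n => rfl
    simp only [this]
    apply tendsto_finset_sum
    intro i _
    by_cases hc : m ≤ stepN a i
    · simp only [if_pos hc]
      exact (F_tendsto m (stepN a i)).const_mul _
    · simp only [if_neg hc]
      exact tendsto_const_nhds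
  exact tendsto_nhds_unique h1 h2


noncomputable def eL (m a : ℕ) : ℝ := ((a:ℝ)+1) * Llim m a - ((a:ℝ)+1-(m:ℝ))

lemma eL_nonneg (m a : ℕ) (h : m ≤ a) : 0 ≤ eL m a := by
  have h1 := Llim_ge_gr m a h
  unfold gr at h1
  unfold eL
  have ha1 : (0:ℝ) < (a:ℝ) + 1 := by positivity
  have := (div_le_iff₀ ha1).mp h1
  nlinarith

lemma eL_le (m a : ℕ) (h : m ≤ a) : eL m a ≤ (m:ℝ) := by
  have h1 := Llim_le_one m a
  unfold eL
  have ha1 : (0:ℝ) < (a:ℝ) + 1 := by positivity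
  nlinarith

lemma eL_rec1 (m : ℕ) : eL m (m+1) = 2 * eL m m := by
  have eq := Llim_rec m m
  rw [Fin.sum_univ_three] at eq
  have hup : m ≤ stepN m 0 := by simp
  have hstay : m ≤ stepN m 2 := le_refl m
  rw [if_pos hup, if_pos hstay] at eq
  simp only [stepN_0, stepN_1, stepN_2, w_0, w_1, w_2] at eq
  have hm1 : ((m:ℝ) + 1) ≠ 0 := by positivity
  rcases Nat.eq_zero_or_pos m with h0 | h0
  · subst h0
    norm_num at eq
    unfold eL
    norm_num
    linarith
  · simp only [show ¬ (m ≤ m - 1) by omega, ↓reduceIte] at eq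
    field_simp at eq
    unfold eL
    push_cast
    nlinarith [eq]

lemma eL_rec2 (m a : ℕ) (h : m < a) : eL m (a+1) = 2 * eL m a - eL m (a-1) := by
  have eq := Llim_rec m a
  rw [Fin.sum_univ_three] at eq
  have hup : m ≤ stepN a 0 := by simp; omega
  have hdown : m ≤ stepN a 1 := by simp; omega
  have hstay : m ≤ stepN a 2 := by simp; omega
  rw [if_pos hup, if_pos hdown, if_pos hstay] at eq
  simp only [stepN_0, stepN_1, stepN_2, w_0, w_1, w_2] at eq
  have ha0 : 1 ≤ a := by omega
  have hcast : ((a - 1 : ℕ) : ℝ) = (a:ℝ) - 1 := by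
    rw [Nat.cast_sub ha0]; norm_num
  have ha1 : ((a:ℝ) + 1) ≠ 0 := by positivity
  field_simp at eq
  unfold eL
  rw [hcast]
  push_cast
  nlinarith [eq]

lemma eL_aux (m : ℕ) : ∀ k, eL m (m+k+1) = eL m (m+k) + eL m m := by
  intro k
  induction k with
  | zero =>
    have := eL_rec1 m
    simp only [Nat.add_zero]
    rw [this]; ring
  | succ j ih =>
    have h2 := eL_rec2 m (m+j+1) (by omega)
    have e2 : m + j + 1 - 1 = m + j := by omega
    rw [e2] at h2
    have e3 : m + (j+1) = m + j + 1 := by omega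
    rw [e3, h2, ih]
    ring

lemma eL_lin (m : ℕ) : ∀ k, eL m (m+k) = ((k:ℝ)+1) * eL m m := by
  intro k
  induction k with
  | zero => simp
  | succ j ih =>
    have := eL_aux m j
    have e3 : m + j + 1 = m + (j + 1) := by omega
    rw [e3] at this
    rw [this, ih]
    push_cast
    ring

lemma eL_m_zero (m : ℕ) : eL m m = 0 := by
  by_contra hne
  have hpos : 0 < eL m m := lt_of_le_of_ne (eL_nonneg m m (le_refl m)) (Ne.symm hne)
  obtain ⟨k, hk⟩ := exists_nat_gt ((m:ℝ) / eL m m)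
  have h1 : eL m (m+k) ≤ (m:ℝ) := eL_le m (m+k) (by omega)
  rw [eL_lin m k] at h1
  have h2 : (m:ℝ) / eL m m < (k:ℝ) + 1 := by
    have : (k:ℝ) ≤ (k:ℝ) + 1 := by linarith
    linarith
  have h3 : (m:ℝ) < ((k:ℝ)+1) * eL m m := by
    rw [div_lt_iff₀ hpos] at h2
    linarith
  linarith

lemma Llim_eq (m a : ℕ) (h : m ≤ a) : Llim m a = ((a:ℝ)+1-(m:ℝ))/((a:ℝ)+1) := by
  have h1 : eL m a = 0 := by
    obtain ⟨k, rfl⟩ : ∃ k, a = m + k := ⟨a - m, by omega⟩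
    rw [eL_lin m k, eL_m_zero m, mul_zero]
  unfold eL at h1
  have ha1 : ((a:ℝ) + 1) ≠ 0 := by positivity
  field_simp
  linarith


lemma ext_cons_zero (n : ℕ) (i : Fin 3) (d : Fin n → Fin 3) : ext (n+1) (Fin.cons i d) 0 = i := by
  simp only [ext]
  rw [dif_pos (Nat.succ_pos n)]
  exact Fin.cons_zero (α := fun _ => Fin 3) i d

lemma ext_cons_succ (n : ℕ) (i : Fin 3) (d : Fin n → Fin 3) (k : ℕ) (hk : k < n) :
    ext (n+1) (Fin.cons i d) (k+1) = ext n d k := by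
  simp only [ext]
  rw [dif_pos (by omega : k + 1 < n + 1), dif_pos hk]
  exact Fin.cons_succ (α := fun _ => Fin 3) i d ⟨k, hk⟩

lemma pathF_ext_cons (n : ℕ) (p : ℕ × ℤ) (i : Fin 3) (d : Fin n → Fin 3) (j : ℕ) (hj : j ≤ n) :
    pathF p (ext (n+1) (Fin.cons i d)) (j+1) = pathF (stepS p i) (ext n d) j := by
  rw [pathF_shift, ext_cons_zero]
  exact pathF_congr _ _ _ n (fun k hk => ext_cons_succ n i d k hk) j hj

lemma sum_paths (m : ℕ) : ∀ (n : ℕ) (p : ℕ × ℤ), m ≤ p.1 →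
    (∑ d : Fin n → Fin 3,
      if ∀ j ≤ n, m ≤ (pathF p (ext n d) j).1
      then ∏ j ∈ Finset.range n, w (pathF p (ext n d) j).1 (ext n d j)
      else 0)
    = F m n p.1 := by
  intro n
  induction n with
  | zero =>
    intro p hp
    rw [Fintype.sum_unique]
    rw [if_pos]
    · simp [F]
    · intro j hj
      have : j = 0 := Nat.le_zero.mp hj
      subst this
      exact hp
  | succ n ih =>
    intro p hp
    rw [← Equiv.sum_comp (Fin.consEquiv (fun _ : Fin (n+1) => Fin 3))]
    rw [Fintype.sum_prod_type]
    have hterm : ∀ (i : Fin 3) (d : Fin n → Fin 3),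
        (if ∀ j ≤ n+1, m ≤ (pathF p (ext (n+1) (Fin.consEquiv _ (i, d))) j).1
          then ∏ j ∈ Finset.range (n+1),
            w (pathF p (ext (n+1) (Fin.consEquiv _ (i, d))) j).1 (ext (n+1) (Fin.consEquiv _ (i, d)) j)
          else 0)
        = w p.1 i * (if ∀ j ≤ n, m ≤ (pathF (stepS p i) (ext n d) j).1
            then ∏ j ∈ Finset.range n, w (pathF (stepS p i) (ext n d) j).1 (ext n d j)
            else 0) := by
      intro i d
      have hce : (Fin.consEquiv (fun _ : Fin (n+1) => Fin 3)) (i, d) = Fin.cons i d := rfl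
      rw [hce]
      have hcond : (∀ j ≤ n+1, m ≤ (pathF p (ext (n+1) (Fin.cons i d)) j).1)
          ↔ (∀ j ≤ n, m ≤ (pathF (stepS p i) (ext n d) j).1) := by
        constructor
        · intro h j hj
          rw [← pathF_ext_cons n p i d j hj]
          exact h (j+1) (by omega)
        · intro h j hj
          match j with
          | 0 => exact hp
          | (k+1) =>
            rw [pathF_ext_cons n p i d k (by omega)]
            exact h k (by omega)
      by_cases hc : ∀ j ≤ n, m ≤ (pathF (stepS p i) (ext n d) j).1
      · rw [if_pos (hcond.mpr hc), if_pos hc]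
        rw [Finset.prod_range_succ']
        rw [mul_comm]
        congr 1
        · apply Finset.prod_congr rfl
          intro j hj
          rw [Finset.mem_range] at hj
          rw [pathF_ext_cons n p i d j (by omega), ext_cons_succ n i d j hj]
      · rw [if_neg (fun h => hc (hcond.mp h)), if_neg hc, mul_zero]
    calc ∑ i : Fin 3, ∑ d : Fin n → Fin 3,
          (if ∀ j ≤ n+1, m ≤ (pathF p (ext (n+1) (Fin.consEquiv _ (i, d))) j).1
            then ∏ j ∈ Finset.range (n+1),
              w (pathF p (ext (n+1) (Fin.consEquiv _ (i, d))) j).1 (ext (n+1) (Fin.consEquiv _ (i, d)) j)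
            else 0)
        = ∑ i : Fin 3, ∑ d : Fin n → Fin 3,
            w p.1 i * (if ∀ j ≤ n, m ≤ (pathF (stepS p i) (ext n d) j).1
              then ∏ j ∈ Finset.range n, w (pathF (stepS p i) (ext n d) j).1 (ext n d j)
              else 0) := by
          apply Finset.sum_congr rfl; intro i _
          apply Finset.sum_congr rfl; intro d _
          exact hterm i d
      _ = ∑ i : Fin 3, w p.1 i * ∑ d : Fin n → Fin 3,
            (if ∀ j ≤ n, m ≤ (pathF (stepS p i) (ext n d) j).1
              then ∏ j ∈ Finset.range n, w (pathF (stepS p i) (ext n d) j).1 (ext n d j)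
              else 0) := by
          apply Finset.sum_congr rfl; intro i _
          rw [Finset.mul_sum]
      _ = ∑ i : Fin 3, (if m ≤ stepN p.1 i then w p.1 i * F m n (stepN p.1 i) else 0) := by
          apply Finset.sum_congr rfl; intro i _
          by_cases hsi : m ≤ (stepS p i).1
          · rw [ih (stepS p i) hsi, stepS_fst, if_pos (by rw [← stepS_fst]; exact hsi)]
          · have hz : ∀ d : Fin n → Fin 3,
                (if ∀ j ≤ n, m ≤ (pathF (stepS p i) (ext n d) j).1
                  then ∏ j ∈ Finset.range n, w (pathF (stepS p i) (ext n d) j).1 (ext n d j)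
                  else 0) = 0 := by
              intro d
              rw [if_neg]
              intro h
              exact hsi (h 0 (Nat.zero_le n))
            rw [Finset.sum_congr rfl (fun d _ => hz d), Finset.sum_const, smul_zero,
              if_neg (by rw [← stepS_fst p i]; exact hsi), mul_zero]
      _ = F m (n+1) p.1 := rfl


section Measure

variable {Ω : Type*} [MeasurableSpace Ω] (P : Measure Ω) [IsProbabilityMeasure P]
  (Zhat : ℕ → Ω → ℕ × ℤ) (x : ℕ) (y : ℤ)

lemma measSet (S : Set (ℕ × ℤ)) : MeasurableSet S := (Set.to_countable S).measurableSet

variable (hPath : ∀ (n : ℕ) (p : ℕ → ℕ × ℤ), p 0 = (x, y) →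
      (P {ω | ∀ j ≤ n, Zhat j ω = p j}).toReal =
        ∏ j ∈ Finset.range n, transProb (p j) (p (j + 1)))

include hPath

lemma badfibNull : ∀ (n : ℕ) (v : ℕ → ℕ × ℤ), v 0 = (x, y) → ∀ j, j < n →
    transProb (v j) (v (j+1)) = 0 → P {ω | ∀ k ≤ n, Zhat k ω = v k} = 0 := by
  intro n v hv0 j hj hz
  have h1 := hPath n v hv0
  rw [Finset.prod_eq_zero (Finset.mem_range.mpr hj) hz] at h1
  rcases (ENNReal.toReal_eq_zero_iff _).mp h1 with h | h
  · exact h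
  · exact absurd h (measure_ne_top P _)

lemma fibProb (n : ℕ) (d : ℕ → Fin 3) :
    (P {ω | ∀ j ≤ n, Zhat j ω = pathF (x,y) d j}).toReal
      = ∏ j ∈ Finset.range n, w (pathF (x,y) d j).1 (d j) := by
  have h1 := hPath n (pathF (x,y) d) rfl
  rw [h1]
  apply Finset.prod_congr rfl
  intro j _
  rw [show pathF (x,y) d (j+1) = stepS (pathF (x,y) d j) (d j) from rfl, transProb_step]

lemma startNull (hMeas : ∀ n, Measurable (Zhat n)) : P {ω | Zhat 0 ω ≠ (x, y)} = 0 := by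
  have h1 := hPath 0 (fun _ => (x, y)) rfl
  simp only [Finset.range_zero, Finset.prod_empty] at h1
  have hset : {ω | ∀ j ≤ 0, Zhat j ω = (x, y)} = (Zhat 0) ⁻¹' {(x, y)} := by
    ext ω
    constructor
    · intro h; exact h 0 le_rfl
    · intro h j hj
      have hj0 : j = 0 := Nat.le_zero.mp hj
      rw [hj0]; exact h
  rw [hset] at h1
  have hone : P ((Zhat 0) ⁻¹' {(x, y)}) = 1 := (ENNReal.toReal_eq_one_iff _).mp h1
  have h : {ω | Zhat 0 ω ≠ (x, y)} = ((Zhat 0) ⁻¹' {(x, y)})ᶜ := rfl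
  rw [h]
  exact (prob_compl_eq_zero_iff ((hMeas 0) (measSet _))).mpr hone

lemma stepNull (hMeas : ∀ n, Measurable (Zhat n)) (j : ℕ) :
    P {ω | ∀ i : Fin 3, Zhat (j+1) ω ≠ stepS (Zhat j ω) i} = 0 := by
  have hN0 := startNull P Zhat x y hPath hMeas
  have hcov : {ω | ∀ i : Fin 3, Zhat (j+1) ω ≠ stepS (Zhat j ω) i}
      ⊆ {ω | Zhat 0 ω ≠ (x, y)} ∪
        ⋃ (u : Fin (j+2) → ℕ × ℤ),
        ⋃ (_ : u ⟨0, by omega⟩ = (x, y) ∧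
            ∀ i : Fin 3, u ⟨j+1, by omega⟩ ≠ stepS (u ⟨j, by omega⟩) i),
          {ω | ∀ k ≤ j+1, Zhat k ω = u ⟨min k (j+1), Nat.lt_succ_of_le (Nat.min_le_right k (j+1))⟩} := by
    intro ω hω
    by_cases h0 : Zhat 0 ω = (x, y)
    · right
      refine Set.mem_iUnion.mpr ⟨fun k => Zhat k ω, Set.mem_iUnion.mpr ⟨⟨h0, hω⟩, ?_⟩⟩
      intro k hk
      have hmin : min k (j+1) = k := Nat.min_eq_left hk
      simp only [hmin]
    · left; exact h0
  refine measure_mono_null hcov (measure_union_null hN0 (measure_iUnion_null fun u =>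
    measure_iUnion_null fun hu => ?_))
  have e1 : ∀ h, (⟨min j (j+1), h⟩ : Fin (j+2)) = ⟨j, by omega⟩ := by
    intro h; simp only [Fin.mk.injEq]; omega
  have e2 : ∀ h, (⟨min (j+1) (j+1), h⟩ : Fin (j+2)) = ⟨j+1, by omega⟩ := by
    intro h; simp only [Fin.mk.injEq]; omega
  have e0 : ∀ h, (⟨min 0 (j+1), h⟩ : Fin (j+2)) = ⟨0, by omega⟩ := by
    intro h; simp only [Fin.mk.injEq]; omega
  refine badfibNull P Zhat x y hPath (j+1) (fun k => u ⟨min k (j+1), Nat.lt_succ_of_le (Nat.min_le_right k (j+1))⟩) ?_ j (by omega) ?_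
  · beta_reduce; rw [e0]; exact hu.1
  · beta_reduce; rw [e1, e2]
    exact transProb_eq_zero _ _ hu.2


lemma PEnF (hMeas : ∀ n, Measurable (Zhat n)) (m : ℕ) (hmx : m ≤ x) (n : ℕ) :
    (P {ω | ∀ j ≤ n, m ≤ (Zhat j ω).1}).toReal = F m n x := by
  classical
  have hN0 := startNull P Zhat x y hPath hMeas
  set En : Set Ω := {ω | ∀ j ≤ n, m ≤ (Zhat j ω).1} with hEn
  set C : (ℕ → Fin 3) → Set Ω := fun d => {ω | ∀ j ≤ n, Zhat j ω = pathF (x,y) d j} with hC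
  have hCMeas : ∀ d, MeasurableSet (C d) := by
    intro d
    have h : C d = ⋂ j, ⋂ (_ : j ≤ n), (Zhat j) ⁻¹' {pathF (x,y) d j} := by
      ext ω; simp [hC, Set.mem_iInter]
    rw [h]
    exact MeasurableSet.iInter fun j => MeasurableSet.iInter fun _ => (hMeas j) (measSet _)
  set okset : Finset (Fin n → Fin 3) :=
    Finset.univ.filter (fun d => ∀ j ≤ n, m ≤ (pathF (x,y) (ext n d) j).1) with hok
  set U : Set Ω := ⋃ d ∈ okset, C (ext n d) with hU
  set Bad : Set Ω := {ω | Zhat 0 ω ≠ (x, y)} ∪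
    ⋃ (j : ℕ), ⋃ (_ : j < n), {ω | ∀ i : Fin 3, Zhat (j+1) ω ≠ stepS (Zhat j ω) i} with hBad
  have hBadNull : P Bad = 0 :=
    measure_union_null hN0 (measure_iUnion_null fun j => measure_iUnion_null fun _ =>
      stepNull P Zhat x y hPath hMeas j)
  have hUsub : U ⊆ En := by
    intro ω hω
    rw [hU] at hω
    obtain ⟨d, hd, hωd⟩ := Set.mem_iUnion₂.mp hω
    rw [hok, Finset.mem_filter] at hd
    intro j hj
    rw [hωd j hj]
    exact hd.2 j hj
  have hEnsub : En ⊆ U ∪ Bad := by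
    intro ω hω
    by_cases hb : ω ∈ Bad
    · right; exact hb
    · left
      rw [hBad] at hb
      simp only [Set.mem_union, Set.mem_iUnion, Set.mem_setOf_eq, not_or, not_exists,
        not_forall, not_not] at hb
      obtain ⟨hb1, hb2⟩ := hb
      have hb2' : ∀ j, j < n → ∃ i : Fin 3, Zhat (j+1) ω = stepS (Zhat j ω) i := by
        intro j hj
        obtain ⟨i, hi⟩ := hb2 j hj
        exact ⟨i, hi⟩
      choose f hf using hb2'
      let d : ℕ → Fin 3 := fun j => if h : j < n then f j h else 0
      have hZ : ∀ j, j ≤ n → Zhat j ω = pathF (x,y) d j := by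
        intro j
        induction j with
        | zero => intro _; exact hb1
        | succ k ih =>
          intro hj
          have hk : k < n := by omega
          rw [show pathF (x,y) d (k+1) = stepS (pathF (x,y) d k) (d k) from rfl]
          rw [← ih (by omega)]
          have hdk : d k = f k hk := dif_pos hk
          rw [hdk]
          exact hf k hk
      let dd : Fin n → Fin 3 := fun k => d k.val
      have hdd : ∀ j ≤ n, pathF (x,y) (ext n dd) j = pathF (x,y) d j := by
        refine pathF_congr _ _ _ n (fun k hk => ?_)
        simp only [ext, dif_pos hk]; rfl
      have hmem : ω ∈ C (ext n dd) := by
        intro j hj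
        rw [hdd j hj]
        exact hZ j hj
      have hdok : dd ∈ okset := by
        rw [hok, Finset.mem_filter]
        refine ⟨Finset.mem_univ _, fun j hj => ?_⟩
        rw [hdd j hj, ← hZ j hj]
        exact hω j hj
      exact Set.mem_iUnion₂.mpr ⟨dd, hdok, hmem⟩
  have hdisj : (↑okset : Set (Fin n → Fin 3)).PairwiseDisjoint (fun d => C (ext n d)) := by
    intro a _ b _ hab
    refine Set.disjoint_left.mpr fun ω h1 h2 => hab ?_
    funext k
    have hk : (k : ℕ) < n := k.isLt
    have p0 : pathF (x,y) (ext n a) k = pathF (x,y) (ext n b) k :=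
      (h1 k (by omega)).symm.trans (h2 k (by omega))
    have p1 : pathF (x,y) (ext n a) ((k:ℕ)+1) = pathF (x,y) (ext n b) ((k:ℕ)+1) :=
      (h1 ((k:ℕ)+1) (by omega)).symm.trans (h2 ((k:ℕ)+1) (by omega))
    rw [show pathF (x,y) (ext n a) ((k:ℕ)+1) = stepS (pathF (x,y) (ext n a) k) (ext n a k)
        from rfl,
      show pathF (x,y) (ext n b) ((k:ℕ)+1) = stepS (pathF (x,y) (ext n b) k) (ext n b k)
        from rfl, p0] at p1
    have hij := stepS_inj _ p1
    simp only [ext, dif_pos hk] at hij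
    rw [show (⟨(k:ℕ), hk⟩ : Fin n) = k from Fin.eta k hk] at hij
    exact hij
  have hPU : P En = ∑ d ∈ okset, P (C (ext n d)) := by
    have h1 : P En = P U := by
      apply le_antisymm
      · calc P En ≤ P (U ∪ Bad) := measure_mono hEnsub
          _ ≤ P U + P Bad := measure_union_le _ _
          _ = P U := by rw [hBadNull, add_zero]
      · exact measure_mono hUsub
    rw [h1, hU]
    exact measure_biUnion_finset hdisj (fun d _ => hCMeas (ext n d))
  rw [hPU, ENNReal.toReal_sum (fun d _ => measure_ne_top P _)]
  calc ∑ d ∈ okset, (P (C (ext n d))).toReal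
      = ∑ d ∈ okset, ∏ j ∈ Finset.range n, w (pathF (x,y) (ext n d) j).1 (ext n d j) :=
        Finset.sum_congr rfl fun d _ => fibProb P Zhat x y hPath n (ext n d)
    _ = ∑ d : Fin n → Fin 3,
          (if ∀ j ≤ n, m ≤ (pathF (x,y) (ext n d) j).1
           then ∏ j ∈ Finset.range n, w (pathF (x,y) (ext n d) j).1 (ext n d j)
           else 0) := by
        rw [hok, Finset.sum_filter]
    _ = F m n x := sum_paths m n (x, y) hmx

end Measure

end Stmt3Aux

open Stmt3Aux

/-- If the chain `Ẑ = (L̂, R̂)` with the above transition probabilities is started from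
`(x, y)`, then for every `0 ≤ s ≤ x`,
`ℙ[L̂ j ≥ x - s for all j ≥ 0] = (s + 1)/(x + 1)`. -/
theorem stmt_3
    {Ω : Type*} [MeasurableSpace Ω] (P : Measure Ω) [IsProbabilityMeasure P]
    (Zhat : ℕ → Ω → ℕ × ℤ)
    (hMeas : ∀ n, Measurable (Zhat n))
    (x : ℕ) (y : ℤ)
    (hPath : ∀ (n : ℕ) (p : ℕ → ℕ × ℤ), p 0 = (x, y) →
      (P {ω | ∀ j ≤ n, Zhat j ω = p j}).toReal =
        ∏ j ∈ Finset.range n, transProb (p j) (p (j + 1)))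
    (s : ℕ) (hs : s ≤ x) :
    (P {ω | ∀ j : ℕ, x - s ≤ (Zhat j ω).1}).toReal = ((s : ℝ) + 1) / ((x : ℝ) + 1) := by
  classical
  set m := x - s with hm
  have hmx : m ≤ x := Nat.sub_le x s
  set En : ℕ → Set Ω := fun n => {ω | ∀ j ≤ n, m ≤ (Zhat j ω).1} with hEn
  have hEnMeas : ∀ n, MeasurableSet (En n) := by
    intro n
    have h : En n = ⋂ j, ⋂ (_ : j ≤ n), (Zhat j) ⁻¹' {p : ℕ × ℤ | m ≤ p.1} := by
      ext ω; simp [hEn, Set.mem_iInter]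
    rw [h]
    exact MeasurableSet.iInter fun j => MeasurableSet.iInter fun _ => (hMeas j) (measSet _)
  have hEnF : ∀ n : ℕ, (P (En n)).toReal = F m n x :=
    fun n => PEnF P Zhat x y hPath hMeas m hmx n
  have hiInter : {ω | ∀ j : ℕ, m ≤ (Zhat j ω).1} = ⋂ n, En n := by
    ext ω
    simp only [Set.mem_iInter, Set.mem_setOf_eq, hEn]
    constructor
    · intro h n j _; exact h j
    · intro h j; exact h j j le_rfl
  have hmono : Antitone En := fun a b hab ω hω j hj => hω j (le_trans hj hab)
  have hlim := tendsto_measure_iInter_atTop (μ := P) (s := En)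
    (fun n => (hEnMeas n).nullMeasurableSet) hmono ⟨0, measure_ne_top P _⟩
  have hlim' : Filter.Tendsto (fun n => (P (En n)).toReal) Filter.atTop
      (nhds ((P (⋂ n, En n)).toReal)) :=
    (ENNReal.tendsto_toReal (measure_ne_top P _)).comp hlim
  have hlim'' : Filter.Tendsto (fun n => F m n x) Filter.atTop
      (nhds ((P (⋂ n, En n)).toReal)) := by
    convert hlim' using 1
    funext n
    exact (hEnF n).symm
  have hfinal : (P (⋂ n, En n)).toReal = Llim m x :=
    tendsto_nhds_unique hlim'' (F_tendsto m x)
  have hgoal : (P {ω | ∀ j : ℕ, m ≤ (Zhat j ω).1}).toReal = Llim m x := by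
    rw [hiInter]; exact hfinal
  rw [hgoal, Llim_eq m x hmx]
  have hcast : ((m : ℕ) : ℝ) = (x : ℝ) - (s : ℝ) := by
    rw [hm, Nat.cast_sub hs]
  rw [hcast]
  congr 1
  ring
end

section
/- Suppose (f, g) satisfies the LDP recursive equation. Then 0 < f(0) < 1; in particular, a random variable with probability mass function f is not almost surely constant and takes the value 0 with positive probability. -/
/-- Suppose the probability mass functions `f` (symmetric on `ℤ`) and `g`
(supported on the negative integers) satisfy the LDP recursive equation:
for all `x ∈ ℤ` and `y ≤ -1`,
`3 f(x) g(y) = f(x) f(y) + f(x) Σ_{j=1}^{-y-1} g(y+j) g(-j)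
  + 1_{y = -1} (Σ_{j ≥ 0} f(j+x+1) f(-j) + g(-x-1))`.
Then `0 < f 0 < 1`: a random variable with pmf `f` is not a.s. constant and takes
the value `0` with positive probability. -/
theorem stmt_6
    (f g : ℤ → ℝ)
    (hf0 : ∀ x, 0 ≤ f x) (hg0 : ∀ y, 0 ≤ g y)
    (hfsum : HasSum f 1) (hgsum : HasSum g 1)
    (hfsymm : ∀ x, f (-x) = f x)
    (hgsupp : ∀ y : ℤ, 0 ≤ y → g y = 0)
    (hrec : ∀ x y : ℤ, y ≤ -1 →
      3 * f x * g y =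
        f x * f y + f x * (∑ j ∈ Finset.Icc (1 : ℤ) (-y - 1), g (y + j) * g (-j)) +
          (if y = -1 then (∑' j : ℕ, f ((j : ℤ) + x + 1) * f (-(j : ℤ))) + g (-x - 1)
            else 0)) :
    0 < f 0 ∧ f 0 < 1 := by
  have hsf : Summable f := hfsum.summable
  have hinjN : Function.Injective (fun n : ℕ => (n : ℤ)) := fun a b h => Nat.cast_injective h
  have hsfN : Summable (fun n : ℕ => f n) := hsf.comp_injective hinjN
  have hsfNeg : Summable (fun n : ℕ => f (-((n : ℤ) + 1))) :=
    hsf.comp_injective (fun a b h => by omega)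
  have hsfnegN : Summable (fun j : ℕ => f (-(j : ℤ))) :=
    hsf.comp_injective (fun a b h => by omega)
  constructor
  · -- 0 < f 0
    by_contra hcon
    push_neg at hcon
    have hf00 : f 0 = 0 := le_antisymm hcon (hf0 0)
    -- f attains a positive maximum
    have hex : ∃ x, 0 < f x := by
      by_contra hno
      push_neg at hno
      have : f = 0 := funext fun x => le_antisymm (hno x) (hf0 x)
      rw [this] at hfsum
      simpa using hfsum.unique hasSum_zero
    obtain ⟨x1, hx1⟩ := hex
    have hfin : {x : ℤ | f x1 ≤ f x}.Finite := by
      have hev : ∀ᶠ x in Filter.cofinite, f x < f x1 :=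
        hsf.tendsto_cofinite_zero.eventually (eventually_lt_nhds hx1)
      have := Filter.eventually_cofinite.mp hev
      apply this.subset
      intro x hx
      simp only [Set.mem_setOf_eq] at hx ⊢
      exact not_lt.mpr hx
    obtain ⟨x0, hx0mem, hx0max⟩ :=
      Set.exists_max_image _ f hfin ⟨x1, by simp⟩
    simp only [Set.mem_setOf_eq] at hx0mem
    set m := f x0 with hm
    have hmpos : 0 < m := lt_of_lt_of_le hx1 hx0mem
    have hmax : ∀ x, f x ≤ m := by
      intro x
      by_cases hx : f x1 ≤ f x
      · exact hx0max x hx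
      · exact le_trans (le_of_lt (not_le.mp hx)) hx0mem
    -- the key identity at y = -1
    set K : ℝ := 3 * g (-1) - f (-1) with hK
    have key : ∀ x : ℤ, K * f x = (∑' j : ℕ, f ((j : ℤ) + x + 1) * f (-(j : ℤ))) + g (-x - 1) := by
      intro x
      have e := hrec x (-1) le_rfl
      rw [if_pos rfl] at e
      have hempty : Finset.Icc (1 : ℤ) (-(-1 : ℤ) - 1) = ∅ := by
        apply Finset.Icc_eq_empty; norm_num
      rw [hempty, Finset.sum_empty] at e
      rw [hK]; linarith
    -- summability of the T-terms
    have hTsum : ∀ x : ℤ, Summable (fun j : ℕ => f ((j : ℤ) + x + 1) * f (-(j : ℤ))) := by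
      intro x
      apply Summable.of_nonneg_of_le (fun j => mul_nonneg (hf0 _) (hf0 _))
        (fun j => mul_le_mul_of_nonneg_right (hmax _) (hf0 _)) (hsfnegN.mul_left m)
    -- sums of f over ℕ parts
    have htot : (∑' n : ℕ, f n) + (∑' n : ℕ, f (-((n : ℤ) + 1))) = 1 := by
      rw [← tsum_of_nat_of_neg_add_one hsfN hsfNeg]
      exact hfsum.tsum_eq
    have hshift : (∑' n : ℕ, f (-((n : ℤ) + 1))) = ∑' n : ℕ, f n := by
      have h1 : (∑' n : ℕ, f (-((n : ℤ) + 1))) = ∑' n : ℕ, f ((n : ℤ) + 1) := by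
        apply tsum_congr; intro n; exact hfsymm _
      have h2 : (∑' n : ℕ, f n) = f 0 + ∑' n : ℕ, f ((n : ℤ) + 1) := by
        rw [Summable.tsum_eq_zero_add hsfN]
        push_cast
        norm_num
      rw [h1, h2, hf00, zero_add]
    have hA : (∑' n : ℕ, f n) = 1 / 2 := by
      rw [hshift] at htot; linarith
    have hAneg : (∑' j : ℕ, f (-(j : ℤ))) = 1 / 2 := by
      rw [← hA]; apply tsum_congr; intro n; exact hfsymm _
    -- sum of g over negative integers is 1
    have hsgNeg : Summable (fun n : ℕ => g (-((n : ℤ) + 1))) :=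
      hgsum.summable.comp_injective (fun a b h => by omega)
    have hgNeg : (∑' n : ℕ, g (-((n : ℤ) + 1))) = 1 := by
      have hsgN : Summable (fun n : ℕ => g n) := hgsum.summable.comp_injective hinjN
      have h0 : (∑' n : ℕ, g n) = 0 := by
        have hz : ∀ n : ℕ, g n = 0 := fun n => hgsupp _ (Int.natCast_nonneg n)
        rw [tsum_congr hz]; exact tsum_zero
      have := tsum_of_nat_of_neg_add_one hsgN hsgNeg
      rw [hgsum.tsum_eq, h0, zero_add] at this
      exact this.symm
    -- sum the key identity over x = n : ℕ to get K ≥ 2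
    have hKf : Summable (fun n : ℕ => K * f n) := hsfN.mul_left K
    have hgneg' : Summable (fun n : ℕ => g (-(n : ℤ) - 1)) := by
      have : (fun n : ℕ => g (-(n : ℤ) - 1)) = fun n : ℕ => g (-((n : ℤ) + 1)) := by
        funext n; ring_nf
      rw [this]; exact hsgNeg
    have hTn : Summable (fun n : ℕ => ∑' j : ℕ, f ((j : ℤ) + (n : ℤ) + 1) * f (-(j : ℤ))) := by
      have : (fun n : ℕ => ∑' j : ℕ, f ((j : ℤ) + (n : ℤ) + 1) * f (-(j : ℤ)))
          = fun n : ℕ => K * f n - g (-(n : ℤ) - 1) := by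
        funext n
        have := key (n : ℤ)
        linarith
      rw [this]
      exact hKf.sub hgneg'
    have hsum1 : (∑' n : ℕ, K * f n)
        = (∑' n : ℕ, ∑' j : ℕ, f ((j : ℤ) + (n : ℤ) + 1) * f (-(j : ℤ)))
          + ∑' n : ℕ, g (-(n : ℤ) - 1) := by
      rw [← Summable.tsum_add hTn hgneg']
      apply tsum_congr
      intro n
      exact key (n : ℤ)
    have hTnonneg : 0 ≤ ∑' n : ℕ, ∑' j : ℕ, f ((j : ℤ) + (n : ℤ) + 1) * f (-(j : ℤ)) :=
      tsum_nonneg fun n => tsum_nonneg fun j => mul_nonneg (hf0 _) (hf0 _)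
    have hgval : (∑' n : ℕ, g (-(n : ℤ) - 1)) = 1 := by
      rw [← hgNeg]; apply tsum_congr; intro n; ring_nf
    have hKA : (∑' n : ℕ, K * f n) = K * (1 / 2) := by
      rw [tsum_mul_left, hA]
    have hKge : 2 ≤ K := by
      rw [hKA, hgval] at hsum1
      linarith
    -- now evaluate at a point z ≤ -1 where f z = m
    obtain ⟨z, hz1, hzm⟩ : ∃ z : ℤ, z ≤ -1 ∧ f z = m := by
      rcases lt_trichotomy x0 0 with h | h | h
      · exact ⟨x0, by omega, rfl⟩
      · exfalso; rw [hm, h, hf00] at hmpos; exact lt_irrefl 0 hmpos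
      · exact ⟨-x0, by omega, hfsymm x0⟩
    have hkeyz := key z
    have hgz : g (-z - 1) = 0 := hgsupp _ (by omega)
    have hbound : (∑' j : ℕ, f ((j : ℤ) + z + 1) * f (-(j : ℤ))) ≤ m * (1 / 2) := by
      calc (∑' j : ℕ, f ((j : ℤ) + z + 1) * f (-(j : ℤ)))
          ≤ ∑' j : ℕ, m * f (-(j : ℤ)) := by
            apply Summable.tsum_le_tsum _ (hTsum z) (hsfnegN.mul_left m)
            intro j
            exact mul_le_mul_of_nonneg_right (hmax _) (hf0 _)
        _ = m * (1 / 2) := by rw [tsum_mul_left, hAneg]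
    rw [hgz, add_zero, hzm] at hkeyz
    nlinarith
  · -- f 0 < 1
    have hle : f 0 ≤ 1 := le_hasSum hfsum 0 (fun i _ => hf0 i)
    rcases lt_or_eq_of_le hle with h | h
    · exact h
    exfalso
    have hzero : ∀ x : ℤ, x ≠ 0 → f x = 0 := by
      intro x hx
      have hsum : f 0 + f x ≤ 1 := by
        have := sum_le_hasSum ({0, x} : Finset ℤ) (fun i _ => hf0 i) hfsum
        rwa [Finset.sum_pair (Ne.symm hx)] at this
      have := hf0 x
      rw [h] at hsum
      linarith
    have hf01 : f 0 = 1 := h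
    -- all values of g vanish, by strong induction
    have hgz : ∀ n : ℕ, g (-((n : ℤ) + 1)) = 0 := by
      intro n
      induction n using Nat.strong_induction_on with
      | _ n ih =>
        rcases Nat.eq_zero_or_pos n with hn | hn
        · -- base case: y = -1
          subst hn
          have e := hrec 0 (-1) le_rfl
          rw [if_pos rfl] at e
          have hempty : Finset.Icc (1 : ℤ) (-(-1 : ℤ) - 1) = ∅ := by
            apply Finset.Icc_eq_empty; norm_num
          rw [hempty, Finset.sum_empty] at e
          have hts : (∑' j : ℕ, f ((j : ℤ) + 0 + 1) * f (-(j : ℤ))) = 0 := by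
            have : ∀ j : ℕ, f ((j : ℤ) + 0 + 1) * f (-(j : ℤ)) = 0 := by
              intro j
              rw [hzero ((j : ℤ) + 0 + 1) (by omega), zero_mul]
            rw [tsum_congr this, tsum_zero]
          rw [hts, hf01, hzero (-1) (by omega)] at e
          norm_num at e
          show g (-((0:ℕ) + 1 : ℤ)) = 0
          norm_num
          linarith
        · -- inductive step: y = -(n+1), n ≥ 1
          set y : ℤ := -((n : ℤ) + 1) with hy
          have hyle : y ≤ -1 := by omega
          have e := hrec 0 y hyle
          have hyne : y ≠ -1 := by omega
          rw [if_neg hyne] at e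
          have hfy : f y = 0 := hzero y (by omega)
          have hsum0 : (∑ j ∈ Finset.Icc (1 : ℤ) (-y - 1), g (y + j) * g (-j)) = 0 := by
            apply Finset.sum_eq_zero
            intro j hj
            rw [Finset.mem_Icc] at hj
            have hjn : 1 ≤ j ∧ j ≤ (n : ℤ) := by constructor <;> omega
            have : g (y + j) = 0 := by
              have hm : ∃ k : ℕ, (k : ℤ) = -(y + j) - 1 ∧ k < n := by
                refine ⟨(-(y + j) - 1).toNat, ?_, ?_⟩ <;> omega
              obtain ⟨k, hk, hkn⟩ := hm
              have := ih k hkn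
              have heq : -((k : ℤ) + 1) = y + j := by omega
              rwa [heq] at this
            rw [this, zero_mul]
          rw [hfy, hsum0, hf01] at e
          norm_num at e
          linarith [e]
    have hgall : g = 0 := by
      funext y
      rcases le_or_gt 0 y with hy | hy
      · exact hgsupp y hy
      · have : ∃ n : ℕ, y = -((n : ℤ) + 1) := ⟨(-y - 1).toNat, by omega⟩
        obtain ⟨n, rfl⟩ := this
        exact hgz n
    rw [hgall] at hgsum
    simpa using hgsum.unique hasSum_zero
end

section
/- Suppose (f, g) satisfies the LDP recursive equation. Set κ = 3 + f(0), c(t) = f(0) − (κ/2)·e^{it}, and F̂⁻(t) = F⁻(t) + c(t). Then for every t ∈ ℝ one has Ḡ(t) = −F(t)·F̂⁻(t), and F̂⁻(t) satisfies the quadratic equation F(t)²·F̂⁻(t)² + (3F(t) − 1)·F̂⁻(t) + F(t) = 0. -/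
open Complex

private lemma aux_summable_mul_unit {ι : Type*} (h : ι → ℝ) (hpos : ∀ i, 0 ≤ h i)
    (hs : Summable h) (w : ι → ℂ) (hw : ∀ i, ‖w i‖ = 1) :
    Summable fun i => (h i : ℂ) * w i := by
  apply Summable.of_norm
  have : (fun i => ‖(h i : ℂ) * w i‖) = h := funext fun i => by
    rw [norm_mul, hw, mul_one, Complex.norm_real, Real.norm_of_nonneg (hpos i)]
  rw [this]; exact hs

private def auxNegE : ℤ ≃ ℤ := Function.Involutive.toPerm (fun x => -x - 1) (fun x => by ring)

private def auxE : ℤ × ℕ ≃ ℤ × ℕ where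
  toFun p := ((p.2 : ℤ) + p.1 + 1, p.2)
  invFun p := (p.1 - (p.2 : ℤ) - 1, p.2)
  left_inv p := by cases p; simp [Prod.ext_iff]; ring
  right_inv p := by cases p; simp [Prod.ext_iff]; ring

/-- Suppose `(f, g)` satisfies the LDP recursive equation, and define the characteristic
functions `F(t) = Σ_{x ∈ ℤ} f(x) e^{itx}`, `F⁻(t) = Σ_{x ≤ -1} f(x) e^{itx}`,
`Ḡ(t) = Σ_{y ≥ 1} g(-y) e^{ity}`.  With `κ = 3 + f 0`, `c(t) = f 0 - (κ/2) e^{it}`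
and `F̂⁻ = F⁻ + c`, one has `Ḡ(t) = -F(t) F̂⁻(t)` and
`F(t)² F̂⁻(t)² + (3 F(t) - 1) F̂⁻(t) + F(t) = 0` for every real `t`. -/
theorem stmt_7
    (f g : ℤ → ℝ)
    (hf0 : ∀ x, 0 ≤ f x) (hg0 : ∀ y, 0 ≤ g y)
    (hfsum : HasSum f 1) (hgsum : HasSum g 1)
    (hfsymm : ∀ x, f (-x) = f x)
    (hgsupp : ∀ y : ℤ, 0 ≤ y → g y = 0)
    (hrec : ∀ x y : ℤ, y ≤ -1 →
      3 * f x * g y =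
        f x * f y + f x * (∑ j ∈ Finset.Icc (1 : ℤ) (-y - 1), g (y + j) * g (-j)) +
          (if y = -1 then (∑' j : ℕ, f ((j : ℤ) + x + 1) * f (-(j : ℤ))) + g (-x - 1)
            else 0))
    (F Fminus Gbar : ℝ → ℂ)
    (hF : ∀ t : ℝ, F t = ∑' x : ℤ, (f x : ℂ) * Complex.exp (Complex.I * (t : ℂ) * (x : ℂ)))
    (hFminus : ∀ t : ℝ, Fminus t =
      ∑' k : ℕ, (f (-(k : ℤ) - 1) : ℂ) * Complex.exp (Complex.I * (t : ℂ) * (-(k : ℂ) - 1)))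
    (hGbar : ∀ t : ℝ, Gbar t =
      ∑' k : ℕ, (g (-(k : ℤ) - 1) : ℂ) * Complex.exp (Complex.I * (t : ℂ) * ((k : ℂ) + 1)))
    (c Fhat : ℝ → ℂ)
    (hc : ∀ t : ℝ, c t =
      (f 0 : ℂ) - ((3 + f 0 : ℝ) : ℂ) / 2 * Complex.exp (Complex.I * (t : ℂ)))
    (hFhat : ∀ t : ℝ, Fhat t = Fminus t + c t) :
    ∀ t : ℝ, Gbar t = -(F t) * Fhat t ∧
      (F t) ^ 2 * (Fhat t) ^ 2 + (3 * F t - 1) * Fhat t + F t = 0 := by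
  -- ## Real preliminaries (t-independent)
  have hfsummable : Summable f := hfsum.summable
  have hgsummable : Summable g := hgsum.summable
  have hfle : ∀ x, f x ≤ 1 := fun x => le_hasSum hfsum x fun y _ => hf0 y
  have hfnatsummable : Summable (fun n : ℕ => f (n : ℤ)) :=
    hfsummable.comp_injective fun a b hab => by exact_mod_cast hab
  have hfnegnat : Summable (fun j : ℕ => f (-(j : ℤ))) :=
    hfsummable.comp_injective fun a b hab => by omega
  have hgnegnat : Summable (fun k : ℕ => g (-(k : ℤ) - 1)) :=
    hgsummable.comp_injective fun a b hab => by omega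
  -- sum of f over the nonnegative integers
  have hP : HasSum (fun n : ℕ => f (n : ℤ)) ((1 + f 0) / 2) := by
    set P := ∑' n : ℕ, f (n : ℤ) with hPdef
    have hPs : HasSum (fun n : ℕ => f (n : ℤ)) P := hfnatsummable.hasSum
    have hshift : HasSum (fun n : ℕ => f ((n + 1 : ℕ) : ℤ)) (P - f 0) := by
      refine (hasSum_nat_add_iff (f := fun n : ℕ => f (n : ℤ)) 1).2 ?_
      rw [Finset.sum_range_one]
      have : P - f 0 + f ((0 : ℕ) : ℤ) = P := by norm_num
      rw [this]; exact hPs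
    have hneg : HasSum (fun n : ℕ => f (-((n : ℤ) + 1))) (P - f 0) := by
      refine hshift.congr_fun fun n => ?_
      rw [hfsymm]; norm_num
    have htot : HasSum f (P + (P - f 0)) := HasSum.of_nat_of_neg_add_one hPs hneg
    have h1 : P + (P - f 0) = 1 := htot.unique hfsum
    have : P = (1 + f 0) / 2 := by linarith
    rwa [this] at hPs
  have hPneg : HasSum (fun j : ℕ => f (-(j : ℤ))) ((1 + f 0) / 2) :=
    hP.congr_fun fun n => hfsymm _
  -- the inner tsum A x
  set A : ℤ → ℝ := fun x => ∑' j : ℕ, f ((j : ℤ) + x + 1) * f (-(j : ℤ)) with hAdef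
  have hAsummable : ∀ x, Summable (fun j : ℕ => f ((j : ℤ) + x + 1) * f (-(j : ℤ))) := by
    intro x
    refine Summable.of_nonneg_of_le (fun j => mul_nonneg (hf0 _) (hf0 _)) (fun j => ?_) hfnegnat
    calc f ((j : ℤ) + x + 1) * f (-(j : ℤ)) ≤ 1 * f (-(j : ℤ)) :=
          mul_le_mul_of_nonneg_right (hfle _) (hf0 _)
      _ = f (-(j : ℤ)) := one_mul _
  have hA : ∀ x, HasSum (fun j : ℕ => f ((j : ℤ) + x + 1) * f (-(j : ℤ))) (A x) :=
    fun x => (hAsummable x).hasSum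
  -- the y = -1 recursion, pointwise in x
  have hrec1 : ∀ x, A x + g (-x - 1) = f x * (3 * g (-1) - f (-1)) := by
    intro x
    have h := hrec x (-1) le_rfl
    have hicc : Finset.Icc (1 : ℤ) (-(-1 : ℤ) - 1) = ∅ := by
      apply Finset.Icc_eq_empty; norm_num
    rw [hicc] at h
    simp only [Finset.sum_empty, mul_zero, if_true] at h
    have hAx : (∑' j : ℕ, f ((j : ℤ) + x + 1) * f (-(j : ℤ))) = A x := rfl
    rw [hAx] at h
    linarith
  -- sum of A over ℤ
  have hAsum : HasSum A ((1 + f 0) / 2) := by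
    have hmuls : Summable (fun p : ℤ × ℕ => f p.1 * f (-(p.2 : ℤ))) := by
      apply Summable.mul_of_nonneg hfsummable hfnegnat
      · intro x; exact hf0 x
      · intro j; exact hf0 _
    have hF0 : HasSum (fun p : ℤ × ℕ => f p.1 * f (-(p.2 : ℤ))) (1 * ((1 + f 0) / 2)) :=
      HasSum.mul (f := f) (g := fun j : ℕ => f (-(j : ℤ))) hfsum hPneg hmuls
    have hcomp : HasSum ((fun p : ℤ × ℕ => f p.1 * f (-(p.2 : ℤ))) ∘ auxE)
        (1 * ((1 + f 0) / 2)) := (Equiv.hasSum_iff auxE).2 hF0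
    have hcomp' : HasSum (fun p : ℤ × ℕ => f ((p.2 : ℤ) + p.1 + 1) * f (-(p.2 : ℤ)))
        (1 * ((1 + f 0) / 2)) := hcomp.congr_fun fun p => rfl
    have := HasSum.prod_fiberwise hcomp' hA
    simpa using this
  have hgflip : HasSum (fun x : ℤ => g (-x - 1)) 1 := by
    have : HasSum (g ∘ auxNegE) 1 := (Equiv.hasSum_iff auxNegE).2 hgsum
    exact this.congr_fun fun x => rfl
  -- the constant c₀
  set c0 : ℝ := (3 + f 0) / 2 with hc0def
  have hc0 : 3 * g (-1) - f (-1) = c0 := by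
    have hlhs : HasSum (fun x => A x + g (-x - 1)) ((1 + f 0) / 2 + 1) := hAsum.add hgflip
    have hrhs : HasSum (fun x => f x * (3 * g (-1) - f (-1))) (1 * (3 * g (-1) - f (-1))) :=
      hfsum.mul_right _
    have := (hrhs.congr_fun fun x => hrec1 x).unique hlhs
    rw [hc0def]; linarith
  have hkey : ∀ x, g (-x - 1) = c0 * f x - A x := by
    intro x; have := hrec1 x; rw [hc0] at this; linarith
  -- a positive value of f
  obtain ⟨x₀, hx₀⟩ : ∃ x, 0 < f x := by
    by_contra h
    push_neg at h
    have hz : f = fun _ => 0 := funext fun x => le_antisymm (h x) (hf0 x)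
    rw [hz] at hfsum
    simpa using hfsum.unique hasSum_zero
  -- the recursion divided by f x₀, for y = -(k+1)
  have hrecy : ∀ k : ℕ, 3 * g (-(k : ℤ) - 1) =
      f (-(k : ℤ) - 1) +
        (∑ j ∈ Finset.Icc (1 : ℤ) (k : ℤ), g ((-(k : ℤ) - 1) + j) * g (-j)) +
        (if k = 0 then c0 else 0) := by
    intro k
    have h := hrec x₀ (-(k : ℤ) - 1) (by omega)
    have hbound : -(-(k : ℤ) - 1) - 1 = (k : ℤ) := by ring
    rw [hbound] at h
    have hA0 : (∑' j : ℕ, f ((j : ℤ) + x₀ + 1) * f (-(j : ℤ))) = A x₀ := rfl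
    rw [hA0] at h
    set S := ∑ j ∈ Finset.Icc (1 : ℤ) (k : ℤ), g ((-(k : ℤ) - 1) + j) * g (-j) with hSdef
    by_cases hk : k = 0
    · subst hk
      have hcond : (-((0 : ℕ) : ℤ) - 1 : ℤ) = -1 := by norm_num
      rw [if_pos hcond] at h
      have hc0x : A x₀ + g (-x₀ - 1) = f x₀ * c0 := by rw [hrec1, hc0]
      rw [if_pos rfl]
      have h2 : f x₀ * (3 * g (-((0 : ℕ) : ℤ) - 1)) =
          f x₀ * (f (-((0 : ℕ) : ℤ) - 1) + S + c0) := by nlinarith [h, hc0x]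
      have := mul_left_cancel₀ (ne_of_gt hx₀) h2
      linarith
    · have hcond : ¬(-(k : ℤ) - 1 = -1) := by omega
      rw [if_neg hcond] at h
      rw [if_neg hk]
      have h2 : f x₀ * (3 * g (-(k : ℤ) - 1)) =
          f x₀ * (f (-(k : ℤ) - 1) + S + 0) := by nlinarith [h]
      have := mul_left_cancel₀ (ne_of_gt hx₀) h2
      linarith
  -- ## Complex part, for fixed t
  intro t
  set z : ℂ := Complex.exp (Complex.I * (t : ℂ)) with hzdef
  have hz : z ≠ 0 := Complex.exp_ne_zero _
  have hznorm : ‖z‖ = 1 := by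
    rw [hzdef]
    simp [Complex.norm_exp]
  have hzx : ∀ x : ℤ, Complex.exp (Complex.I * (t : ℂ) * (x : ℂ)) = z ^ x := fun x => by
    rw [show Complex.I * (t : ℂ) * (x : ℂ) = (x : ℂ) * (Complex.I * (t : ℂ)) by ring,
      Complex.exp_int_mul]
  have hznormz : ∀ x : ℤ, ‖z ^ x‖ = 1 := fun x => by rw [norm_zpow, hznorm, one_zpow]
  have hF' : HasSum (fun x : ℤ => (f x : ℂ) * z ^ x) (F t) := by
    have hs : Summable (fun x : ℤ => (f x : ℂ) * z ^ x) :=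
      aux_summable_mul_unit f hf0 hfsummable _ hznormz
    have he : (∑' x : ℤ, (f x : ℂ) * Complex.exp (Complex.I * (t : ℂ) * (x : ℂ)))
        = ∑' x : ℤ, (f x : ℂ) * z ^ x := tsum_congr fun x => by rw [hzx]
    rw [hF t, he]
    exact hs.hasSum
  have hFm' : HasSum (fun k : ℕ => (f (-(k : ℤ) - 1) : ℂ) * z ^ (-(k : ℤ) - 1)) (Fminus t) := by
    have hs : Summable (fun k : ℕ => (f (-(k : ℤ) - 1) : ℂ) * z ^ (-(k : ℤ) - 1)) :=
      aux_summable_mul_unit (fun k : ℕ => f (-(k : ℤ) - 1)) (fun k => hf0 _)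
        (hfsummable.comp_injective fun a b hab => by omega) _ (fun k => hznormz _)
    have he : (∑' k : ℕ, (f (-(k : ℤ) - 1) : ℂ) * Complex.exp (Complex.I * (t : ℂ) * (-(k : ℂ) - 1)))
        = ∑' k : ℕ, (f (-(k : ℤ) - 1) : ℂ) * z ^ (-(k : ℤ) - 1) := by
      refine tsum_congr fun k => ?_
      rw [show (-(k : ℂ) - 1) = ((-(k : ℤ) - 1 : ℤ) : ℂ) by push_cast; ring, hzx]
    rw [hFminus t, he]
    exact hs.hasSum
  have hGb' : HasSum (fun k : ℕ => (g (-(k : ℤ) - 1) : ℂ) * z ^ ((k : ℤ) + 1)) (Gbar t) := by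
    have hs : Summable (fun k : ℕ => (g (-(k : ℤ) - 1) : ℂ) * z ^ ((k : ℤ) + 1)) :=
      aux_summable_mul_unit (fun k : ℕ => g (-(k : ℤ) - 1)) (fun k => hg0 _)
        hgnegnat _ (fun k => hznormz _)
    have he : (∑' k : ℕ, (g (-(k : ℤ) - 1) : ℂ) * Complex.exp (Complex.I * (t : ℂ) * ((k : ℂ) + 1)))
        = ∑' k : ℕ, (g (-(k : ℤ) - 1) : ℂ) * z ^ ((k : ℤ) + 1) := by
      refine tsum_congr fun k => ?_
      rw [show ((k : ℂ) + 1) = (((k : ℤ) + 1 : ℤ) : ℂ) by push_cast; ring, hzx]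
    rw [hGbar t, he]
    exact hs.hasSum
  -- Gbar as a sum over ℤ
  have hGB_Z : HasSum (fun x : ℤ => (g (-x - 1) : ℂ) * z ^ (x + 1)) (Gbar t) := by
    have hinj : Function.Injective (fun k : ℕ => (k : ℤ)) := fun a b hab => by simpa using hab
    have hvan : ∀ x : ℤ, x ∉ Set.range (fun k : ℕ => (k : ℤ)) →
        (g (-x - 1) : ℂ) * z ^ (x + 1) = 0 := by
      intro x hx
      have hxneg : x < 0 := by
        by_contra hge
        exact hx ⟨x.toNat, by simp; omega⟩
      rw [hgsupp (-x - 1) (by omega)]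
      simp
    exact (hinj.hasSum_iff hvan).1 hGb'
  -- Σ_j f(-j) z^{-j} = f 0 + Fminus t
  have hQ : HasSum (fun j : ℕ => (f (-(j : ℤ)) : ℂ) * z ^ (-(j : ℤ))) ((f 0 : ℂ) + Fminus t) := by
    have hshift : HasSum (fun j : ℕ =>
        (f (-((j + 1 : ℕ) : ℤ)) : ℂ) * z ^ (-((j + 1 : ℕ) : ℤ))) (Fminus t) := by
      refine hFm'.congr_fun fun j => ?_
      have harg : (-((j + 1 : ℕ) : ℤ)) = (-(j : ℤ) - 1) := by push_cast; ring
      rw [harg]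
    have := HasSum.zero_add
      (f := fun n : ℕ => (f (-(n : ℤ)) : ℂ) * z ^ (-(n : ℤ))) hshift
    simpa using this
  -- Σ_x A x z^{x+1} = F t * (f 0 + Fminus t)
  have hB3 : HasSum (fun x : ℤ => (A x : ℂ) * z ^ (x + 1)) (F t * ((f 0 : ℂ) + Fminus t)) := by
    have hsumm : Summable (fun p : ℤ × ℕ =>
        ((f p.1 : ℂ) * z ^ p.1) * ((f (-(p.2 : ℤ)) : ℂ) * z ^ (-(p.2 : ℤ)))) := by
      apply summable_mul_of_summable_norm
        (f := fun x : ℤ => (f x : ℂ) * z ^ x)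
        (g := fun j : ℕ => (f (-(j : ℤ)) : ℂ) * z ^ (-(j : ℤ)))
      · have he : (fun x : ℤ => ‖(f x : ℂ) * z ^ x‖) = f := funext fun x => by
          rw [norm_mul, hznormz, mul_one, Complex.norm_real, Real.norm_of_nonneg (hf0 x)]
        rw [he]; exact hfsummable
      · have he : (fun j : ℕ => ‖(f (-(j : ℤ)) : ℂ) * z ^ (-(j : ℤ))‖)
            = fun j : ℕ => f (-(j : ℤ)) := funext fun j => by
          rw [norm_mul, hznormz, mul_one, Complex.norm_real, Real.norm_of_nonneg (hf0 _)]
        rw [he]; exact hfnegnat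
    have hF0 : HasSum (fun p : ℤ × ℕ =>
        ((f p.1 : ℂ) * z ^ p.1) * ((f (-(p.2 : ℤ)) : ℂ) * z ^ (-(p.2 : ℤ))))
        (F t * ((f 0 : ℂ) + Fminus t)) :=
      HasSum.mul (f := fun x : ℤ => (f x : ℂ) * z ^ x)
        (g := fun j : ℕ => (f (-(j : ℤ)) : ℂ) * z ^ (-(j : ℤ))) hF' hQ hsumm
    have hcomp : HasSum ((fun p : ℤ × ℕ =>
        ((f p.1 : ℂ) * z ^ p.1) * ((f (-(p.2 : ℤ)) : ℂ) * z ^ (-(p.2 : ℤ)))) ∘ auxE)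
        (F t * ((f 0 : ℂ) + Fminus t)) := (Equiv.hasSum_iff auxE).2 hF0
    have hcomp' : HasSum (fun p : ℤ × ℕ =>
        ((f ((p.2 : ℤ) + p.1 + 1) : ℂ) * z ^ ((p.2 : ℤ) + p.1 + 1)) *
          ((f (-(p.2 : ℤ)) : ℂ) * z ^ (-(p.2 : ℤ))))
        (F t * ((f 0 : ℂ) + Fminus t)) := hcomp.congr_fun fun p => rfl
    refine HasSum.prod_fiberwise hcomp' fun x => ?_
    have hfib : HasSum (fun j : ℕ => ((f ((j : ℤ) + x + 1) * f (-(j : ℤ)) : ℝ) : ℂ))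
        ((A x : ℂ)) := Complex.hasSum_ofReal.2 (hA x)
    have hmr := hfib.mul_right (z ^ (x + 1))
    refine hmr.congr_fun fun j => ?_
    have hzz : z ^ ((j : ℤ) + x + 1) * z ^ (-(j : ℤ)) = z ^ (x + 1) := by
      rw [← zpow_add₀ hz]; congr 1; ring
    rw [Complex.ofReal_mul, mul_mul_mul_comm, hzz]
  -- Step B conclusion
  have hFx1 : HasSum (fun x : ℤ => (f x : ℂ) * z ^ (x + 1)) (F t * z) := by
    have hmr := hF'.mul_right z
    refine hmr.congr_fun fun x => ?_
    rw [zpow_add₀ hz, zpow_one, mul_assoc]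
  have hGbar_eq : Gbar t = (c0 : ℂ) * (F t * z) - F t * ((f 0 : ℂ) + Fminus t) := by
    have hrhs : HasSum
        (fun x : ℤ => (c0 : ℂ) * ((f x : ℂ) * z ^ (x + 1)) - (A x : ℂ) * z ^ (x + 1))
        ((c0 : ℂ) * (F t * z) - F t * ((f 0 : ℂ) + Fminus t)) := (hFx1.mul_left _).sub hB3
    have hpt : ∀ x : ℤ, (g (-x - 1) : ℂ) * z ^ (x + 1)
        = (c0 : ℂ) * ((f x : ℂ) * z ^ (x + 1)) - (A x : ℂ) * z ^ (x + 1) := by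
      intro x
      rw [hkey x]
      push_cast
      ring
    exact hGB_Z.unique (hrhs.congr_fun fun x => hpt x)
  have hpart1 : Gbar t = -(F t) * Fhat t := by
    rw [hGbar_eq, hFhat t, hc t, ← hzdef, hc0def]
    push_cast
    ring
  -- Step C : the quadratic equation
  have hL : HasSum (fun k : ℕ => (3 : ℂ) * ((g (-(k : ℤ) - 1) : ℂ) * z ^ ((k : ℤ) + 1)))
      (3 * Gbar t) := hGb'.mul_left 3
  have hFpos : HasSum (fun n : ℕ => (f (n : ℤ) : ℂ) * z ^ (n : ℤ)) (F t - Fminus t) := by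
    have hs : Summable (fun n : ℕ => (f (n : ℤ) : ℂ) * z ^ (n : ℤ)) :=
      aux_summable_mul_unit (fun n : ℕ => f (n : ℤ)) (fun n => hf0 _) hfnatsummable _
        (fun n => hznormz _)
    obtain ⟨S0, hS0⟩ := hs
    have hneg : HasSum (fun n : ℕ => (f (-((n : ℤ) + 1)) : ℂ) * z ^ (-((n : ℤ) + 1)))
        (Fminus t) := by
      refine hFm'.congr_fun fun n => ?_
      rw [show (-((n : ℤ) + 1)) = (-(n : ℤ) - 1) from by ring]
    have htot : HasSum (fun x : ℤ => (f x : ℂ) * z ^ x) (S0 + Fminus t) :=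
      HasSum.of_nat_of_neg_add_one (f := fun x : ℤ => (f x : ℂ) * z ^ x) hS0 hneg
    have hval : S0 = F t - Fminus t := eq_sub_of_add_eq (htot.unique hF')
    rwa [hval] at hS0
  have hR1 : HasSum (fun k : ℕ => (f (-(k : ℤ) - 1) : ℂ) * z ^ ((k : ℤ) + 1))
      (F t - Fminus t - (f 0 : ℂ)) := by
    have hsh : HasSum (fun n : ℕ => (f (((n + 1 : ℕ)) : ℤ) : ℂ) * z ^ (((n + 1 : ℕ)) : ℤ))
        (F t - Fminus t - (f 0 : ℂ)) := by
      refine (hasSum_nat_add_iff (f := fun n : ℕ => (f (n : ℤ) : ℂ) * z ^ (n : ℤ)) 1).2 ?_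
      rw [Finset.sum_range_one]
      simp only [Nat.cast_zero, zpow_zero, mul_one]
      have : F t - Fminus t - (f 0 : ℂ) + (f (0 : ℤ) : ℂ) = F t - Fminus t := by ring
      rw [this]
      exact hFpos
    refine hsh.congr_fun fun k => ?_
    rw [show (((k + 1 : ℕ)) : ℤ) = (k : ℤ) + 1 from by push_cast; ring,
      show (-(k : ℤ) - 1) = -((k : ℤ) + 1) from by ring, hfsymm]
  -- R2 : the Cauchy product
  set a : ℕ → ℂ := fun m => (g (-(m : ℤ) - 1) : ℂ) * z ^ ((m : ℤ) + 1) with hadef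
  set Sterm : ℕ → ℂ := fun k =>
    ((∑ j ∈ Finset.Icc (1 : ℤ) (k : ℤ), g ((-(k : ℤ) - 1) + j) * g (-j) : ℝ) : ℂ) *
      z ^ ((k : ℤ) + 1) with hStermdef
  have hanorm : Summable (fun m => ‖a m‖) := by
    have he : (fun m => ‖a m‖) = fun m : ℕ => g (-(m : ℤ) - 1) := funext fun m => by
      rw [hadef, norm_mul, hznormz, mul_one, Complex.norm_real, Real.norm_of_nonneg (hg0 _)]
    rw [he]; exact hgnegnat
  have hTsummable : Summable (fun n : ℕ => ∑ kl ∈ Finset.HasAntidiagonal.antidiagonal n, a kl.1 * a kl.2) :=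
    (summable_norm_sum_mul_antidiagonal_of_summable_norm hanorm hanorm).of_norm
  have hT : HasSum (fun n : ℕ => ∑ kl ∈ Finset.HasAntidiagonal.antidiagonal n, a kl.1 * a kl.2)
      (Gbar t ^ 2) := by
    have h1 := hTsummable.hasSum
    rwa [← tsum_mul_tsum_eq_tsum_sum_antidiagonal_of_summable_norm hanorm hanorm,
      hGb'.tsum_eq, ← sq] at h1
  have hTk : ∀ n : ℕ, Sterm (n + 1) = ∑ kl ∈ Finset.HasAntidiagonal.antidiagonal n, a kl.1 * a kl.2 := by
    intro n
    rw [Finset.Nat.sum_antidiagonal_eq_sum_range_succ_mk]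
    rw [hStermdef]
    simp only []
    have hc1 : (((n + 1 : ℕ)) : ℤ) = (n : ℤ) + 1 := by push_cast; ring
    rw [hc1]
    have hIcc : Finset.Icc (1 : ℤ) ((n : ℤ) + 1)
        = Finset.map ⟨fun i : ℕ => (i : ℤ) + 1, @id (Function.Injective (fun i : ℕ => (i : ℤ) + 1))
              (fun p q hpq => by simpa using hpq)⟩
            (Finset.range (n + 1)) := by
      ext m
      simp only [Finset.mem_Icc, Finset.mem_map, Finset.mem_range,
        Function.Embedding.coeFn_mk]
      constructor
      · rintro ⟨h1, h2⟩
        exact ⟨(m - 1).toNat, by omega, by omega⟩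
      · rintro ⟨i, hi, rfl⟩
        omega
    rw [hIcc, Finset.sum_map]
    simp only [Function.Embedding.coeFn_mk]
    rw [Complex.ofReal_sum, Finset.sum_mul]
    refine Finset.sum_congr rfl fun i hi => ?_
    have hile : i ≤ n := by
      have := Finset.mem_range.1 hi; omega
    rw [hadef]
    simp only []
    rw [Nat.cast_sub hile]
    rw [show (-((n : ℤ) + 1) - 1) + ((i : ℤ) + 1) = -(((n : ℤ) - (i : ℤ))) - 1 from by ring]
    rw [show (-((i : ℤ) + 1)) = -(i : ℤ) - 1 from by ring]
    rw [mul_mul_mul_comm, ← zpow_add₀ hz]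
    rw [show ((i : ℤ) + 1) + (((n : ℤ) - (i : ℤ)) + 1) = ((n : ℤ) + 1) + 1 from by ring]
    push_cast
    ring
  have hR2 : HasSum Sterm (Gbar t ^ 2) := by
    have hsh : HasSum (fun n : ℕ => Sterm (n + 1)) (Gbar t ^ 2) :=
      hT.congr_fun fun n => hTk n
    have := (hasSum_nat_add_iff (f := Sterm) 1).1 hsh
    rw [Finset.sum_range_one] at this
    have hS0 : Sterm 0 = 0 := by
      rw [hStermdef]
      simp only []
      rw [show ((0 : ℕ) : ℤ) = 0 from rfl]
      rw [show Finset.Icc (1 : ℤ) (0 : ℤ) = ∅ from Finset.Icc_eq_empty (by norm_num)]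
      simp
    rw [hS0, add_zero] at this
    exact this
  -- R3 : the Dirac term
  have hR3 : HasSum (fun k : ℕ => ((if k = 0 then c0 else 0 : ℝ) : ℂ) * z ^ ((k : ℤ) + 1))
      ((c0 : ℂ) * z) := by
    have he : (fun k : ℕ => ((if k = 0 then c0 else 0 : ℝ) : ℂ) * z ^ ((k : ℤ) + 1))
        = fun k : ℕ => if k = 0 then (c0 : ℂ) * z else 0 := funext fun k => by
      by_cases hk : k = 0
      · subst hk
        norm_num
      · simp [hk]
    rw [he]
    exact hasSum_ite_eq 0 _
  -- combine step C
  have hCeq : 3 * Gbar t = (F t - Fminus t - (f 0 : ℂ)) + Gbar t ^ 2 + (c0 : ℂ) * z := by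
    have hRHS : HasSum (fun k : ℕ =>
        (f (-(k : ℤ) - 1) : ℂ) * z ^ ((k : ℤ) + 1) + Sterm k +
          ((if k = 0 then c0 else 0 : ℝ) : ℂ) * z ^ ((k : ℤ) + 1))
        ((F t - Fminus t - (f 0 : ℂ)) + Gbar t ^ 2 + (c0 : ℂ) * z) := (hR1.add hR2).add hR3
    refine HasSum.unique ?_ hRHS
    refine hL.congr_fun fun k => ?_
    have h := congrArg (fun r : ℝ => (r : ℂ) * z ^ ((k : ℤ) + 1)) (hrecy k)
    rw [hStermdef]
    simp only []
    push_cast at h ⊢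
    linear_combination -h
  have hFhat_eq : Fhat t = Fminus t + (f 0 : ℂ) - (c0 : ℂ) * z := by
    rw [hFhat t, hc t, ← hzdef, hc0def]
    push_cast
    ring
  refine ⟨hpart1, ?_⟩
  linear_combination (3 - Gbar t + F t * Fhat t) * hpart1 - hCeq - hFhat_eq
end

section
/- Let Y be an integer-valued random variable whose distribution is symmetric (Y and −Y have the same law), which is not almost surely constant, and which satisfies ℙ[Y = 0] > 0. Let F(t) = 𝔼[e^{itY}] be its characteristic function (which is real-valued by symmetry), and define the discriminant Δ(w) = (3w − 1)² − 4w³ for w ∈ ℝ. Then there exists δ > 0 such that Δ(F(t)) < 0 for all t with 0 < t < δ; consequently, for such t, the two roots of the quadratic equation F(t)²·W² + (3F(t) − 1)·W + F(t) = 0 in the unknown W are non-real complex conjugates. -/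
open MeasureTheory Complex

/-- Let `Y` be an integer-valued random variable with symmetric law, not a.s. constant,
and with `ℙ[Y = 0] > 0`.  Let `F(t) = 𝔼[e^{itY}]` (real-valued by symmetry) and
`Δ(w) = (3w - 1)² - 4w³`.  Then there is `δ > 0` such that for all `0 < t < δ` one has
`Δ(F(t)) < 0`; consequently every root `W` of `F(t)² W² + (3F(t) - 1) W + F(t) = 0` is
non-real, and the roots come in complex-conjugate pairs. -/
theorem stmt_8
    {Ω : Type*} [MeasurableSpace Ω] (P : Measure Ω) [IsProbabilityMeasure P]
    (Y : Ω → ℤ) (hY : Measurable Y)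
    (hsymm : Measure.map Y P = Measure.map (fun ω => -(Y ω)) P)
    (hnonconst : ¬ ∃ a : ℤ, ∀ᵐ ω ∂P, Y ω = a)
    (h0 : 0 < P {ω | Y ω = 0})
    (F : ℝ → ℂ)
    (hF : ∀ t : ℝ, F t = ∫ ω, Complex.exp (Complex.I * (t : ℂ) * (Y ω : ℂ)) ∂P)
    (Δ : ℝ → ℝ) (hΔ : ∀ w, Δ w = (3 * w - 1) ^ 2 - 4 * w ^ 3) :
    ∃ δ : ℝ, 0 < δ ∧ ∀ t : ℝ, 0 < t → t < δ →
      (F t).im = 0 ∧ Δ ((F t).re) < 0 ∧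
      ∀ W : ℂ, (F t) ^ 2 * W ^ 2 + (3 * F t - 1) * W + F t = 0 →
        W.im ≠ 0 ∧
        (F t) ^ 2 * (starRingEnd ℂ W) ^ 2 + (3 * F t - 1) * starRingEnd ℂ W + F t = 0 := by
  -- measurability and integrability of the integrand
  have hmeas : ∀ t : ℝ, Measurable (fun ω => Complex.exp (Complex.I * (t:ℂ) * (Y ω : ℂ))) :=
    fun t => (measurable_from_top
      (f := fun n : ℤ => Complex.exp (Complex.I * (t:ℂ) * (n:ℂ)))).comp hY
  have hnorm : ∀ (t : ℝ) (ω : Ω), ‖Complex.exp (Complex.I * (t:ℂ) * (Y ω : ℂ))‖ = 1 := by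
    intro t ω
    rw [Complex.norm_exp]
    simp [Complex.exp_re]
  have hint : ∀ t : ℝ, Integrable (fun ω => Complex.exp (Complex.I * (t:ℂ) * (Y ω : ℂ))) P := by
    intro t
    refine (integrable_const (1:ℝ)).mono' (hmeas t).aestronglyMeasurable ?_
    exact Filter.Eventually.of_forall fun ω => le_of_eq (hnorm t ω)
  -- imaginary part vanishes, by symmetry
  have him : ∀ t : ℝ, (F t).im = 0 := by
    intro t
    rw [← Complex.conj_eq_iff_im]
    set g : ℤ → ℂ := fun n => Complex.exp (Complex.I * (t:ℂ) * (n:ℂ)) with hg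
    have hgm : Measurable g := measurable_from_top
    have h1 : ∀ ω, (starRingEnd ℂ) (g (Y ω)) = g (-(Y ω)) := by
      intro ω
      simp only [hg, ← Complex.exp_conj, map_mul, Complex.conj_I, Complex.conj_ofReal,
        map_intCast]
      congr 1
      push_cast
      ring
    calc (starRingEnd ℂ) (F t) = ∫ ω, (starRingEnd ℂ) (g (Y ω)) ∂P := by
          rw [hF t, ← integral_conj]
      _ = ∫ ω, g (-(Y ω)) ∂P := by simp only [h1]
      _ = ∫ n : ℤ, g n ∂(P.map (fun ω => -(Y ω))) := by
          have hnm : Measurable fun ω => -(Y ω) := measurable_from_top.comp hY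
          rw [integral_map hnm.aemeasurable hgm.aestronglyMeasurable]
      _ = ∫ n : ℤ, g n ∂(P.map Y) := by rw [hsymm]
      _ = ∫ ω, g (Y ω) ∂P := by
          rw [integral_map hY.aemeasurable hgm.aestronglyMeasurable]
      _ = F t := (hF t).symm
  -- real part is the integral of cos
  have hre : ∀ t : ℝ, (F t).re = ∫ ω, Real.cos (t * (Y ω : ℝ)) ∂P := by
    intro t
    have h := integral_re (hint t)
    simp only [RCLike.re_to_complex] at h
    rw [hF t, ← h]
    congr 1
    funext ω
    have : Complex.I * (t:ℂ) * ((Y ω : ℤ) : ℂ) = ((t * (Y ω : ℝ) : ℝ) : ℂ) * Complex.I := by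
      push_cast; ring
    rw [this, Complex.exp_ofReal_mul_I_re]
  -- continuity of F at 0
  have hFfun : F = fun t : ℝ => ∫ ω, Complex.exp (Complex.I * (t:ℂ) * (Y ω : ℂ)) ∂P := funext hF
  have hFcont : ContinuousAt F 0 := by
    rw [hFfun]
    apply continuousAt_of_dominated (bound := fun _ => (1:ℝ))
    · exact Filter.Eventually.of_forall fun t => (hmeas t).aestronglyMeasurable
    · exact Filter.Eventually.of_forall fun t =>
        Filter.Eventually.of_forall fun ω => le_of_eq (hnorm t ω)
    · exact integrable_const 1
    · refine Filter.Eventually.of_forall fun ω => ?_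
      exact (Complex.continuous_exp.comp
        ((continuous_const.mul Complex.continuous_ofReal).mul continuous_const)).continuousAt
  have hF0 : F 0 = 1 := by rw [hF 0]; simp
  have htend : Filter.Tendsto (fun t => (F t).re) (nhds 0) (nhds 1) := by
    have h := hFcont
    rw [ContinuousAt, hF0] at h
    have := (Complex.continuous_re.tendsto 1).comp h
    simpa [Function.comp_def] using this
  have hev : ∀ᶠ t in nhds (0:ℝ), 1/2 < (F t).re :=
    htend.eventually (eventually_gt_nhds (by norm_num))
  obtain ⟨δ₁, hδ₁, hball⟩ := Metric.eventually_nhds_iff.mp hev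
  -- a nonzero value with positive probability
  obtain ⟨n, hn0, hnpos⟩ : ∃ n : ℤ, n ≠ 0 ∧ 0 < P {ω | Y ω = n} := by
    by_contra h
    push_neg at h
    refine hnonconst ⟨0, ?_⟩
    rw [MeasureTheory.ae_iff]
    have hsub : {ω | ¬ Y ω = 0} ⊆ ⋃ m ∈ {m : ℤ | m ≠ 0}, Y ⁻¹' {m} := by
      intro ω hω
      exact Set.mem_biUnion hω rfl
    refine measure_mono_null hsub ((measure_biUnion_null_iff (Set.to_countable _)).mpr ?_)
    intro m hm
    have := h m hm
    have h2 : P (Y ⁻¹' {m}) ≤ 0 := by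
      simpa [Set.preimage, Set.mem_singleton_iff] using this
    exact le_antisymm h2 (by positivity)
  have hnR : (0:ℝ) < |(n:ℝ)| := by
    simp only [abs_pos]
    exact_mod_cast hn0
  -- the δ
  refine ⟨min δ₁ (Real.pi / |(n:ℝ)|), lt_min hδ₁ (div_pos Real.pi_pos hnR), ?_⟩
  intro t ht htδ
  have ht1 : t < δ₁ := lt_of_lt_of_le htδ (min_le_left _ _)
  have ht2 : t < Real.pi / |(n:ℝ)| := lt_of_lt_of_le htδ (min_le_right _ _)
  have hhalf : 1/2 < (F t).re := hball (by simpa [abs_of_pos ht] using ht1)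
  -- F t .re < 1
  have hcosmeas : Measurable (fun ω => Real.cos (t * (Y ω : ℝ))) :=
    (measurable_from_top (f := fun m : ℤ => Real.cos (t * (m:ℝ)))).comp hY
  have hcosint : Integrable (fun ω => Real.cos (t * (Y ω : ℝ))) P := by
    refine (integrable_const (1:ℝ)).mono' hcosmeas.aestronglyMeasurable ?_
    exact Filter.Eventually.of_forall fun ω => by
      simpa using Real.abs_cos_le_one (t * (Y ω : ℝ))
  have hsubint : Integrable (fun ω => 1 - Real.cos (t * (Y ω : ℝ))) P :=
    (integrable_const 1).sub hcosint
  have hcoslt : Real.cos (t * (n:ℝ)) < 1 := by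
    have habs : |t * (n:ℝ)| < Real.pi := by
      rw [abs_mul, abs_of_pos ht]
      calc t * |(n:ℝ)| < (Real.pi / |(n:ℝ)|) * |(n:ℝ)| := by
            exact mul_lt_mul_of_pos_right ht2 hnR
        _ = Real.pi := div_mul_cancel₀ _ (ne_of_gt hnR)
    have hne : t * (n:ℝ) ≠ 0 := by
      apply mul_ne_zero (ne_of_gt ht)
      exact_mod_cast hn0
    rcases lt_or_eq_of_le (Real.cos_le_one (t * (n:ℝ))) with h | h
    · exact h
    · exfalso
      have := (Real.cos_eq_one_iff_of_lt_of_lt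
        (by nlinarith [Real.pi_pos, abs_lt.mp habs] : -(2 * Real.pi) < t * (n:ℝ))
        (by nlinarith [Real.pi_pos, abs_lt.mp habs] : t * (n:ℝ) < 2 * Real.pi)).mp h
      exact hne this
  have hA : MeasurableSet {ω | Y ω = n} := hY (measurableSet_singleton n)
  have hAset : ∫ ω in {ω | Y ω = n}, (1 - Real.cos (t * (Y ω : ℝ))) ∂P
      = (P {ω | Y ω = n}).toReal * (1 - Real.cos (t * (n:ℝ))) := by
    rw [setIntegral_congr_fun hA (g := fun _ => 1 - Real.cos (t * (n:ℝ)))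
      (fun ω hω => by simp only [Set.mem_setOf_eq] at hω; rw [hω]), setIntegral_const,
      smul_eq_mul, measureReal_def]
  have hle : ∫ ω in {ω | Y ω = n}, (1 - Real.cos (t * (Y ω : ℝ))) ∂P
      ≤ ∫ ω, (1 - Real.cos (t * (Y ω : ℝ))) ∂P := by
    refine setIntegral_le_integral hsubint ?_
    exact Filter.Eventually.of_forall fun ω => by
      simpa using Real.cos_le_one (t * (Y ω : ℝ))
  have hsubval : ∫ ω, (1 - Real.cos (t * (Y ω : ℝ))) ∂P = 1 - (F t).re := by
    rw [integral_sub (integrable_const 1) hcosint, hre t]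
    simp
  have htoRpos : 0 < (P {ω | Y ω = n}).toReal :=
    ENNReal.toReal_pos (ne_of_gt hnpos) (measure_ne_top P _)
  have hlt1 : (F t).re < 1 := by
    have hpos : 0 < (P {ω | Y ω = n}).toReal * (1 - Real.cos (t * (n:ℝ))) :=
      mul_pos htoRpos (by linarith)
    rw [hAset] at hle
    rw [hsubval] at hle
    linarith
  -- discriminant negative
  have hΔlt : Δ ((F t).re) < 0 := by
    rw [hΔ]
    nlinarith [mul_pos (mul_pos (sub_pos.mpr hlt1) (sub_pos.mpr hlt1))
      (show (0:ℝ) < 4 * (F t).re - 1 by linarith)]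
  refine ⟨him t, hΔlt, ?_⟩
  intro W hW
  have hconjF : (starRingEnd ℂ) (F t) = F t := Complex.conj_eq_iff_im.mpr (him t)
  constructor
  · intro h0im
    set r : ℝ := (F t).re with hr
    have hFr : F t = (r:ℂ) := Complex.ext_iff.mpr ⟨by simp [hr], by simp [him t]⟩
    have hWr : W = ((W.re : ℝ) : ℂ) := Complex.ext_iff.mpr ⟨by simp, by simp [h0im]⟩
    rw [hFr, hWr] at hW
    have hC : ((r^2 * W.re^2 + (3*r-1)*W.re + r : ℝ) : ℂ) = 0 := by
      push_cast
      linear_combination hW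
    have heqr : r^2 * W.re^2 + (3*r-1)*W.re + r = 0 := by exact_mod_cast hC
    have hkey : (2*r^2*W.re + 3*r - 1)^2 = Δ r := by
      rw [hΔ r]
      linear_combination (4*r^2) * heqr
    have := sq_nonneg (2*r^2*W.re + 3*r - 1)
    rw [hkey] at this
    exact absurd hΔlt (not_lt.mpr this)
  · have := congrArg (starRingEnd ℂ) hW
    simpa [map_add, map_mul, map_sub, map_pow, Complex.conj_ofNat, hconjF] using this
end

section
/- Suppose (f, g) satisfies the SDP recursive equation. Then 0 < f(0) < 1 and g(−1) > 0; in particular, a random variable with probability mass function f is not almost surely constant and takes the value 0 with positive probability. -/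
/-- Suppose the probability mass functions `f` (symmetric on `ℤ`) and `g`
(supported on `{y : y ≥ -1}`) satisfy the SDP recursive equation:
for all `x ∈ ℤ` and `y ≥ -1`,
`3 f(x) g(y) = f(x) (f(y) + Σ_{j=-1}^{y+1} g(j) g(y-j))
  + 1_{y=-1} (Σ_{j ≤ -2} f(j) f(x-j-1) + g(-1)² f(x+1) + g(x-1))`.
Then `0 < f 0 < 1` and `g(-1) > 0`. -/
theorem stmt_11
    (f g : ℤ → ℝ)
    (hf0 : ∀ x, 0 ≤ f x) (hg0 : ∀ y, 0 ≤ g y)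
    (hfsum : HasSum f 1) (hgsum : HasSum g 1)
    (hfsymm : ∀ x, f (-x) = f x)
    (hgsupp : ∀ y : ℤ, y ≤ -2 → g y = 0)
    (hrec : ∀ x y : ℤ, -1 ≤ y →
      3 * f x * g y =
        f x * (f y + ∑ j ∈ Finset.Icc (-1 : ℤ) (y + 1), g j * g (y - j)) +
          (if y = -1 then
            (∑' j : ℕ, f (-(j : ℤ) - 2) * f (x + (j : ℤ) + 1)) +
              g (-1) ^ 2 * f (x + 1) + g (x - 1)
            else 0)) :
    0 < f 0 ∧ f 0 < 1 ∧ 0 < g (-1) := by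
  have key : ∀ x : ℤ, 3 * f x * g (-1) =
      f x * (f (-1) + ∑ j ∈ Finset.Icc (-1 : ℤ) 0, g j * g (-1 - j)) +
        ((∑' j : ℕ, f (-(j : ℤ) - 2) * f (x + (j : ℤ) + 1)) +
          g (-1) ^ 2 * f (x + 1) + g (x - 1)) := by
    intro x
    have h := hrec x (-1) le_rfl
    norm_num at h
    convert h using 3
  have hT : ∀ x : ℤ, 0 ≤ ∑' j : ℕ, f (-(j : ℤ) - 2) * f (x + (j : ℤ) + 1) :=
    fun x => tsum_nonneg fun j => mul_nonneg (hf0 _) (hf0 _)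
  have hS : (0:ℝ) ≤ ∑ j ∈ Finset.Icc (-1 : ℤ) 0, g j * g (-1 - j) :=
    Finset.sum_nonneg fun j _ => mul_nonneg (hg0 _) (hg0 _)
  have hA : ∀ x : ℤ, 0 ≤ f x * (f (-1) + ∑ j ∈ Finset.Icc (-1 : ℤ) 0, g j * g (-1 - j)) :=
    fun x => mul_nonneg (hf0 x) (add_nonneg (hf0 _) hS)
  -- g (-1) > 0
  have hgneg : 0 < g (-1) := by
    rcases (hg0 (-1)).eq_or_lt with h | h
    · exfalso
      have hzero : ∀ x : ℤ, g (x - 1) = 0 := by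
        intro x
        have hk := key x
        rw [← h] at hk
        have := hT x
        have := hA x
        have := hg0 (x - 1)
        nlinarith [hf0 (x + 1)]
      have hgz : g = 0 := by
        funext y
        have := hzero (y + 1)
        simpa using this
      rw [hgz] at hgsum
      have := hgsum.unique hasSum_zero
      norm_num at this
    · exact h
  -- step lemma: f x = 0 → f (x+1) = 0
  have step : ∀ x : ℤ, f x = 0 → f (x + 1) = 0 := by
    intro x hx
    have hk := key x
    rw [hx] at hk
    have h1 : g (-1) ^ 2 * f (x + 1) ≤ 0 := by
      have := hT x
      have := hg0 (x - 1)
      nlinarith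
    have h2 : 0 ≤ g (-1) ^ 2 * f (x + 1) :=
      mul_nonneg (sq_nonneg _) (hf0 _)
    have h3 : g (-1) ^ 2 * f (x + 1) = 0 := le_antisymm h1 h2
    rcases mul_eq_zero.mp h3 with h4 | h4
    · exact absurd h4 (by positivity)
    · exact h4
  -- f 0 > 0
  have hf0pos : 0 < f 0 := by
    rcases (hf0 0).eq_or_lt with h | h
    · exfalso
      have hn : ∀ n : ℕ, f n = 0 := by
        intro n
        induction n with
        | zero => simpa using h.symm
        | succ n ih =>
            have := step n ih
            have e : ((n : ℤ) + 1) = ((n + 1 : ℕ) : ℤ) := by push_cast; ring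
            rwa [e] at this
      have hall : ∀ x : ℤ, f x = 0 := by
        intro x
        rcases le_or_gt 0 x with hx | hx
        · have := hn x.toNat
          rwa [Int.toNat_of_nonneg hx] at this
        · have := hn (-x).toNat
          rw [Int.toNat_of_nonneg (by omega)] at this
          rwa [hfsymm x] at this
      have hfz : f = 0 := funext hall
      rw [hfz] at hfsum
      have := hfsum.unique hasSum_zero
      norm_num at this
    · exact h
  -- f (-1) > 0
  have hfm1 : 0 < f (-1) := by
    rcases (hf0 (-1)).eq_or_lt with h | h
    · exfalso
      have := step (-1) h.symm
      norm_num at this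
      exact absurd this (by linarith)
    · exact h
  -- f 0 < 1
  have hlt : f 0 < 1 := by
    have hsum2 : f 0 + f (-1) ≤ 1 := by
      have := sum_le_hasSum ({0, -1} : Finset ℤ) (fun i _ => hf0 i) hfsum
      simpa using this
    linarith
  exact ⟨hf0pos, hlt, hgneg⟩
end

section
/- Suppose (f, g) satisfies the SDP recursive equation. Set c(t) = (2g(−1)² + e^{it}·(−3 − 2g(−1)² + f(0)))/(2e^{2it}) and F̂⁻(t) = F⁻(t) + c(t). Then for every t ∈ ℝ one has G(t) = −F(t)·F̂⁻(t), and F̂⁻(t) satisfies the quadratic equation F(t)²·F̂⁻(t)² + (3F(t) − 1)·F̂⁻(t) + F(t) = 0. -/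
open Complex

private lemma aux_hs_congr {ι M : Type*} [AddCommMonoid M] [TopologicalSpace M]
    {h k : ι → M} {a : M} (hh : HasSum h a)
    (he : ∀ i, h i = k i) : HasSum k a := (funext he : h = k) ▸ hh

private lemma aux_shift_hasSum {M : Type*} [AddCommMonoid M] [TopologicalSpace M]
    (φ : ℤ → M) (m : ℤ) {a : M} (h : HasSum φ a) : HasSum (fun x : ℤ => φ (x + m)) a := by
  have hinj : Function.Injective (fun x : ℤ => x + m) := add_left_injective m
  refine (hinj.hasSum_iff ?_).mpr h
  intro x hx
  exact absurd ⟨x - m, by ring⟩ hx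

private lemma aux_summable {ι : Type*} {u : ι → ℝ} (hu : Summable u) (h0 : ∀ i, 0 ≤ u i)
    (w : ι → ℂ) (hw : ∀ i, ‖w i‖ = 1) : Summable fun i => (u i : ℂ) * w i := by
  refine Summable.of_norm ?_
  have he : (fun i => ‖(u i : ℂ) * w i‖) = u := by
    funext i
    rw [norm_mul, hw, mul_one, Complex.norm_real, Real.norm_eq_abs, _root_.abs_of_nonneg (h0 i)]
  rwa [he]

private lemma aux_antidiag (g : ℤ → ℝ) (n : ℕ) :
    ∑ p ∈ Finset.HasAntidiagonal.antidiagonal (n + 2), g ((p.1 : ℤ) - 1) * g ((p.2 : ℤ) - 1)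
      = ∑ j ∈ Finset.Icc (-1 : ℤ) ((n : ℤ) + 1), g j * g ((n : ℤ) - j) := by
  refine Finset.sum_nbij' (fun p => (p.1 : ℤ) - 1)
    (fun a => ((a + 1).toNat, ((n : ℤ) + 1 - a).toNat)) ?_ ?_ ?_ ?_ ?_
  · intro p hp
    rw [Finset.HasAntidiagonal.mem_antidiagonal] at hp
    rw [Finset.mem_Icc]
    omega
  · intro a ha
    rw [Finset.mem_Icc] at ha
    rw [Finset.HasAntidiagonal.mem_antidiagonal]
    dsimp only
    omega
  · intro p hp
    rw [Finset.HasAntidiagonal.mem_antidiagonal] at hp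
    ext <;> simp <;> omega
  · intro a ha
    rw [Finset.mem_Icc] at ha
    simp only
    omega
  · intro p hp
    rw [Finset.HasAntidiagonal.mem_antidiagonal] at hp
    have h2 : (p.2 : ℤ) - 1 = (n : ℤ) - ((p.1 : ℤ) - 1) := by omega
    rw [h2]

/-- Suppose `(f, g)` satisfies the SDP recursive equation, and define
`F(t) = Σ_{x ∈ ℤ} f(x) e^{itx}`, `F⁻(t) = Σ_{x ≤ -1} f(x) e^{itx}`,
`G(t) = Σ_{y ≥ -1} g(y) e^{ity}`.  With
`c(t) = (2 g(-1)² + e^{it}(-3 - 2 g(-1)² + f 0)) / (2 e^{2it})` and `F̂⁻ = F⁻ + c`,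
one has `G(t) = -F(t) F̂⁻(t)` and
`F(t)² F̂⁻(t)² + (3 F(t) - 1) F̂⁻(t) + F(t) = 0` for every real `t`. -/
theorem stmt_12
    (f g : ℤ → ℝ)
    (hf0 : ∀ x, 0 ≤ f x) (hg0 : ∀ y, 0 ≤ g y)
    (hfsum : HasSum f 1) (hgsum : HasSum g 1)
    (hfsymm : ∀ x, f (-x) = f x)
    (hgsupp : ∀ y : ℤ, y ≤ -2 → g y = 0)
    (hrec : ∀ x y : ℤ, -1 ≤ y →
      3 * f x * g y =
        f x * (f y + ∑ j ∈ Finset.Icc (-1 : ℤ) (y + 1), g j * g (y - j)) +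
          (if y = -1 then
            (∑' j : ℕ, f (-(j : ℤ) - 2) * f (x + (j : ℤ) + 1)) +
              g (-1) ^ 2 * f (x + 1) + g (x - 1)
            else 0))
    (F Fminus G : ℝ → ℂ)
    (hF : ∀ t : ℝ, F t = ∑' x : ℤ, (f x : ℂ) * Complex.exp (Complex.I * (t : ℂ) * (x : ℂ)))
    (hFminus : ∀ t : ℝ, Fminus t =
      ∑' k : ℕ, (f (-(k : ℤ) - 1) : ℂ) * Complex.exp (Complex.I * (t : ℂ) * (-(k : ℂ) - 1)))
    (hG : ∀ t : ℝ, G t =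
      ∑' k : ℕ, (g ((k : ℤ) - 1) : ℂ) * Complex.exp (Complex.I * (t : ℂ) * ((k : ℂ) - 1)))
    (c Fhat : ℝ → ℂ)
    (hc : ∀ t : ℝ, c t =
      (((2 * g (-1) ^ 2 : ℝ) : ℂ) +
          Complex.exp (Complex.I * (t : ℂ)) * ((-3 - 2 * g (-1) ^ 2 + f 0 : ℝ) : ℂ)) /
        (2 * Complex.exp (2 * Complex.I * (t : ℂ))))
    (hFhat : ∀ t : ℝ, Fhat t = Fminus t + c t) :
    ∀ t : ℝ, G t = -(F t) * Fhat t ∧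
      (F t) ^ 2 * (Fhat t) ^ 2 + (3 * F t - 1) * Fhat t + F t = 0 := by
  -- basic summability of the real sequences
  have hfS : Summable f := hfsum.summable
  have hgS : Summable g := hgsum.summable
  -- the y = -1 recursion, cleaned up
  have hA : ∀ x : ℤ, 3 * f x * g (-1) =
      f x * (f (-1) + 2 * (g (-1) * g 0)) +
        ((∑' j : ℕ, f (-(j : ℤ) - 2) * f (x + (j : ℤ) + 1)) + g (-1) ^ 2 * f (x + 1)
          + g (x - 1)) := by
    intro x
    have h := hrec x (-1) le_rfl
    rw [if_pos rfl] at h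
    have hicc : Finset.Icc (-1 : ℤ) (-1 + 1) = {-1, 0} := by
      ext a
      simp only [Finset.mem_Icc, Finset.mem_insert, Finset.mem_singleton]
      omega
    rw [hicc] at h
    rw [Finset.sum_insert (by decide), Finset.sum_singleton] at h
    norm_num at h
    linarith
  -- the y ≥ 0 recursion, cleaned up
  obtain ⟨x₀, hx₀⟩ : ∃ x, f x ≠ 0 := by
    by_contra h
    push_neg at h
    have h0 : HasSum f 0 := (funext h : f = fun _ => 0) ▸ hasSum_zero
    have h1 := hfsum.unique h0
    norm_num at h1
  have hE : ∀ n : ℕ, 3 * g (n : ℤ) =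
      f (n : ℤ) + ∑ j ∈ Finset.Icc (-1 : ℤ) ((n : ℤ) + 1), g j * g ((n : ℤ) - j) := by
    intro n
    have h := hrec x₀ (n : ℤ) (by omega)
    rw [if_neg (by omega)] at h
    rw [add_zero] at h
    have h2 : f x₀ * (3 * g (n : ℤ)) =
        f x₀ * (f (n : ℤ) + ∑ j ∈ Finset.Icc (-1 : ℤ) ((n : ℤ) + 1), g j * g ((n : ℤ) - j)) := by
      linarith
    exact mul_left_cancel₀ hx₀ h2
  -- the ℕ-indexed real sequences
  have hinj1 : Function.Injective (fun k : ℕ => (k : ℤ) - 1) := by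
    intro a b h
    simp only at h
    omega
  have hinj2 : Function.Injective (fun k : ℕ => -(k : ℤ) - 1) := by
    intro a b h
    simp only at h
    omega
  have hinj3 : Function.Injective (fun k : ℕ => -(k : ℤ) - 2) := by
    intro a b h
    simp only at h
    omega
  have hgnat1 : HasSum (fun k : ℕ => g ((k : ℤ) - 1)) 1 := by
    refine (hinj1.hasSum_iff ?_).mpr hgsum
    intro x hx
    apply hgsupp
    by_contra hle
    push_neg at hle
    exact hx ⟨(x + 1).toNat, by simp; omega⟩
  have hgnat0 : HasSum (fun n : ℕ => g (n : ℤ)) (1 - g (-1)) := by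
    have h := (hasSum_nat_add_iff' (f := fun k : ℕ => g ((k : ℤ) - 1)) 1).mpr hgnat1
    simp only [Finset.sum_range_one, Nat.cast_zero, Nat.cast_add, Nat.cast_one,
      add_sub_cancel_right, zero_sub] at h
    exact h
  have hfnat : HasSum (fun n : ℕ => f (n : ℤ)) ((1 + f 0) / 2) := by
    have hs : Summable (fun n : ℕ => f (n : ℤ)) := hfS.comp_injective Nat.cast_injective
    have ha : HasSum (fun n : ℕ => f (n : ℤ)) (∑' n : ℕ, f (n : ℤ)) := hs.hasSum
    set a := ∑' n : ℕ, f (n : ℤ) with ha'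
    have hshift : HasSum (fun n : ℕ => f ((n : ℤ) + 1)) (a - f 0) := by
      have h := (hasSum_nat_add_iff' (f := fun n : ℕ => f (n : ℤ)) 1).mpr ha
      simp only [Finset.sum_range_one, Nat.cast_zero, Nat.cast_add, Nat.cast_one] at h
      exact h
    have hneg : HasSum (fun n : ℕ => f (-((n : ℤ) + 1))) (a - f 0) := by
      simp only [hfsymm]
      exact hshift
    have htot := ha.of_nat_of_neg_add_one hneg
    have h1 : a + (a - f 0) = 1 := htot.unique hfsum
    have h2 : a = (1 + f 0) / 2 := by linarith
    exact h2 ▸ ha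
  -- Cauchy-product data for g at t = 0 : the normalization identity
  set T : ℕ → ℝ := fun n =>
    ∑ kl ∈ Finset.HasAntidiagonal.antidiagonal n, g ((kl.1 : ℤ) - 1) * g ((kl.2 : ℤ) - 1) with hTdef
  have hanorm : Summable (fun k : ℕ => ‖g ((k : ℤ) - 1)‖) := by
    simpa [Real.norm_eq_abs, _root_.abs_of_nonneg (hg0 _)] using hgnat1.summable
  have hTsummable : Summable T :=
    (summable_norm_sum_mul_antidiagonal_of_summable_norm hanorm hanorm).of_norm
  have hT1 : ∑' n, T n = 1 := by
    have h := tsum_mul_tsum_eq_tsum_sum_antidiagonal_of_summable_norm hanorm hanorm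
    rw [hgnat1.tsum_eq] at h
    simpa using h.symm
  have hT0val : T 0 = g (-1) ^ 2 := by
    rw [hTdef]
    dsimp only
    norm_num [Finset.Nat.antidiagonal_zero, sq]
  have hT1val : T 1 = 2 * (g (-1) * g 0) := by
    rw [hTdef]
    dsimp only
    have h1 : Finset.HasAntidiagonal.antidiagonal (1 : ℕ) = {(0, 1), (1, 0)} := by decide
    rw [h1, Finset.sum_insert (by decide), Finset.sum_singleton]
    norm_num
    ring
  have hTrec : ∀ n : ℕ, T (n + 1 + 1) = 3 * g (n : ℤ) - f (n : ℤ) := by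
    intro n
    have h12 : n + 1 + 1 = n + 2 := rfl
    rw [hTdef, h12]
    dsimp only
    rw [aux_antidiag g n]
    have h := hE n
    linarith
  have hTs1 : Summable (fun n => T (n + 1)) := (summable_nat_add_iff 1).mpr hTsummable
  have e1 : ∑' n, T n = T 0 + ∑' n, T (n + 1) := Summable.tsum_eq_zero_add hTsummable
  have e2 : ∑' n, T (n + 1) = T 1 + ∑' n, T (n + 1 + 1) := Summable.tsum_eq_zero_add hTs1
  have e3 : ∑' n, T (n + 1 + 1) = 3 * (1 - g (-1)) - (1 + f 0) / 2 := by
    have hh : HasSum (fun n : ℕ => 3 * g (n : ℤ) - f (n : ℤ))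
        (3 * (1 - g (-1)) - (1 + f 0) / 2) := (hgnat0.mul_left 3).sub hfnat
    exact (aux_hs_congr hh fun n => (hTrec n).symm).tsum_eq
  have hnorm : 3 * g (-1) - 2 * (g (-1) * g 0) = (2 * g (-1) ^ 2 + 3 - f 0) / 2 := by
    rw [e1, e2, e3, hT0val, hT1val] at hT1
    linarith
  -- now fix t and pass to characteristic functions
  intro t
  set z : ℂ := Complex.exp (Complex.I * (t : ℂ)) with hzdef
  have hz0 : z ≠ 0 := Complex.exp_ne_zero _
  have hzx : ∀ x : ℤ, Complex.exp (Complex.I * (t : ℂ) * (x : ℂ)) = z ^ x := by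
    intro x
    rw [hzdef, ← Complex.exp_int_mul]
    congr 1
    ring
  have hznorm : ∀ x : ℤ, ‖z ^ x‖ = 1 := by
    intro x
    rw [norm_zpow]
    have h1 : ‖z‖ = 1 := by
      rw [hzdef]
      simp [Complex.norm_exp]
    rw [h1, one_zpow]
  have hFcS : Summable (fun x : ℤ => (f x : ℂ) * z ^ x) :=
    aux_summable hfS hf0 _ (fun x => hznorm x)
  have hFhs : HasSum (fun x : ℤ => (f x : ℂ) * z ^ x) (F t) := by
    have hFt : F t = ∑' x : ℤ, (f x : ℂ) * z ^ x := by
      rw [hF t]; exact tsum_congr fun x => by rw [hzx]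
    rw [hFt]; exact hFcS.hasSum
  have hFmhs : HasSum (fun k : ℕ => (f (-(k : ℤ) - 1) : ℂ) * z ^ (-(k : ℤ) - 1)) (Fminus t) := by
    have hFmS : Summable (fun k : ℕ => (f (-(k : ℤ) - 1) : ℂ) * z ^ (-(k : ℤ) - 1)) :=
      aux_summable (hfS.comp_injective hinj2) (fun k => hf0 _) _ (fun k => hznorm _)
    have h1 : Fminus t = ∑' k : ℕ, (f (-(k : ℤ) - 1) : ℂ) * z ^ (-(k : ℤ) - 1) := by
      rw [hFminus t]
      refine tsum_congr fun k => ?_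
      have h2 : (-(k : ℂ) - 1) = ((-(k : ℤ) - 1 : ℤ) : ℂ) := by push_cast; ring
      rw [h2, hzx]
    rw [h1]; exact hFmS.hasSum
  have hGhs : HasSum (fun k : ℕ => (g ((k : ℤ) - 1) : ℂ) * z ^ ((k : ℤ) - 1)) (G t) := by
    have hGcS : Summable (fun k : ℕ => (g ((k : ℤ) - 1) : ℂ) * z ^ ((k : ℤ) - 1)) :=
      aux_summable (hgS.comp_injective hinj1) (fun k => hg0 _) _ (fun k => hznorm _)
    have h1 : G t = ∑' k : ℕ, (g ((k : ℤ) - 1) : ℂ) * z ^ ((k : ℤ) - 1) := by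
      rw [hG t]
      refine tsum_congr fun k => ?_
      have h2 : ((k : ℂ) - 1) = (((k : ℤ) - 1 : ℤ) : ℂ) := by push_cast; ring
      rw [h2, hzx]
    rw [h1]; exact hGcS.hasSum
  have hFnat : HasSum (fun n : ℕ => (f (n : ℤ) : ℂ) * z ^ (n : ℤ)) (F t - Fminus t) := by
    have hs : Summable (fun n : ℕ => (f (n : ℤ) : ℂ) * z ^ (n : ℤ)) :=
      aux_summable (hfS.comp_injective Nat.cast_injective) (fun n => hf0 _) _ (fun n => hznorm _)
    have hP : HasSum (fun n : ℕ => (f (n : ℤ) : ℂ) * z ^ (n : ℤ))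
        (∑' n : ℕ, (f (n : ℤ) : ℂ) * z ^ (n : ℤ)) := hs.hasSum
    have hneg : HasSum (fun n : ℕ => (f (-((n : ℤ) + 1)) : ℂ) * z ^ (-((n : ℤ) + 1)))
        (Fminus t) := by
      refine aux_hs_congr hFmhs fun k => ?_
      have h2 : -(k : ℤ) - 1 = -((k : ℤ) + 1) := by ring
      rw [h2]
    have htot := HasSum.of_nat_of_neg_add_one (f := fun x : ℤ => (f x : ℂ) * z ^ x) hP hneg
    have h1 : (∑' n : ℕ, (f (n : ℤ) : ℂ) * z ^ (n : ℤ)) + Fminus t = F t := htot.unique hFhs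
    have h2 : (∑' n : ℕ, (f (n : ℤ) : ℂ) * z ^ (n : ℤ)) = F t - Fminus t := by
      linear_combination h1
    rw [← h2]; exact hP
  have hGnat : HasSum (fun n : ℕ => (g (n : ℤ) : ℂ) * z ^ (n : ℤ))
      (G t - (g (-1) : ℂ) * z ^ (-1 : ℤ)) := by
    have h := (hasSum_nat_add_iff'
      (f := fun k : ℕ => (g ((k : ℤ) - 1) : ℂ) * z ^ ((k : ℤ) - 1)) 1).mpr hGhs
    simp only [Finset.sum_range_one, Nat.cast_zero, Nat.cast_add, Nat.cast_one,
      add_sub_cancel_right, zero_sub] at h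
    exact h
  -- Cauchy product for G(t)^2
  have hbnorm : Summable (fun k : ℕ => ‖(g ((k : ℤ) - 1) : ℂ) * z ^ ((k : ℤ) - 1)‖) := by
    refine Summable.congr hgnat1.summable fun k => ?_
    rw [norm_mul, hznorm, mul_one, Complex.norm_real, Real.norm_eq_abs,
      _root_.abs_of_nonneg (hg0 _)]
  have hTCval : ∀ n : ℕ, (∑ kl ∈ Finset.HasAntidiagonal.antidiagonal n,
      ((g ((kl.1 : ℤ) - 1) : ℂ) * z ^ ((kl.1 : ℤ) - 1)) *
        ((g ((kl.2 : ℤ) - 1) : ℂ) * z ^ ((kl.2 : ℤ) - 1)))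
      = z ^ ((n : ℤ) - 2) * ((T n : ℝ) : ℂ) := by
    intro n
    rw [hTdef]
    dsimp only
    rw [Complex.ofReal_sum, Finset.mul_sum]
    refine Finset.sum_congr rfl fun p hp => ?_
    rw [Finset.HasAntidiagonal.mem_antidiagonal] at hp
    have hzp : z ^ ((p.1 : ℤ) - 1) * z ^ ((p.2 : ℤ) - 1) = z ^ ((n : ℤ) - 2) := by
      rw [← zpow_add₀ hz0]
      congr 1
      omega
    rw [mul_mul_mul_comm, hzp]
    push_cast
    ring
  have hcB := tsum_mul_tsum_eq_tsum_sum_antidiagonal_of_summable_norm hbnorm hbnorm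
  rw [hGhs.tsum_eq, tsum_congr hTCval] at hcB
  have hTCs : Summable (fun n : ℕ => z ^ ((n : ℤ) - 2) * ((T n : ℝ) : ℂ)) :=
    Summable.congr
      ((summable_norm_sum_mul_antidiagonal_of_summable_norm hbnorm hbnorm).of_norm)
      (fun n => hTCval n)
  have htail : HasSum (fun n : ℕ => z ^ (((n + 1 + 1 : ℕ) : ℤ) - 2) * ((T (n + 1 + 1) : ℝ) : ℂ))
      (3 * (G t - (g (-1) : ℂ) * z ^ (-1 : ℤ)) - (F t - Fminus t)) := by
    have hh := (hGnat.mul_left 3).sub hFnat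
    refine aux_hs_congr hh fun n => ?_
    have h1 : (((n + 1 + 1 : ℕ) : ℤ) - 2) = (n : ℤ) := by push_cast; ring
    rw [h1, hTrec n]
    push_cast
    ring
  rw [Summable.tsum_eq_zero_add hTCs, Summable.tsum_eq_zero_add ((summable_nat_add_iff 1).mpr hTCs)] at hcB
  rw [htail.tsum_eq] at hcB
  -- hcB : G t * G t = z^(0-2) T 0 + (z^(1-2) T 1 + (3 (G t - g(-1) z⁻¹) - (F t - Fminus t)))
  -- translated sums of f
  have htrans : ∀ m : ℤ, HasSum (fun x : ℤ => (f (x + m) : ℂ) * z ^ x) (z ^ (-m) * F t) := by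
    intro m
    have h1 : HasSum (fun x : ℤ => (f (x + m) : ℂ) * z ^ (x + m)) (F t) :=
      aux_shift_hasSum (fun x : ℤ => (f x : ℂ) * z ^ x) m hFhs
    have h2 := h1.mul_left (z ^ (-m))
    refine aux_hs_congr h2 fun x => ?_
    rw [zpow_add₀ hz0, zpow_neg]
    have hzm : z ^ m ≠ 0 := zpow_ne_zero _ hz0
    field_simp
  -- the series of g(x-1) z^x over ℤ
  have hP4 : HasSum (fun x : ℤ => (g (x - 1) : ℂ) * z ^ x) (z * G t) := by
    have h1 : HasSum (fun k : ℕ => (g ((k : ℤ) - 1) : ℂ) * z ^ (k : ℤ)) (z * G t) := by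
      have h2 := hGhs.mul_left z
      refine aux_hs_congr h2 fun k => ?_
      have h3 : z ^ ((k : ℤ)) = z * z ^ ((k : ℤ) - 1) := by
        rw [← zpow_one_add₀ hz0]
        congr 1
        ring
      rw [h3]
      ring
    have hsupp : ∀ x : ℤ, x ∉ Set.range ((↑) : ℕ → ℤ) → (g (x - 1) : ℂ) * z ^ x = 0 := by
      intro x hx
      have hneg : x ≤ -1 := by
        by_contra hcon
        push_neg at hcon
        exact hx ⟨x.toNat, by omega⟩
      have : g (x - 1) = 0 := hgsupp _ (by omega)
      rw [this]
      simp
    exact (Nat.cast_injective.hasSum_iff hsupp).mp h1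
  -- double sum for the convolution term
  have hr : Summable (fun p : ℕ × ℤ => f (-(p.1 : ℤ) - 2) * f (p.2 + (p.1 : ℤ) + 1)) := by
    have htr : ∀ j : ℕ, (∑' x : ℤ, f (-(j : ℤ) - 2) * f (x + (j : ℤ) + 1))
        = f (-(j : ℤ) - 2) := by
      intro j
      rw [tsum_mul_left]
      have h1 : HasSum (fun x : ℤ => f (x + (j : ℤ) + 1)) 1 := by
        have h2 := aux_shift_hasSum f ((j : ℤ) + 1) hfsum
        refine aux_hs_congr h2 fun x => ?_
        rw [← add_assoc]
      rw [h1.tsum_eq, mul_one]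
    refine (summable_prod_of_nonneg (fun p => mul_nonneg (hf0 _) (hf0 _))).mpr ⟨fun j => ?_, ?_⟩
    · refine Summable.congr (((aux_shift_hasSum f ((j : ℤ) + 1) hfsum).summable).mul_left
        (f (-(j : ℤ) - 2))) fun x => ?_
      rw [← add_assoc]
    · refine Summable.congr (hfS.comp_injective hinj3) fun j => ?_
      exact (htr j).symm
  have hh : Summable (fun p : ℕ × ℤ =>
      ((f (-(p.1 : ℤ) - 2) * f (p.2 + (p.1 : ℤ) + 1) : ℝ) : ℂ) * z ^ p.2) :=
    aux_summable hr (fun p => mul_nonneg (hf0 _) (hf0 _)) _ (fun p => hznorm _)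
  have hmarg : HasSum (fun x : ℤ => ∑' j : ℕ,
      ((f (-(j : ℤ) - 2) * f (x + (j : ℤ) + 1) : ℝ) : ℂ) * z ^ x)
      (∑' p : ℕ × ℤ, ((f (-(p.1 : ℤ) - 2) * f (p.2 + (p.1 : ℤ) + 1) : ℝ) : ℂ) * z ^ p.2) := by
    have hswap : Summable (fun q : ℤ × ℕ =>
        ((f (-(q.2 : ℤ) - 2) * f (q.1 + (q.2 : ℤ) + 1) : ℝ) : ℂ) * z ^ q.1) := hh.prod_symm
    have heq : (∑' q : ℤ × ℕ,
          ((f (-(q.2 : ℤ) - 2) * f (q.1 + (q.2 : ℤ) + 1) : ℝ) : ℂ) * z ^ q.1)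
        = ∑' p : ℕ × ℤ, ((f (-(p.1 : ℤ) - 2) * f (p.2 + (p.1 : ℤ) + 1) : ℝ) : ℂ) * z ^ p.2 :=
      (Equiv.prodComm ℤ ℕ).tsum_eq
        (fun p : ℕ × ℤ => ((f (-(p.1 : ℤ) - 2) * f (p.2 + (p.1 : ℤ) + 1) : ℝ) : ℂ) * z ^ p.2)
    rw [← heq]
    exact HasSum.prod_fiberwise hswap.hasSum (fun x => (hswap.prod_factor x).hasSum)
  have hinner : ∀ j : ℕ, HasSum (fun x : ℤ =>
      ((f (-(j : ℤ) - 2) * f (x + (j : ℤ) + 1) : ℝ) : ℂ) * z ^ x)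
      ((f (-(j : ℤ) - 2) : ℂ) * (z ^ (-((j : ℤ) + 1)) * F t)) := by
    intro j
    have h1 := (htrans ((j : ℤ) + 1)).mul_left ((f (-(j : ℤ) - 2) : ℂ))
    refine aux_hs_congr h1 fun x => ?_
    rw [← add_assoc]
    push_cast
    ring
  have houter : HasSum (fun j : ℕ => (f (-(j : ℤ) - 2) : ℂ) * (z ^ (-((j : ℤ) + 1)) * F t))
      ((z * F t) * (Fminus t - (f (-1) : ℂ) * z ^ (-1 : ℤ))) := by
    have hp2 : HasSum (fun n : ℕ => (f (-(n : ℤ) - 2) : ℂ) * z ^ (-(n : ℤ) - 2))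
        (Fminus t - (f (-1) : ℂ) * z ^ (-1 : ℤ)) := by
      have hp := (hasSum_nat_add_iff'
        (f := fun k : ℕ => (f (-(k : ℤ) - 1) : ℂ) * z ^ (-(k : ℤ) - 1)) 1).mpr hFmhs
      simp only [Finset.sum_range_one, Nat.cast_zero, Nat.cast_add, Nat.cast_one,
        neg_zero, zero_sub] at hp
      refine aux_hs_congr hp fun n => ?_
      have h3 : -((n : ℤ) + 1) - 1 = -(n : ℤ) - 2 := by ring
      rw [h3]
    have hp3 := hp2.mul_left (z * F t)
    refine aux_hs_congr hp3 fun j => ?_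
    have hzj : z * z ^ (-(j : ℤ) - 2) = z ^ (-((j : ℤ) + 1)) := by
      rw [← zpow_one_add₀ hz0]
      congr 1
      ring
    rw [← hzj]
    ring
  have hP2 : HasSum (fun x : ℤ =>
      ((∑' j : ℕ, f (-(j : ℤ) - 2) * f (x + (j : ℤ) + 1) : ℝ) : ℂ) * z ^ x)
      ((z * F t) * (Fminus t - (f (-1) : ℂ) * z ^ (-1 : ℤ))) := by
    have hval : (∑' p : ℕ × ℤ,
          ((f (-(p.1 : ℤ) - 2) * f (p.2 + (p.1 : ℤ) + 1) : ℝ) : ℂ) * z ^ p.2)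
        = (z * F t) * (Fminus t - (f (-1) : ℂ) * z ^ (-1 : ℤ)) := by
      rw [Summable.tsum_prod' hh (fun j => hh.prod_factor j)]
      calc (∑' j : ℕ, ∑' x : ℤ,
            ((f (-(j : ℤ) - 2) * f (x + (j : ℤ) + 1) : ℝ) : ℂ) * z ^ x)
          = ∑' j : ℕ, (f (-(j : ℤ) - 2) : ℂ) * (z ^ (-((j : ℤ) + 1)) * F t) :=
            tsum_congr fun j => (hinner j).tsum_eq
        _ = (z * F t) * (Fminus t - (f (-1) : ℂ) * z ^ (-1 : ℤ)) := houter.tsum_eq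
    refine aux_hs_congr (hval ▸ hmarg) fun x => ?_
    rw [Complex.ofReal_tsum, ← tsum_mul_right]
  -- the summed y = -1 equation
  have hP0 := hFhs.mul_left ((3 * g (-1) : ℝ) : ℂ)
  have hP1 := hFhs.mul_left ((f (-1) + 2 * (g (-1) * g 0) : ℝ) : ℂ)
  have hP3 := (htrans 1).mul_left ((g (-1) ^ 2 : ℝ) : ℂ)
  have hRHS := ((hP1.add hP2).add hP3).add hP4
  have eqA : ((3 * g (-1) : ℝ) : ℂ) * F t =
      ((f (-1) + 2 * (g (-1) * g 0) : ℝ) : ℂ) * F t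
        + (z * F t) * (Fminus t - (f (-1) : ℂ) * z ^ (-1 : ℤ))
        + ((g (-1) ^ 2 : ℝ) : ℂ) * (z ^ (-(1 : ℤ)) * F t)
        + z * G t := by
    refine HasSum.unique hP0 (aux_hs_congr hRHS fun x => ?_)
    have haxC := congrArg (Complex.ofReal) (hA x)
    push_cast at haxC ⊢
    linear_combination (-(z ^ x)) * haxC
  -- final algebra
  have hzz : z * z⁻¹ = 1 := mul_inv_cancel₀ hz0
  have hzm1 : z ^ (-1 : ℤ) = z⁻¹ := zpow_neg_one z
  have hexp2 : Complex.exp (2 * Complex.I * (t : ℂ)) = z * z := by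
    rw [hzdef, ← Complex.exp_add]
    congr 1
    ring
  have hnormC : ((3 * g (-1) - 2 * (g (-1) * g 0) : ℝ) : ℂ) * 2
      = 2 * ((g (-1) : ℝ) : ℂ) ^ 2 + 3 - ((f 0 : ℝ) : ℂ) := by
    have h2 : (3 * g (-1) - 2 * (g (-1) * g 0)) * 2 = 2 * g (-1) ^ 2 + 3 - f 0 := by
      linarith
    exact_mod_cast congrArg Complex.ofReal h2
  have hcval : c t = ((2 * g (-1) ^ 2 : ℝ) : ℂ) * (z⁻¹ * z⁻¹) / 2
      + ((-3 - 2 * g (-1) ^ 2 + f 0 : ℝ) : ℂ) * z⁻¹ / 2 := by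
    rw [hc t, hexp2]
    field_simp
    ring
  rw [hzm1] at eqA
  push_cast at eqA hnormC
  have hclaim1 : G t = -(F t) * Fhat t := by
    rw [hFhat t, hcval]
    push_cast
    linear_combination (-(z⁻¹)) * eqA
      + (((f (-1) : ℝ) : ℂ) * F t * z⁻¹ - G t - F t * Fminus t) * hzz
      + (F t * z⁻¹ / 2) * hnormC
  refine ⟨hclaim1, ?_⟩
  -- second claim from the Cauchy product identity
  rw [hT0val, hT1val] at hcB
  push_cast at hcB
  rw [hclaim1] at hcB
  have hhat2 : Fhat t = Fminus t + (((2 * g (-1) ^ 2 : ℝ) : ℂ) * (z⁻¹ * z⁻¹) / 2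
      + ((-3 - 2 * g (-1) ^ 2 + f 0 : ℝ) : ℂ) * z⁻¹ / 2) := by
    rw [hFhat t, hcval]
  push_cast at hhat2
  rw [show (z : ℂ) ^ (-2 : ℤ) = z⁻¹ * z⁻¹ from by
    rw [show (-2 : ℤ) = (-1) + (-1) from rfl, zpow_add₀ hz0, zpow_neg_one], zpow_neg_one] at hcB
  linear_combination hcB - hhat2 - (z⁻¹ / 2) * hnormC
end

section
/- Fix ν ∈ (0,1) and for t > 0 define I_ν(t) = lim_{T→∞} ∫₀^T (⌊u/t⌋ + 1)^{−ν}·cos(u) du (this improper integral exists). Then as t ↓ 0, I_ν(t) = t^ν·∫₀^∞ u^{−ν}·cos(u) du + O(t) = Γ(1−ν)·sin(πν/2)·t^ν + o(t^ν). -/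
open MeasureTheory Asymptotics Filter Topology

section aux
open Real Set intervalIntegral

lemma beta_reflect {p : ℝ} (hp0 : 0 < p) (hp1 : p < 1) :
    ∫ y in (0:ℝ)..1, y ^ (p - 1) * (1 - y) ^ ((1 - p) - 1) = Real.pi / Real.sin (Real.pi * p) := by
  have h1 : Complex.betaIntegral p (1 - p) =
      ((∫ y in (0:ℝ)..1, y ^ (p - 1) * (1 - y) ^ ((1 - p) - 1) : ℝ) : ℂ) := by
    rw [Complex.betaIntegral, ← intervalIntegral.integral_ofReal]
    refine intervalIntegral.integral_congr fun x hx => ?_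
    rw [uIcc_of_le zero_le_one] at hx
    rw [Complex.ofReal_mul, Complex.ofReal_cpow hx.1,
      Complex.ofReal_cpow (by linarith [hx.2] : (0:ℝ) ≤ 1 - x)]
    push_cast
    ring
  have h2 : ((Real.Gamma p * Real.Gamma (1 - p) : ℝ) : ℂ) = Complex.betaIntegral p (1 - p) := by
    have h := Complex.Gamma_mul_Gamma_eq_betaIntegral (s := (p : ℂ)) (t := 1 - p)
      (by simpa using hp0) (by simp [Complex.sub_re]; linarith)
    rw [show ((p : ℂ) + (1 - p)) = 1 by ring, Complex.Gamma_one, one_mul] at h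
    rw [← h]
    push_cast [← Complex.Gamma_ofReal]
    ring
  have h3 := h1 ▸ h2
  have h4 : Real.Gamma p * Real.Gamma (1 - p)
      = ∫ y in (0:ℝ)..1, y ^ (p - 1) * (1 - y) ^ ((1 - p) - 1) := by exact_mod_cast h3
  rw [← h4, Real.Gamma_mul_Gamma_one_sub]

lemma mellin_one_add_inv {p : ℝ} (hp0 : 0 < p) (hp1 : p < 1) :
    ∫ z in Ioi (0:ℝ), z ^ (p - 1) * (1 + z)⁻¹ = Real.pi / Real.sin (Real.pi * p) := by
  have himg : (fun y : ℝ => y / (1 - y)) '' Ioo 0 1 = Ioi 0 := by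
    ext z; simp only [mem_image, mem_Ioo, mem_Ioi]
    constructor
    · rintro ⟨y, ⟨hy0, hy1⟩, rfl⟩
      exact div_pos hy0 (by linarith)
    · intro hz
      refine ⟨z / (1 + z), ⟨div_pos hz (by linarith), ?_⟩, ?_⟩
      · rw [div_lt_one (by linarith)]; linarith
      · field_simp; ring
  have hderiv : ∀ y ∈ Ioo (0:ℝ) 1, HasDerivWithinAt (fun y : ℝ => y / (1 - y))
      ((1 - y)⁻¹ ^ 2) (Ioo 0 1) y := by
    intro y hy
    have h1 : (1 : ℝ) - y ≠ 0 := by rintro h; simp only [mem_Ioo] at hy; linarith [hy.2]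
    have := (hasDerivAt_id y).div ((hasDerivAt_id y).const_sub 1) h1
    refine this.hasDerivWithinAt.congr_deriv ?_
    simp only [id]; field_simp; ring
  have hinj : InjOn (fun y : ℝ => y / (1 - y)) (Ioo 0 1) := by
    intro a ha b hb hab
    simp only [mem_Ioo] at ha hb
    rw [div_eq_div_iff (by linarith) (by linarith)] at hab
    nlinarith
  have := integral_image_eq_integral_abs_deriv_smul measurableSet_Ioo hderiv hinj
    (fun z : ℝ => z ^ (p - 1) * (1 + z)⁻¹)
  rw [himg] at this
  rw [this]
  have heq : ∀ y ∈ Ioo (0:ℝ) 1, |(1 - y)⁻¹ ^ 2| •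
      ((y / (1 - y)) ^ (p - 1) * (1 + y / (1 - y))⁻¹) = y ^ (p - 1) * (1 - y) ^ ((1 - p) - 1) := by
    intro y hy
    simp only [mem_Ioo] at hy
    have h1 : (0:ℝ) < 1 - y := by linarith [hy.2]
    rw [abs_of_nonneg (by positivity), smul_eq_mul, div_rpow hy.1.le h1.le,
      show (1 + y / (1 - y)) = (1-y)⁻¹ by field_simp; ring, inv_inv,
      show ((1 - y)⁻¹^2 : ℝ) = (1-y)^(-2:ℝ) by
        rw [inv_pow, ← Real.rpow_natCast (1-y) 2, ← Real.rpow_neg h1.le]; norm_num,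
      div_eq_mul_inv, ← Real.rpow_neg h1.le]
    have key : (1-y)^(-2:ℝ) * ((1-y)^(-(p-1)) * (1-y)^(1:ℝ)) = (1-y)^(1-p-1) := by
      rw [← Real.rpow_add h1, ← Real.rpow_add h1]; congr 1; ring
    calc (1-y)^(-2:ℝ) * (y ^ (p-1) * ((1-y)^(-(p-1))) * (1-y))
        = y^(p-1) * ((1-y)^(-2:ℝ) * ((1-y)^(-(p-1)) * (1-y)^(1:ℝ))) := by
          rw [Real.rpow_one]; ring
      _ = y ^ (p - 1) * (1 - y) ^ ((1 - p) - 1) := by rw [key]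
  rw [setIntegral_congr_fun measurableSet_Ioo heq, ← integral_Ioc_eq_integral_Ioo,
    ← intervalIntegral.integral_of_le zero_le_one]
  exact beta_reflect hp0 hp1

lemma rpow_div_one_add_sq {ν : ℝ} (hν0 : 0 < ν) (hν1 : ν < 1) :
    ∫ x in Ioi (0:ℝ), x ^ ν * (1 + x ^ 2)⁻¹ = Real.pi / (2 * Real.cos (Real.pi * ν / 2)) := by
  have h2 := integral_comp_rpow_Ioi_of_pos
    (g := fun z : ℝ => z ^ ((ν + 1) / 2 - 1) * (1 + z)⁻¹) (p := 2) two_pos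
  have heq : ∀ x ∈ Ioi (0:ℝ), ((2:ℝ) * x ^ ((2:ℝ) - 1)) •
      ((x ^ (2:ℝ)) ^ ((ν + 1) / 2 - 1) * (1 + x ^ (2:ℝ))⁻¹)
      = 2 * (x ^ ν * (1 + x ^ 2)⁻¹) := by
    intro x hx
    have hx0 : (0:ℝ) < x := hx
    have e1 : (x:ℝ) ^ (2:ℝ) = x ^ 2 := by
      rw [← Real.rpow_natCast x 2]; norm_num
    have e2 : ((x:ℝ) ^ (2:ℝ)) ^ ((ν + 1) / 2 - 1) = x ^ (ν - 1) := by
      rw [← Real.rpow_mul hx0.le]; congr 1; ring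
    rw [smul_eq_mul, e2, e1, show ((2:ℝ) - 1) = 1 by norm_num, Real.rpow_one]
    rw [show (x:ℝ) ^ (ν - 1) = x ^ ν * x⁻¹ by
      rw [Real.rpow_sub hx0, Real.rpow_one, div_eq_mul_inv]]
    field_simp
  rw [setIntegral_congr_fun measurableSet_Ioi heq, MeasureTheory.integral_const_mul] at h2
  have h3 := mellin_one_add_inv (p := (ν + 1) / 2) (by linarith) (by linarith)
  rw [h3] at h2
  have hsin : Real.sin (Real.pi * ((ν + 1) / 2)) = Real.cos (Real.pi * ν / 2) := by
    rw [show Real.pi * ((ν + 1) / 2) = Real.pi * ν / 2 + Real.pi / 2 by ring,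
      Real.sin_add_pi_div_two]
  rw [hsin] at h2
  have hcos : Real.cos (Real.pi * ν / 2) > 0 := by
    apply Real.cos_pos_of_mem_Ioo
    constructor <;> nlinarith [Real.pi_pos]
  field_simp at h2 ⊢
  linarith

lemma laplace_integrable {ν u : ℝ} (hν : 0 < ν) (hu : 0 < u) :
    IntegrableOn (fun x : ℝ => x ^ (ν - 1) * Real.exp (-(u * x))) (Ioi 0) := by
  have h := (integrableOn_Ioi_comp_mul_left_iff
    (fun x : ℝ => Real.exp (-x) * x ^ (ν - 1)) 0 hu).mpr
    (by rw [mul_zero]; exact Real.GammaIntegral_convergent hν)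
  have h2 : IntegrableOn (fun x : ℝ => Real.exp (-(u * x)) * (u * x) ^ (ν - 1)) (Ioi 0) := h
  have h3 := h2.mul_const (u ^ (1 - ν))
  refine (IntegrableOn.congr_fun h3 (fun x hx => ?_) measurableSet_Ioi)
  have hx0 : (0:ℝ) < x := hx
  rw [mul_rpow hu.le hx0.le]
  have h4 : u ^ (ν - 1) * u ^ (1 - ν) = 1 := by
    rw [← Real.rpow_add hu]; norm_num
  linear_combination (x ^ (ν - 1) * Real.exp (-(u * x))) * h4

lemma laplace_rpow {ν u : ℝ} (hν : 0 < ν) (hu : 0 < u) :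
    ∫ x in Ioi (0:ℝ), x ^ (ν - 1) * Real.exp (-(u * x)) = Real.Gamma ν * u ^ (-ν) := by
  have h := integral_comp_mul_left_Ioi (fun y : ℝ => Real.exp (-y) * y ^ (ν - 1)) 0 hu
  rw [mul_zero, ← Real.Gamma_eq_integral hν] at h
  have heq : ∀ x ∈ Ioi (0:ℝ), Real.exp (-(u * x)) * (u * x) ^ (ν - 1)
      = u ^ (ν - 1) * (x ^ (ν - 1) * Real.exp (-(u * x))) := by
    intro x hx
    rw [mul_rpow hu.le (le_of_lt hx)]
    ring
  rw [setIntegral_congr_fun measurableSet_Ioi heq, MeasureTheory.integral_const_mul] at h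
  have hne : u ^ (ν - 1) ≠ 0 := (Real.rpow_pos_of_pos hu _).ne'
  have : ∫ x in Ioi (0:ℝ), x ^ (ν - 1) * Real.exp (-(u * x))
      = (u ^ (ν - 1))⁻¹ * (u⁻¹ * Real.Gamma ν) := by
    rw [smul_eq_mul] at h
    field_simp at h ⊢
    linarith [h]
  rw [this, ← Real.rpow_neg_one u, ← Real.rpow_neg hu.le, ← mul_assoc, ← Real.rpow_add hu,
    show (-(ν - 1) + -1 : ℝ) = -ν by ring]
  ring

lemma inner_exp_cos (x T : ℝ) :
    ∫ u in (0:ℝ)..T, Real.exp (-(x * u)) * Real.cos u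
      = (x + Real.exp (-(x * T)) * (Real.sin T - x * Real.cos T)) / (1 + x ^ 2) := by
  have hne : (1 : ℝ) + x ^ 2 ≠ 0 := by positivity
  have hF : ∀ u : ℝ, HasDerivAt
      (fun u : ℝ => Real.exp (-(x * u)) * (Real.sin u - x * Real.cos u) / (1 + x ^ 2))
      (Real.exp (-(x * u)) * Real.cos u) u := by
    intro u
    have h1 : HasDerivAt (fun u : ℝ => -(x * u)) (-x) u := by
      exact (((hasDerivAt_id' u).const_mul x).neg).congr_deriv (by ring)
    have he := h1.exp
    have hs : HasDerivAt (fun u : ℝ => Real.sin u - x * Real.cos u)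
        (Real.cos u + x * Real.sin u) u := by
      exact ((Real.hasDerivAt_sin u).sub ((Real.hasDerivAt_cos u).const_mul x)).congr_deriv (by ring)
    have := (he.mul hs).div_const (1 + x ^ 2)
    refine this.congr_deriv ?_
    field_simp
    ring
  have hcont : IntervalIntegrable (fun u : ℝ => Real.exp (-(x * u)) * Real.cos u)
      MeasureTheory.volume 0 T :=
    (Continuous.mul (Real.continuous_exp.comp (by continuity)) Real.continuous_cos).intervalIntegrable 0 T
  have := intervalIntegral.integral_eq_sub_of_hasDerivAt (fun u _ => hF u) hcont
  rw [this]
  simp [Real.sin_zero, Real.cos_zero]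
  ring

lemma one_add_div_le (x : ℝ) (hx : 0 ≤ x) : (1 + x) / (1 + x ^ 2) ≤ 2 := by
  rw [div_le_iff₀ (by positivity)]
  nlinarith [sq_nonneg (x - 1)]

lemma integ1 {ν : ℝ} (hν0 : 0 < ν) (hν1 : ν < 1) :
    IntegrableOn (fun x : ℝ => x ^ ν * (1 + x ^ 2)⁻¹) (Ioi 0) := by
  have hmeas : Measurable (fun x : ℝ => x ^ ν * (1 + x ^ 2)⁻¹) :=
    (measurable_id.pow measurable_const).mul
      ((measurable_const.add (measurable_id.pow measurable_const)).inv)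
  rw [← Ioc_union_Ioi_eq_Ioi (zero_le_one : (0:ℝ) ≤ 1), integrableOn_union]
  constructor
  · apply Integrable.mono' (g := fun _ : ℝ => (1:ℝ))
    · exact integrableOn_const measure_Ioc_lt_top.ne
    · exact hmeas.aestronglyMeasurable
    · filter_upwards [ae_restrict_mem measurableSet_Ioc] with x hx
      have h1 : (0:ℝ) < x := hx.1
      have h2 : x ^ ν ≤ 1 := by
        calc x ^ ν ≤ 1 ^ ν := Real.rpow_le_rpow h1.le hx.2 hν0.le
        _ = 1 := Real.one_rpow ν
      rw [Real.norm_eq_abs, abs_of_nonneg (by positivity)]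
      calc x ^ ν * (1 + x ^ 2)⁻¹ ≤ 1 * 1 := by
            apply mul_le_mul h2 _ (by positivity) zero_le_one
            rw [inv_le_one_iff₀]; right; nlinarith
        _ = 1 := by norm_num
  · apply Integrable.mono' (g := fun x : ℝ => x ^ (ν - 2))
    · exact integrableOn_Ioi_rpow_of_lt (by linarith) one_pos
    · exact hmeas.aestronglyMeasurable
    · filter_upwards [ae_restrict_mem measurableSet_Ioi] with x hx
      have h1 : (1:ℝ) < x := hx
      have h0 : (0:ℝ) < x := by linarith
      rw [Real.norm_eq_abs, abs_of_nonneg (by positivity)]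
      rw [Real.rpow_sub h0]
      rw [div_eq_mul_inv]
      apply mul_le_mul_of_nonneg_left _ (Real.rpow_nonneg h0.le ν)
      rw [inv_le_inv₀ (by positivity) (by positivity)]
      rw [show (2:ℝ) = ((2:ℕ):ℝ) by norm_num, Real.rpow_natCast]
      nlinarith

lemma pointwise_bound {ν : ℝ} (hν0 : 0 < ν) {T : ℝ} (hT : 0 < T) :
    ∀ x ∈ Ioi (0:ℝ), ‖x ^ (ν - 1) *
      (Real.exp (-(x * T)) * (Real.sin T - x * Real.cos T) / (1 + x ^ 2))‖
      ≤ 2 * (x ^ (ν - 1) * Real.exp (-(T * x))) := by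
  intro x hx
  have h0 : (0:ℝ) < x := hx
  rw [Real.norm_eq_abs, abs_mul, abs_of_nonneg (Real.rpow_nonneg h0.le _)]
  rw [mul_comm T x]
  rw [mul_comm (2:ℝ), mul_assoc]
  apply mul_le_mul_of_nonneg_left _ (Real.rpow_nonneg h0.le _)
  rw [abs_div, abs_mul, abs_of_nonneg (Real.exp_nonneg _),
    abs_of_nonneg (by positivity : (0:ℝ) ≤ 1 + x ^ 2)]
  rw [div_eq_mul_inv, mul_assoc]
  apply mul_le_mul_of_nonneg_left _ (Real.exp_nonneg _)
  have h1 : |Real.sin T - x * Real.cos T| ≤ 1 + x := by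
    calc |Real.sin T - x * Real.cos T| ≤ |Real.sin T| + |x * Real.cos T| := abs_sub _ _
      _ ≤ 1 + x := by
          apply add_le_add (Real.abs_sin_le_one T)
          rw [abs_mul, abs_of_nonneg h0.le]
          calc x * |Real.cos T| ≤ x * 1 :=
            mul_le_mul_of_nonneg_left (Real.abs_cos_le_one T) h0.le
          _ = x := mul_one x
  calc |Real.sin T - x * Real.cos T| * (1 + x ^ 2)⁻¹ ≤ (1 + x) * (1 + x ^ 2)⁻¹ := by
        apply mul_le_mul_of_nonneg_right h1 (by positivity)
    _ ≤ 2 := by rw [← div_eq_mul_inv]; exact one_add_div_le x h0.le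

lemma integ2 {ν : ℝ} (hν0 : 0 < ν) {T : ℝ} (hT : 0 < T) :
    IntegrableOn (fun x : ℝ => x ^ (ν - 1) *
      (Real.exp (-(x * T)) * (Real.sin T - x * Real.cos T) / (1 + x ^ 2))) (Ioi 0) := by
  apply Integrable.mono' (g := fun x : ℝ => 2 * (x ^ (ν - 1) * Real.exp (-(T * x))))
  · exact (laplace_integrable hν0 hT).const_mul 2
  · apply Measurable.aestronglyMeasurable
    exact (measurable_id.pow measurable_const).mul
      (((measurable_id.mul measurable_const).neg.exp.mul
        (measurable_const.sub (measurable_id.mul measurable_const))).mul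
        ((measurable_const.add (measurable_id.pow measurable_const)).inv))
  · filter_upwards [ae_restrict_mem measurableSet_Ioi] with x hx
    exact pointwise_bound hν0 hT x hx

lemma fubini_step {ν : ℝ} (hν0 : 0 < ν) (hν1 : ν < 1) {T : ℝ} (hT : 0 < T) :
    Real.Gamma ν * ∫ u in (0:ℝ)..T, u ^ (-ν) * Real.cos u
      = (∫ x in Ioi (0:ℝ), x ^ ν * (1 + x ^ 2)⁻¹)
        + ∫ x in Ioi (0:ℝ), x ^ (ν - 1) *
            (Real.exp (-(x * T)) * (Real.sin T - x * Real.cos T) / (1 + x ^ 2)) := by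
  set F : ℝ × ℝ → ℝ := fun p => p.2 ^ (ν - 1) * Real.exp (-(p.1 * p.2)) * Real.cos p.1 with hF
  have hFmeas : AEStronglyMeasurable F
      ((volume.restrict (Ioc (0:ℝ) T)).prod (volume.restrict (Ioi (0:ℝ)))) := by
    apply Measurable.aestronglyMeasurable
    exact ((measurable_snd.pow measurable_const).mul
      ((measurable_fst.mul measurable_snd).neg.exp)).mul measurable_fst.cos
  have hGpos : 0 < Real.Gamma ν := Real.Gamma_pos_of_pos hν0
  have key : Integrable F ((volume.restrict (Ioc (0:ℝ) T)).prod (volume.restrict (Ioi (0:ℝ)))) := by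
    rw [integrable_prod_iff hFmeas]
    constructor
    · filter_upwards [ae_restrict_mem measurableSet_Ioc] with u hu
      exact (laplace_integrable hν0 hu.1).mul_const (Real.cos u)
    · apply Integrable.mono' (g := fun u : ℝ => Real.Gamma ν * u ^ (-ν))
      · have h1 : IntervalIntegrable (fun u : ℝ => u ^ (-ν)) volume 0 T :=
          intervalIntegral.intervalIntegrable_rpow' (by linarith)
        exact ((intervalIntegrable_iff_integrableOn_Ioc_of_le hT.le).mp h1).const_mul _
      · exact hFmeas.norm.integral_prod_right'
      · filter_upwards [ae_restrict_mem measurableSet_Ioc] with u hu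
        have hu0 : 0 < u := hu.1
        have hval : ∫ x in Ioi (0:ℝ), ‖F (u, x)‖
            = |Real.cos u| * (Real.Gamma ν * u ^ (-ν)) := by
          have heq : ∀ x ∈ Ioi (0:ℝ), ‖F (u, x)‖
              = (x ^ (ν - 1) * Real.exp (-(u * x))) * |Real.cos u| := by
            intro x hx
            rw [Real.norm_eq_abs, abs_mul, abs_mul,
              abs_of_nonneg (Real.rpow_nonneg (le_of_lt hx) _),
              abs_of_nonneg (Real.exp_nonneg _)]
          rw [setIntegral_congr_fun measurableSet_Ioi heq, MeasureTheory.integral_mul_const,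
            laplace_rpow hν0 hu0]
          ring
        rw [hval, Real.norm_eq_abs, abs_of_nonneg (by positivity)]
        calc |Real.cos u| * (Real.Gamma ν * u ^ (-ν)) ≤ 1 * (Real.Gamma ν * u ^ (-ν)) := by
              apply mul_le_mul_of_nonneg_right (Real.abs_cos_le_one u) (by positivity)
          _ = Real.Gamma ν * u ^ (-ν) := one_mul _
  have lhs1 : Real.Gamma ν * ∫ u in (0:ℝ)..T, u ^ (-ν) * Real.cos u
      = ∫ u in Ioc (0:ℝ) T, ∫ x in Ioi (0:ℝ), F (u, x) := by
    rw [intervalIntegral.integral_of_le hT.le, ← MeasureTheory.integral_const_mul]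
    apply setIntegral_congr_fun measurableSet_Ioc
    intro u hu
    have e0 : ∫ x in Ioi (0:ℝ), F (u, x)
        = (∫ x in Ioi (0:ℝ), x ^ (ν - 1) * Real.exp (-(u * x))) * Real.cos u := by
      rw [← MeasureTheory.integral_mul_const]
    show Real.Gamma ν * (u ^ (-ν) * Real.cos u) = ∫ x in Ioi (0:ℝ), F (u, x)
    rw [e0, laplace_rpow hν0 hu.1]
    ring
  have swap : ∫ u in Ioc (0:ℝ) T, ∫ x in Ioi (0:ℝ), F (u, x)
      = ∫ x in Ioi (0:ℝ), ∫ u in Ioc (0:ℝ) T, F (u, x) :=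
    integral_integral_swap (f := fun u x => F (u, x)) key
  have inner : ∀ x ∈ Ioi (0:ℝ), (fun x => ∫ u in Ioc (0:ℝ) T, F (u, x)) x
      = (fun x => x ^ ν * (1 + x ^ 2)⁻¹ + x ^ (ν - 1) *
          (Real.exp (-(x * T)) * (Real.sin T - x * Real.cos T) / (1 + x ^ 2))) x := by
    intro x hx
    have hx0 : (0:ℝ) < x := hx
    have e1 : ∫ u in Ioc (0:ℝ) T, F (u, x)
        = x ^ (ν - 1) * ∫ u in (0:ℝ)..T, Real.exp (-(x * u)) * Real.cos u := by
      calc ∫ u in Ioc (0:ℝ) T, F (u, x)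
          = ∫ u in Ioc (0:ℝ) T, x ^ (ν - 1) * (Real.exp (-(x * u)) * Real.cos u) := by
            apply setIntegral_congr_fun measurableSet_Ioc
            intro u _
            show x ^ (ν - 1) * Real.exp (-(u * x)) * Real.cos u = _
            rw [mul_comm u x]; ring
        _ = x ^ (ν - 1) * ∫ u in Ioc (0:ℝ) T, Real.exp (-(x * u)) * Real.cos u :=
            MeasureTheory.integral_const_mul _ _
        _ = x ^ (ν - 1) * ∫ u in (0:ℝ)..T, Real.exp (-(x * u)) * Real.cos u := by
            rw [intervalIntegral.integral_of_le hT.le]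
    show ∫ u in Ioc (0:ℝ) T, F (u, x) = _
    rw [e1, inner_exp_cos]
    have hxν : x ^ (ν - 1) * x = x ^ ν := by
      rw [← Real.rpow_add_one hx0.ne' (ν - 1)]
      congr 1; ring
    have e2 : x ^ (ν - 1) * ((x + Real.exp (-(x * T)) * (Real.sin T - x * Real.cos T)) / (1 + x ^ 2))
        = (x ^ (ν - 1) * x) * (1 + x ^ 2)⁻¹ + x ^ (ν - 1) *
            (Real.exp (-(x * T)) * (Real.sin T - x * Real.cos T) / (1 + x ^ 2)) := by
      ring
    rw [e2, hxν]
  rw [lhs1, swap, setIntegral_congr_fun measurableSet_Ioi inner,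
    integral_add (integ1 hν0 hν1) (integ2 hν0 hT)]

lemma step_A {ν : ℝ} (hν0 : 0 < ν) (hν1 : ν < 1) :
    Tendsto (fun T : ℝ => ∫ u in (0:ℝ)..T, u ^ (-ν) * Real.cos u) atTop
      (nhds (Real.Gamma (1 - ν) * Real.sin (Real.pi * ν / 2))) := by
  have hGpos : 0 < Real.Gamma ν := Real.Gamma_pos_of_pos hν0
  have hcos : 0 < Real.cos (Real.pi * ν / 2) := by
    apply Real.cos_pos_of_mem_Ioo
    constructor <;> nlinarith [Real.pi_pos]
  have hsin2 : 0 < Real.sin (Real.pi * ν / 2) := by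
    apply Real.sin_pos_of_pos_of_lt_pi <;> nlinarith [Real.pi_pos]
  have hsin : Real.sin (Real.pi * ν)
      = 2 * Real.sin (Real.pi * ν / 2) * Real.cos (Real.pi * ν / 2) := by
    have h := Real.sin_two_mul (Real.pi * ν / 2)
    rw [show 2 * (Real.pi * ν / 2) = Real.pi * ν by ring] at h
    exact h
  have hrefl := Real.Gamma_mul_Gamma_one_sub ν
  have harith : Real.Gamma (1 - ν) * Real.sin (Real.pi * ν / 2)
      = (Real.Gamma ν)⁻¹ * (Real.pi / (2 * Real.cos (Real.pi * ν / 2))) := by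
    have hs : Real.sin (Real.pi * ν) ≠ 0 := by rw [hsin]; positivity
    have h0 : Real.Gamma ν * Real.Gamma (1 - ν) * Real.sin (Real.pi * ν) = Real.pi := by
      rw [hrefl]; field_simp
    rw [eq_inv_mul_iff_mul_eq₀ hGpos.ne', eq_div_iff (by positivity)]
    linear_combination h0 - Real.Gamma ν * Real.Gamma (1 - ν) * hsin
  set K : ℝ → ℝ := fun T => ∫ x in Ioi (0:ℝ), x ^ (ν - 1) *
      (Real.exp (-(x * T)) * (Real.sin T - x * Real.cos T) / (1 + x ^ 2)) with hK
  have hKbound : ∀ T : ℝ, 0 < T → ‖K T‖ ≤ 2 * Real.Gamma ν * T ^ (-ν) := by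
    intro T hT
    have h1 : ‖K T‖ ≤ ∫ x in Ioi (0:ℝ), 2 * (x ^ (ν - 1) * Real.exp (-(T * x))) := by
      apply MeasureTheory.norm_integral_le_of_norm_le ((laplace_integrable hν0 hT).const_mul 2)
      filter_upwards [ae_restrict_mem measurableSet_Ioi] with x hx
      exact pointwise_bound hν0 hT x hx
    rw [MeasureTheory.integral_const_mul, laplace_rpow hν0 hT] at h1
    linarith [h1]
  have hKto : Tendsto K atTop (nhds 0) := by
    apply squeeze_zero_norm' _
      (by simpa using (tendsto_rpow_neg_atTop hν0).const_mul (2 * Real.Gamma ν))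
    filter_upwards [eventually_gt_atTop (0:ℝ)] with T hT
    exact hKbound T hT
  have heq : (fun T : ℝ => ∫ u in (0:ℝ)..T, u ^ (-ν) * Real.cos u)
      =ᶠ[atTop] fun T => (Real.Gamma ν)⁻¹ *
        ((Real.pi / (2 * Real.cos (Real.pi * ν / 2))) + K T) := by
    filter_upwards [eventually_gt_atTop (0:ℝ)] with T hT
    have := fubini_step hν0 hν1 hT
    rw [rpow_div_one_add_sq hν0 hν1] at this
    rw [← this, inv_mul_cancel_left₀ hGpos.ne']
  rw [show Real.Gamma (1 - ν) * Real.sin (Real.pi * ν / 2)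
    = (Real.Gamma ν)⁻¹ * ((Real.pi / (2 * Real.cos (Real.pi * ν / 2))) + 0) by
      rw [add_zero]; exact harith]
  exact Tendsto.congr' heq.symm ((tendsto_const_nhds.add hKto).const_mul _)

lemma rpow_neg_sub_le {ν a b : ℝ} (hν0 : 0 < ν) (hν1 : ν ≤ 1) (ha : 0 < a) (hab : a ≤ b) :
    a ^ (-ν) - b ^ (-ν) ≤ a ^ (-(ν + 1)) * (b - a) ∧ 0 ≤ a ^ (-ν) - b ^ (-ν) := by
  have hb : 0 < b := lt_of_lt_of_le ha hab
  have hq0 : 0 < a / b := div_pos ha hb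
  have hq1 : a / b ≤ 1 := (div_le_one hb).mpr hab
  have hbeq : b ^ (-ν) = a ^ (-ν) * (a / b) ^ ν := by
    rw [div_rpow ha.le hb.le, Real.rpow_neg ha.le, div_eq_mul_inv]
    rw [← mul_assoc, inv_mul_cancel₀ (Real.rpow_pos_of_pos ha ν).ne', one_mul,
      ← Real.rpow_neg hb.le]
  constructor
  · have h1 : a / b ≤ (a / b) ^ ν := by
      have := Real.rpow_le_rpow_of_exponent_ge hq0 hq1 hν1
      rwa [Real.rpow_one] at this
    have h2 : 1 - (a / b) ^ ν ≤ (b - a) / b := by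
      rw [sub_div, div_self hb.ne']
      linarith
    have h3 : (b - a) / b ≤ (b - a) / a := by
      apply div_le_div_of_nonneg_left (by linarith) ha hab
    calc a ^ (-ν) - b ^ (-ν) = a ^ (-ν) * (1 - (a / b) ^ ν) := by rw [hbeq]; ring
      _ ≤ a ^ (-ν) * ((b - a) / a) := by
          apply mul_le_mul_of_nonneg_left (le_trans h2 h3) (Real.rpow_nonneg ha.le _)
      _ = a ^ (-(ν + 1)) * (b - a) := by
          rw [show (-(ν + 1) : ℝ) = -ν + (-1) by ring, Real.rpow_add ha, Real.rpow_neg_one]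
          field_simp
  · rw [hbeq]
    have h4 : (a / b) ^ ν ≤ 1 := Real.rpow_le_one hq0.le hq1 hν0.le
    nlinarith [Real.rpow_nonneg ha.le (-ν)]

lemma htu_bound1 {ν t : ℝ} (hν0 : 0 < ν) (ht : 0 < t) {u : ℝ} (hu : 0 < u) :
    ‖((⌊u / t⌋ : ℝ) + 1) ^ (-ν) * Real.cos u - t ^ ν * (u ^ (-ν) * Real.cos u)‖
      ≤ t ^ ν * u ^ (-ν) + 1 := by
  have hfl : (0:ℝ) ≤ (⌊u / t⌋ : ℝ) := by
    exact_mod_cast Int.floor_nonneg.mpr (le_of_lt (div_pos hu ht))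
  have h1 : ((⌊u / t⌋ : ℝ) + 1) ^ (-ν) ≤ 1 :=
    Real.rpow_le_one_of_one_le_of_nonpos (by linarith) (by linarith)
  calc ‖((⌊u / t⌋ : ℝ) + 1) ^ (-ν) * Real.cos u - t ^ ν * (u ^ (-ν) * Real.cos u)‖
      ≤ ‖((⌊u / t⌋ : ℝ) + 1) ^ (-ν) * Real.cos u‖ + ‖t ^ ν * (u ^ (-ν) * Real.cos u)‖ :=
        norm_sub_le _ _
    _ ≤ 1 + t ^ ν * u ^ (-ν) := by
        apply add_le_add
        · rw [Real.norm_eq_abs, abs_mul, abs_of_nonneg (Real.rpow_nonneg (by linarith) _)]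
          calc ((⌊u / t⌋:ℝ) + 1) ^ (-ν) * |Real.cos u| ≤ 1 * 1 :=
            mul_le_mul h1 (Real.abs_cos_le_one u) (abs_nonneg _) zero_le_one
          _ = 1 := one_mul 1
        · rw [Real.norm_eq_abs, abs_mul, abs_mul, abs_of_nonneg (Real.rpow_nonneg ht.le _),
            abs_of_nonneg (Real.rpow_nonneg hu.le _)]
          calc t ^ ν * (u ^ (-ν) * |Real.cos u|) ≤ t ^ ν * (u ^ (-ν) * 1) := by
                apply mul_le_mul_of_nonneg_left _ (Real.rpow_nonneg ht.le _)
                exact mul_le_mul_of_nonneg_left (Real.abs_cos_le_one u)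
                  (Real.rpow_nonneg hu.le _)
            _ = t ^ ν * u ^ (-ν) := by rw [mul_one]
    _ = t ^ ν * u ^ (-ν) + 1 := by ring

lemma htu_bound2 {ν t : ℝ} (hν0 : 0 < ν) (hν1 : ν < 1) (ht : 0 < t) {u : ℝ} (hu : t < u) :
    ‖((⌊u / t⌋ : ℝ) + 1) ^ (-ν) * Real.cos u - t ^ ν * (u ^ (-ν) * Real.cos u)‖
      ≤ t ^ (1 + ν) * u ^ (-(1 + ν)) := by
  have hu0 : 0 < u := lt_trans ht hu
  set a : ℝ := u / t with ha
  have ha0 : 0 < a := div_pos hu0 ht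
  have hab : a ≤ (⌊a⌋ : ℝ) + 1 := le_of_lt (Int.lt_floor_add_one a)
  have hba : ((⌊a⌋ : ℝ) + 1) - a ≤ 1 := by
    have := Int.floor_le a
    linarith
  have key := rpow_neg_sub_le hν0 hν1.le ha0 hab
  have haν : a ^ (-ν) = t ^ ν * u ^ (-ν) := by
    rw [ha, div_rpow hu0.le ht.le, Real.rpow_neg ht.le, div_eq_mul_inv, inv_inv, mul_comm]
  have haν1 : a ^ (-(ν + 1)) = t ^ (1 + ν) * u ^ (-(1 + ν)) := by
    rw [ha, div_rpow hu0.le ht.le, Real.rpow_neg ht.le, div_eq_mul_inv, inv_inv, mul_comm,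
      show (-(ν+1) : ℝ) = -(1+ν) by ring, show (ν+1 : ℝ) = 1+ν by ring]
  have heq : ((⌊u / t⌋ : ℝ) + 1) ^ (-ν) * Real.cos u - t ^ ν * (u ^ (-ν) * Real.cos u)
      = -((a ^ (-ν) - ((⌊a⌋ : ℝ) + 1) ^ (-ν)) * Real.cos u) := by
    rw [haν]; ring
  rw [heq, norm_neg, Real.norm_eq_abs, abs_mul,
    abs_of_nonneg key.2]
  calc (a ^ (-ν) - ((⌊a⌋:ℝ) + 1) ^ (-ν)) * |Real.cos u|
      ≤ (a ^ (-(ν+1)) * (((⌊a⌋:ℝ) + 1) - a)) * 1 := by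
        apply mul_le_mul (key.1) (Real.abs_cos_le_one u) (abs_nonneg _)
        exact mul_nonneg (Real.rpow_nonneg ha0.le _) (by linarith)
    _ ≤ a ^ (-(ν+1)) * 1 := by
        rw [mul_one]
        exact mul_le_mul_of_nonneg_left hba (Real.rpow_nonneg ha0.le _)
    _ = t ^ (1 + ν) * u ^ (-(1 + ν)) := by rw [mul_one, haν1]

lemma htu_meas {ν t : ℝ} : Measurable (fun u : ℝ =>
    ((⌊u / t⌋ : ℝ) + 1) ^ (-ν) * Real.cos u - t ^ ν * (u ^ (-ν) * Real.cos u)) := by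
  have m0 : Measurable (fun u : ℝ => ((⌊u / t⌋ : ℤ) : ℝ)) :=
    measurable_from_top.comp (Measurable.floor (measurable_id.div_const t))
  exact (((m0.add measurable_const).pow measurable_const).mul Real.measurable_cos).sub
    (((measurable_id.pow measurable_const).mul Real.measurable_cos).const_mul _)

lemma J_props {ν t : ℝ} (hν0 : 0 < ν) (hν1 : ν < 1) (ht : 0 < t) :
    IntegrableOn (fun u : ℝ =>
      ((⌊u / t⌋ : ℝ) + 1) ^ (-ν) * Real.cos u - t ^ ν * (u ^ (-ν) * Real.cos u)) (Ioi 0) ∧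
    ‖∫ u in Ioi (0:ℝ),
      (((⌊u / t⌋ : ℝ) + 1) ^ (-ν) * Real.cos u - t ^ ν * (u ^ (-ν) * Real.cos u))‖
      ≤ (1 / (1 - ν) + 1 + 1 / ν) * t := by
  set f : ℝ → ℝ := fun u =>
    ((⌊u / t⌋ : ℝ) + 1) ^ (-ν) * Real.cos u - t ^ ν * (u ^ (-ν) * Real.cos u) with hf
  have hmeas : Measurable f := htu_meas
  have hg1int : IntegrableOn (fun u : ℝ => t ^ ν * u ^ (-ν) + 1) (Ioc 0 t) := by
    have h1 : IntervalIntegrable (fun u : ℝ => u ^ (-ν)) volume 0 t :=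
      intervalIntegral.intervalIntegrable_rpow' (by linarith)
    have := ((intervalIntegrable_iff_integrableOn_Ioc_of_le ht.le).mp h1).const_mul (t ^ ν)
    exact this.add (integrableOn_const measure_Ioc_lt_top.ne)
  have hg2int : IntegrableOn (fun u : ℝ => t ^ (1 + ν) * u ^ (-(1 + ν))) (Ioi t) :=
    (integrableOn_Ioi_rpow_of_lt (by linarith) ht).const_mul _
  have int1 : IntegrableOn f (Ioc 0 t) := by
    apply Integrable.mono' hg1int hmeas.aestronglyMeasurable
    filter_upwards [ae_restrict_mem measurableSet_Ioc] with u hu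
    exact htu_bound1 hν0 ht hu.1
  have int2 : IntegrableOn f (Ioi t) := by
    apply Integrable.mono' hg2int hmeas.aestronglyMeasurable
    filter_upwards [ae_restrict_mem measurableSet_Ioi] with u hu
    exact htu_bound2 hν0 hν1 ht hu
  have hunion : Ioc (0:ℝ) t ∪ Ioi t = Ioi 0 := Ioc_union_Ioi_eq_Ioi ht.le
  have intOn : IntegrableOn f (Ioi 0) := by
    rw [← hunion]
    exact int1.union int2
  refine ⟨intOn, ?_⟩
  have hsplit : ∫ u in Ioi (0:ℝ), f u = (∫ u in Ioc (0:ℝ) t, f u) + ∫ u in Ioi t, f u := by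
    rw [← hunion]
    exact setIntegral_union (Ioc_disjoint_Ioi le_rfl) measurableSet_Ioi int1 int2
  have p1 : IntegrableOn (fun u : ℝ => t ^ ν * u ^ (-ν)) (Ioc 0 t) :=
    ((intervalIntegrable_iff_integrableOn_Ioc_of_le ht.le).mp
      (intervalIntegral.intervalIntegrable_rpow' (by linarith))).const_mul _
  have p2 : IntegrableOn (fun _ : ℝ => (1:ℝ)) (Ioc 0 t) :=
    integrableOn_const measure_Ioc_lt_top.ne
  have hval1 : ∫ u in Ioc (0:ℝ) t, (t ^ ν * u ^ (-ν) + 1) = t / (1 - ν) + t := by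
    rw [integral_add p1 p2]
    have e2 : ∫ u in Ioc (0:ℝ) t, u ^ (-ν) = t ^ (1 - ν) / (1 - ν) := by
      rw [← intervalIntegral.integral_of_le ht.le,
        integral_rpow (Or.inl (by linarith : (-1:ℝ) < -ν)),
        Real.zero_rpow (by linarith : (0:ℝ) < -ν + 1).ne',
        show (-ν + 1 : ℝ) = 1 - ν by ring]
      ring
    have e3 : ∫ _ in Ioc (0:ℝ) t, (1:ℝ) = t := by
      simp [Real.volume_Ioc, ht.le]
    rw [MeasureTheory.integral_const_mul, e2, e3]
    have e4 : t ^ ν * (t ^ (1 - ν)) = t := by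
      rw [← Real.rpow_add ht]; norm_num
    rw [show t ^ ν * (t ^ (1 - ν) / (1 - ν)) = t ^ ν * t ^ (1 - ν) / (1 - ν) by ring, e4]
  have hval2 : ∫ u in Ioi t, t ^ (1 + ν) * u ^ (-(1 + ν)) = t / ν := by
    rw [MeasureTheory.integral_const_mul, integral_Ioi_rpow_of_lt (by linarith) ht,
      show (-(1 + ν) + 1 : ℝ) = -ν by ring]
    have e : t ^ (1 + ν) * t ^ (-ν) = t := by
      rw [← Real.rpow_add ht]; norm_num
    calc t ^ (1 + ν) * (-t ^ (-ν) / (-ν)) = t ^ (1 + ν) * t ^ (-ν) / ν := by ring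
      _ = t / ν := by rw [e]
  have n1 : ‖∫ u in Ioc (0:ℝ) t, f u‖ ≤ t / (1 - ν) + t := by
    rw [← hval1]
    apply MeasureTheory.norm_integral_le_of_norm_le (p1.add p2)
    filter_upwards [ae_restrict_mem measurableSet_Ioc] with u hu
    exact htu_bound1 hν0 ht hu.1
  have n2 : ‖∫ u in Ioi t, f u‖ ≤ t / ν := by
    rw [← hval2]
    apply MeasureTheory.norm_integral_le_of_norm_le hg2int
    filter_upwards [ae_restrict_mem measurableSet_Ioi] with u hu
    exact htu_bound2 hν0 hν1 ht hu
  rw [hsplit]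
  calc ‖(∫ u in Ioc (0:ℝ) t, f u) + ∫ u in Ioi t, f u‖
      ≤ ‖∫ u in Ioc (0:ℝ) t, f u‖ + ‖∫ u in Ioi t, f u‖ := norm_add_le _ _
    _ ≤ (t / (1 - ν) + t) + t / ν := add_le_add n1 n2
    _ = (1 / (1 - ν) + 1 + 1 / ν) * t := by ring

end aux

section main
open Real Set intervalIntegral

lemma floorterm_meas {ν t : ℝ} :
    Measurable (fun u : ℝ => ((⌊u / t⌋ : ℝ) + 1) ^ (-ν) * Real.cos u) := by
  have m0 : Measurable (fun u : ℝ => ((⌊u / t⌋ : ℤ) : ℝ)) :=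
    measurable_from_top.comp (Measurable.floor (measurable_id.div_const t))
  exact ((m0.add measurable_const).pow measurable_const).mul Real.measurable_cos

lemma little_o_t {ν : ℝ} (hν0 : 0 < ν) (hν1 : ν < 1) :
    (fun t : ℝ => t) =o[nhdsWithin (0:ℝ) (Ioi 0)] fun t : ℝ => t ^ ν := by
  rw [Asymptotics.isLittleO_iff_tendsto'
    (by filter_upwards [self_mem_nhdsWithin] with t ht h
        exact absurd h (Real.rpow_pos_of_pos ht ν).ne')]
  have h1 : Tendsto (fun t : ℝ => t ^ (1 - ν)) (nhdsWithin (0:ℝ) (Ioi 0)) (nhds 0) := by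
    have hc : ContinuousAt (fun t : ℝ => t ^ (1 - ν)) 0 :=
      Real.continuousAt_rpow_const 0 (1 - ν) (Or.inr (by linarith))
    have h2 : Tendsto (fun t : ℝ => t ^ (1 - ν)) (nhdsWithin (0:ℝ) (Ioi 0))
        (nhds ((0:ℝ) ^ (1 - ν))) := hc.tendsto.mono_left nhdsWithin_le_nhds
    rwa [Real.zero_rpow (by linarith : (1 - ν : ℝ) ≠ 0)] at h2
  apply Tendsto.congr' _ h1
  filter_upwards [self_mem_nhdsWithin] with t ht
  have ht0 : (0:ℝ) < t := ht
  rw [Real.rpow_sub ht0, Real.rpow_one]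

/-- Fix `ν ∈ (0,1)` and for `t > 0` let
`I_ν(t) = lim_{T → ∞} ∫₀ᵀ (⌊u/t⌋ + 1)^{-ν} cos(u) du` (the improper integral exists).
Then as `t ↓ 0`,
`I_ν(t) = t^ν ∫₀^∞ u^{-ν} cos(u) du + O(t) = Γ(1-ν) sin(πν/2) t^ν + o(t^ν)`,
where the classical improper integral `∫₀^∞ u^{-ν} cos(u) du` converges to
`Γ(1-ν) sin(πν/2)`. -/
theorem stmt_19
    (ν : ℝ) (hν0 : 0 < ν) (hν1 : ν < 1) :
    ∃ I : ℝ → ℝ,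
      (∀ t : ℝ, 0 < t →
        Tendsto (fun T : ℝ => ∫ u in (0 : ℝ)..T, ((⌊u / t⌋ : ℝ) + 1) ^ (-ν) * Real.cos u)
          atTop (nhds (I t))) ∧
      Tendsto (fun T : ℝ => ∫ u in (0 : ℝ)..T, u ^ (-ν) * Real.cos u)
        atTop (nhds (Real.Gamma (1 - ν) * Real.sin (Real.pi * ν / 2))) ∧
      ((fun t : ℝ => I t - t ^ ν * (Real.Gamma (1 - ν) * Real.sin (Real.pi * ν / 2)))
        =O[𝓝[>] (0 : ℝ)] fun t : ℝ => t) ∧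
      ((fun t : ℝ => I t - Real.Gamma (1 - ν) * Real.sin (Real.pi * ν / 2) * t ^ ν)
        =o[𝓝[>] (0 : ℝ)] fun t : ℝ => t ^ ((ν : ℝ))) := by
  set C : ℝ := Real.Gamma (1 - ν) * Real.sin (Real.pi * ν / 2) with hCdef
  set J : ℝ → ℝ := fun t => ∫ u in Ioi (0:ℝ),
    (((⌊u / t⌋ : ℝ) + 1) ^ (-ν) * Real.cos u - t ^ ν * (u ^ (-ν) * Real.cos u)) with hJdef
  refine ⟨fun t => J t + t ^ ν * C, ?_, step_A hν0 hν1, ?_, ?_⟩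
  · intro t ht
    have hJint := (J_props hν0 hν1 ht).1
    have hB3 : Tendsto (fun T : ℝ => ∫ u in (0:ℝ)..T,
        (((⌊u / t⌋ : ℝ) + 1) ^ (-ν) * Real.cos u - t ^ ν * (u ^ (-ν) * Real.cos u)))
        atTop (nhds (J t)) :=
      MeasureTheory.intervalIntegral_tendsto_integral_Ioi 0 hJint tendsto_id
    have hA : Tendsto (fun T : ℝ => t ^ ν * ∫ u in (0:ℝ)..T, u ^ (-ν) * Real.cos u)
        atTop (nhds (t ^ ν * C)) := (step_A hν0 hν1).const_mul (t ^ ν)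
    have heq : (fun T : ℝ => ∫ u in (0:ℝ)..T, ((⌊u / t⌋ : ℝ) + 1) ^ (-ν) * Real.cos u)
        =ᶠ[atTop] fun T : ℝ =>
          (∫ u in (0:ℝ)..T,
            (((⌊u / t⌋ : ℝ) + 1) ^ (-ν) * Real.cos u - t ^ ν * (u ^ (-ν) * Real.cos u)))
          + t ^ ν * ∫ u in (0:ℝ)..T, u ^ (-ν) * Real.cos u := by
      filter_upwards [eventually_gt_atTop (0:ℝ)] with T hT
      have h2T : IntervalIntegrable (fun u : ℝ => u ^ (-ν) * Real.cos u) volume 0 T :=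
        (intervalIntegral.intervalIntegrable_rpow' (by linarith)).mul_continuousOn
          Real.continuous_cos.continuousOn
      have h3T : IntervalIntegrable (fun u : ℝ => t ^ ν * (u ^ (-ν) * Real.cos u)) volume 0 T :=
        h2T.const_mul (t ^ ν)
      have hflT : IntervalIntegrable
          (fun u : ℝ => ((⌊u / t⌋ : ℝ) + 1) ^ (-ν) * Real.cos u) volume 0 T := by
        rw [intervalIntegrable_iff_integrableOn_Ioc_of_le hT.le]
        apply MeasureTheory.Integrable.mono'
          (MeasureTheory.integrableOn_const measure_Ioc_lt_top.ne :
            IntegrableOn (fun _ : ℝ => (1:ℝ)) (Ioc 0 T) volume)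
          floorterm_meas.aestronglyMeasurable
        filter_upwards [MeasureTheory.ae_restrict_mem measurableSet_Ioc] with u hu
        have hfl : (0:ℝ) ≤ (⌊u / t⌋ : ℝ) := by
          exact_mod_cast Int.floor_nonneg.mpr (le_of_lt (div_pos hu.1 ht))
        rw [Real.norm_eq_abs, abs_mul, abs_of_nonneg (Real.rpow_nonneg (by linarith) _)]
        calc ((⌊u / t⌋ : ℝ) + 1) ^ (-ν) * |Real.cos u| ≤ 1 * 1 :=
              mul_le_mul (Real.rpow_le_one_of_one_le_of_nonpos (by linarith) (by linarith))
                (Real.abs_cos_le_one u) (abs_nonneg _) zero_le_one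
          _ = 1 := one_mul 1
      have hfT := hflT.sub h3T
      have hswap : ∫ u in (0:ℝ)..T, ((⌊u / t⌋ : ℝ) + 1) ^ (-ν) * Real.cos u
          = ∫ u in (0:ℝ)..T,
            ((((⌊u / t⌋ : ℝ) + 1) ^ (-ν) * Real.cos u - t ^ ν * (u ^ (-ν) * Real.cos u))
              + t ^ ν * (u ^ (-ν) * Real.cos u)) := by
        apply intervalIntegral.integral_congr
        intro u _
        ring
      rw [hswap, intervalIntegral.integral_add hfT h3T, intervalIntegral.integral_const_mul]
    exact Tendsto.congr' heq.symm (hB3.add hA)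
  · rw [Asymptotics.isBigO_iff]
    refine ⟨1 / (1 - ν) + 1 + 1 / ν, ?_⟩
    filter_upwards [self_mem_nhdsWithin] with t ht
    have ht0 : (0:ℝ) < t := ht
    have hb := (J_props hν0 hν1 ht0).2
    have : J t + t ^ ν * C - t ^ ν * C = J t := by ring
    rw [this, Real.norm_eq_abs t, abs_of_pos ht0]
    exact hb
  · have hO : (fun t : ℝ => J t + t ^ ν * C - C * t ^ ν) =O[𝓝[>] (0:ℝ)] fun t : ℝ => t := by
      rw [Asymptotics.isBigO_iff]
      refine ⟨1 / (1 - ν) + 1 + 1 / ν, ?_⟩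
      filter_upwards [self_mem_nhdsWithin] with t ht
      have ht0 : (0:ℝ) < t := ht
      have hb := (J_props hν0 hν1 ht0).2
      have : J t + t ^ ν * C - C * t ^ ν = J t := by ring
      rw [this, Real.norm_eq_abs t, abs_of_pos ht0]
      exact hb
    exact hO.trans_isLittleO (little_o_t hν0 hν1)

end main
end
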